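/- arXiv:1509.00167 — 6 statements merged into one kernel-verified Lean document; each statement's English description precedes it below -/
import Mathlib

section
/- For integers l ≥ 2 and k ≥ 2, the following identity holds: ∑_{r=2}^{min(k,l)} (r-1) * C(l, r) * C(l(k-1), k-r) = C((k-1)l, k), where C(n,m) denotes the binomial coefficient. -/
open Finset

lemma vandermonde_range (a b n : ℕ) :
    ∑ r ∈ range (n + 1), a.choose r * b.choose (n - r) = (a + b).choose n := by
  rw [Nat.add_choose_eq, Finset.Nat.sum_antidiagonal_eq_sum_range_succ_mk]

lemma sum_mul_choose (a b n : ℕ) :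
    ∑ r ∈ range (n + 2), r * (a + 1).choose r * b.choose (n + 1 - r)
      = (a + 1) * (a + b).choose n := by
  rw [Finset.sum_range_succ']
  simp only [zero_mul, add_zero]
  have h : ∀ i ∈ range (n + 1),
      (i + 1) * (a + 1).choose (i + 1) * b.choose (n + 1 - (i + 1))
        = (a + 1) * (a.choose i * b.choose (n - i)) := by
    intro i _
    have h2 := Nat.add_one_mul_choose_eq a i
    have h3 : n + 1 - (i + 1) = n - i := by omega
    have h2 : (a + 1) * a.choose i = (a + 1).choose (i + 1) * (i + 1) := h2
    rw [h3, mul_comm (i + 1) ((a + 1).choose (i + 1)), ← mul_assoc, ← h2]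
  rw [Finset.sum_congr rfl h, ← Finset.mul_sum, vandermonde_range]

/-- Lemma "sumchoose": for integers `l ≥ 2`, `k ≥ 2`,
`∑_{r=2}^{min(k,l)} (r-1) C(l,r) C(l(k-1), k-r) = C((k-1)l, k)`. -/
theorem sum_choose_identity (l k : ℕ) (hl : 2 ≤ l) (hk : 2 ≤ k) :
    ∑ r ∈ Finset.Icc 2 (min k l),
        (r - 1) * Nat.choose l r * Nat.choose (l * (k - 1)) (k - r)
      = Nat.choose ((k - 1) * l) k := by
  obtain ⟨K, rfl⟩ : ∃ K, k = K + 2 := ⟨k - 2, by omega⟩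
  obtain ⟨L, rfl⟩ : ∃ L, l = L + 2 := ⟨l - 2, by omega⟩
  set l := L + 2 with hldef
  set m := l * (K + 1) with hm
  have hk1 : K + 2 - 1 = K + 1 := by omega
  have hS0 : ∑ r ∈ range (K + 3), l.choose r * m.choose (K + 2 - r)
      = (l + m).choose (K + 2) := vandermonde_range l m (K + 2)
  have hS1 : ∑ r ∈ range (K + 3), r * l.choose r * m.choose (K + 2 - r)
      = l * ((L + 1 + m).choose (K + 1)) := sum_mul_choose (L + 1) m (K + 1)
  have hN : l + m = l * (K + 2) := by ring
  have hN1 : L + 1 + m = l * (K + 2) - 1 := by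
    have : l + m = l * (K + 2) := hN
    omega
  -- absorption: l * C(l(K+2)-1, K+1) = C(l(K+2), K+2)
  have habs : l * (l * (K + 2) - 1).choose (K + 1) = (l * (K + 2)).choose (K + 2) := by
    have h1 := Nat.add_one_mul_choose_eq (l * (K + 2) - 1) (K + 1)
    have h2 : l * (K + 2) - 1 + 1 = l * (K + 2) := by
      have : 0 < l * (K + 2) := by positivity
      omega
    rw [h2] at h1
    -- h1 : l*(K+2) * C(l*(K+2)-1, K+1) = C(l*(K+2), K+2) * (K+2)
    apply Nat.eq_of_mul_eq_mul_right (show 0 < K + 2 by omega)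
    calc l * (l * (K + 2) - 1).choose (K + 1) * (K + 2)
        = l * (K + 2) * (l * (K + 2) - 1).choose (K + 1) := by ring
      _ = (l * (K + 2)).choose (K + 2) * (K + 2) := h1
  have hzero : ∑ r ∈ range (K + 3), ((r : ℤ) - 1) * l.choose r * m.choose (K + 2 - r) = 0 := by
    have hsub : ∑ r ∈ range (K + 3), ((r : ℤ) - 1) * l.choose r * m.choose (K + 2 - r)
        = (↑(∑ r ∈ range (K + 3), r * l.choose r * m.choose (K + 2 - r)) : ℤ)
          - ↑(∑ r ∈ range (K + 3), l.choose r * m.choose (K + 2 - r)) := by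
      push_cast
      rw [← Finset.sum_sub_distrib]
      exact Finset.sum_congr rfl fun r _ => by ring
    rw [hsub, hS0, hS1, hN, hN1, habs]
    ring
  -- split the range sum
  have hM : min (K + 2) l ≤ K + 2 := min_le_left _ _
  have hrange : range (K + 3) = insert 0 (insert 1 (Icc 2 (K + 2))) := by
    ext x
    simp [Finset.mem_range, Finset.mem_insert, Finset.mem_Icc]
    omega
  have hIcc : ∑ r ∈ Icc 2 (K + 2), ((r : ℤ) - 1) * l.choose r * m.choose (K + 2 - r)
      = ∑ r ∈ Icc 2 (min (K + 2) l), ((r : ℤ) - 1) * l.choose r * m.choose (K + 2 - r) := by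
    symm
    apply Finset.sum_subset
    · exact Finset.Icc_subset_Icc_right hM
    · intro r hr hr'
      simp only [Finset.mem_Icc] at hr hr'
      have hrl : l < r := by omega
      rw [Nat.choose_eq_zero_of_lt hrl]
      push_cast
      ring
  have hkey : ∑ r ∈ Icc 2 (min (K + 2) l), ((r : ℤ) - 1) * l.choose r * m.choose (K + 2 - r)
      = (m.choose (K + 2) : ℤ) := by
    have h0 : (0 : ℕ) ∉ insert 1 (Icc 2 (K + 2)) := by simp
    have h1 : (1 : ℕ) ∉ Icc 2 (K + 2) := by simp
    rw [hrange, Finset.sum_insert h0, Finset.sum_insert h1, hIcc] at hzero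
    simp only [Nat.cast_zero, Nat.cast_one, Nat.choose_zero_right, Nat.choose_one_right] at hzero
    push_cast at hzero ⊢
    linarith [hzero]
  -- convert back to ℕ
  have hmm : (K + 2 - 1) * l = m := by rw [hk1, hm]; ring
  rw [hmm]
  have hcast : (↑(∑ r ∈ Finset.Icc 2 (min (K + 2) l),
      (r - 1) * Nat.choose l r * Nat.choose (l * (K + 2 - 1)) (K + 2 - r)) : ℤ)
      = (m.choose (K + 2) : ℤ) := by
    rw [← hkey]
    push_cast
    apply Finset.sum_congr rfl
    intro r hr
    simp only [Finset.mem_Icc] at hr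
    have : (1 : ℕ) ≤ r := by omega
    rw [Nat.cast_sub this, hm]
    push_cast
    ring
  exact_mod_cast hcast
end

section
/- Let 0 < ε < 1 and let l ≥ 2 be an integer with l·ε < 1. Then ∑_{k=1}^{∞} ((l-1)/k) · ε^k · (1-ε)^{k(l-1)} · C((k-1)l, k-1) = 1 - (1-ε)^{l-1}. Equivalently, the function p_S with p_S(0) = (1-ε)^{l-1}, p_S(1) = (l-1)ε(1-ε)^{l-1}, and p_S(s) = ((l-1)/s) ε^s (1-ε)^{s(l-1)} C((s-1)l, s-1) for s > 1 is a probability mass function on the nonnegative integers. -/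
open Polynomial Finset MeasureTheory
open scoped NNReal ENNReal



lemma busyA1 (l n : ℕ) :
    ∑ k ∈ Finset.range (n+1), (-1:ℤ)^(n-k) * (n.choose k) * ((k*l).choose n) = (l:ℤ)^n := by
  have key : (((1 + X : ℤ[X])^l - 1)^n).coeff n = (l:ℤ)^n := by
    have hfac : (1 + X : ℤ[X])^l - 1 = (∑ i ∈ Finset.range l, (1+X:ℤ[X])^i) * X := by
      have := geom_sum_mul (1 + X : ℤ[X]) l
      simpa using this.symm
    rw [hfac, mul_pow]
    have := Polynomial.coeff_mul_X_pow (((∑ i ∈ Finset.range l, (1+X:ℤ[X])^i))^n) n 0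
    rw [zero_add] at this
    rw [this, Polynomial.coeff_zero_eq_eval_zero]
    simp [Polynomial.eval_finset_sum]
  have expand : (((1 + X : ℤ[X])^l - 1)^n).coeff n
      = ∑ k ∈ Finset.range (n+1), (-1:ℤ)^(k+n) * (n.choose k) * ((k*l).choose n) := by
    rw [sub_pow, Polynomial.finset_sum_coeff]
    refine Finset.sum_congr rfl fun k hk => ?_
    rw [← pow_mul, one_pow, mul_one]
    have : ((-1:ℤ[X]) ^ (k + n) * (1 + X) ^ (l * k) * (n.choose k : ℤ[X])).coeff n
        = (-1:ℤ)^(k+n) * ((1+X:ℤ[X])^(l*k)).coeff n * (n.choose k) := by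
      rw [mul_comm _ ((n.choose k : ℤ[X]))]
      rw [← Polynomial.C_eq_natCast, ← Polynomial.C_1, ← Polynomial.C_neg, ← Polynomial.C_pow,
        Polynomial.coeff_C_mul, Polynomial.coeff_C_mul]
      ring
    rw [this, Polynomial.coeff_one_add_X_pow, mul_comm l k]
    ring
  rw [expand] at key
  rw [← key]
  refine Finset.sum_congr rfl fun k hk => ?_
  have hk' : k ≤ n := by simpa [Nat.lt_succ_iff] using hk
  have : (-1:ℤ)^(k+n) = (-1:ℤ)^(n-k) := by
    have : k + n = (n - k) + 2 * k := by omega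
    rw [this, pow_add, pow_mul]
    simp
  rw [this]

lemma busy_mul_sub (k l : ℕ) (hl : 1 ≤ l) : k * l - k = k * (l - 1) := by
  have : k * l = k * (l-1) + k := by
    calc k * l = k * ((l-1) + 1) := by rw [Nat.sub_add_cancel hl]
    _ = k * (l-1) + k := by ring
  omega

lemma busy_choose_prod (l n k : ℕ) (hl : 1 ≤ l) (hk : k ≤ n) :
    (n.choose k) * ((k*l).choose n) = ((k*l).choose k) * ((k*(l-1)).choose (n-k)) := by
  rcases le_or_gt n (k*l) with h | h
  · have := Nat.choose_mul (n := k*l) (k := n) (s := k) hk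
    rw [busy_mul_sub k l hl] at this
    rw [mul_comm] at this
    exact this
  · have h1 : (k*l).choose n = 0 := Nat.choose_eq_zero_of_lt h
    have h2 : (k*(l-1)).choose (n-k) = 0 := by
      apply Nat.choose_eq_zero_of_lt
      have h3 := busy_mul_sub k l hl
      have h4 : k ≤ k * l := Nat.le_mul_of_pos_right k (by omega)
      omega
    rw [h1, h2, mul_zero, mul_zero]

lemma busyA3 (l n : ℕ) (hl : 1 ≤ l) :
    ∑ k ∈ Finset.range (n+1), (-1:ℝ)^(n-k) * ((k*l).choose k) * ((k*(l-1)).choose (n-k))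
      = (l:ℝ)^n := by
  have h := busyA1 l n
  have : ∑ k ∈ Finset.range (n+1), (-1:ℤ)^(n-k) * ((k*l).choose k) * ((k*(l-1)).choose (n-k))
      = (l:ℤ)^n := by
    rw [← h]
    refine Finset.sum_congr rfl fun k hk => ?_
    have hk' : k ≤ n := by simpa [Nat.lt_succ_iff] using hk
    have := busy_choose_prod l n k hl hk'
    have hcast : ((k*l).choose k : ℤ) * ((k*(l-1)).choose (n-k)) = (n.choose k) * ((k*l).choose n) := by
      exact_mod_cast congrArg (Nat.cast : ℕ → ℤ) this.symm
    rw [mul_assoc, mul_assoc, hcast]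
  exact_mod_cast this

lemma busy_choose_le (l k : ℕ) (hl : 2 ≤ l) :
    ((k*l).choose k : ℝ) ≤ (((l:ℝ)/((l:ℝ)-1))^l * ((l:ℝ)-1))^k := by
  have hl1 : (1:ℝ) ≤ (l:ℝ) - 1 := by
    have : (2:ℝ) ≤ (l:ℝ) := by exact_mod_cast hl
    linarith
  have hlpos : (0:ℝ) < (l:ℝ) - 1 := by linarith
  set x : ℝ := 1/((l:ℝ)-1) with hx
  have hxpos : 0 < x := by positivity
  have hbin : ((k*l).choose k : ℝ) * x^k ≤ (x + 1)^(k*l) := by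
    rw [add_pow]
    have hk : k ∈ Finset.range (k*l+1) := by
      simp only [Finset.mem_range]
      have : k ≤ k * l := Nat.le_mul_of_pos_right k (by omega)
      omega
    have := Finset.single_le_sum (f := fun m => x ^ m * 1 ^ (k*l - m) * ((k*l).choose m : ℝ))
      (fun i _ => by positivity) hk
    simpa [mul_comm] using this
  have hx1 : x + 1 = (l:ℝ)/((l:ℝ)-1) := by
    rw [hx]; field_simp; ring
  have hxk : x^k = (((l:ℝ)-1)^k)⁻¹ := by
    rw [hx]; rw [div_pow, one_pow, one_div]
  have h2 : ((k*l).choose k : ℝ) ≤ (x + 1)^(k*l) * ((l:ℝ)-1)^k := by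
    have hpow : (0:ℝ) < ((l:ℝ)-1)^k := by positivity
    rw [hxk] at hbin
    calc ((k*l).choose k : ℝ) = ((k*l).choose k : ℝ) * (((l:ℝ)-1)^k)⁻¹ * ((l:ℝ)-1)^k := by
          field_simp
    _ ≤ (x + 1)^(k*l) * ((l:ℝ)-1)^k := by
          apply mul_le_mul_of_nonneg_right hbin (le_of_lt hpow)
  calc ((k*l).choose k : ℝ) ≤ (x + 1)^(k*l) * ((l:ℝ)-1)^k := h2
  _ = (((l:ℝ)/((l:ℝ)-1))^l * ((l:ℝ)-1))^k := by
      rw [hx1, mul_pow, ← pow_mul, mul_comm k l]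

lemma busy_fiber (c w : ℝ) (m : ℕ) :
    HasSum (fun j : ℕ => c * ((m.choose j : ℝ) * w^j)) (c * (1+w)^m) := by
  have hsupp : ∀ j ∉ Finset.range (m+1), c * ((m.choose j : ℝ) * w^j) = 0 := by
    intro j hj
    rw [Finset.mem_range, not_lt] at hj
    rw [Nat.choose_eq_zero_of_lt (by omega)]
    simp
  have : HasSum _ _ := hasSum_sum_of_ne_finset_zero hsupp
  convert this using 1
  rw [← Finset.mul_sum]
  congr 1
  rw [add_comm (1:ℝ) w, add_pow]
  exact (Finset.sum_congr rfl fun i _ => by rw [one_pow]; ring).symm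

private def busyA (l : ℕ) (u : ℝ) : ℕ × ℕ → ℝ := fun p =>
  ((p.1*l).choose p.1 : ℝ) * ((-1)^p.2 * (((p.1*(l-1)).choose p.2 : ℝ)) * u^(p.1+p.2))

private def busyN (l : ℕ) (u : ℝ) : ℕ × ℕ → ℝ := fun p =>
  ((p.1*l).choose p.1 : ℝ) * (((p.1*(l-1)).choose p.2 : ℝ)) * |u|^(p.1+p.2)

set_option maxHeartbeats 1000000 in
lemma busy_small (l : ℕ) (hl : 2 ≤ l) (u : ℝ) (hu : |u| < 1/2^(4*l)) :
    ∑' k : ℕ, ((k*l).choose k : ℝ) * (u * (1-u)^(l-1))^k = (1 - (l:ℝ)*u)⁻¹ := by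
  have hlR : (2:ℝ) ≤ (l:ℝ) := by exact_mod_cast hl
  have hl2 : (l:ℝ) < 2^l := by exact_mod_cast (Nat.lt_two_pow_self (n := l))
  have hu1 : |u| ≤ 1 := by
    have h0 : (1:ℝ)/2^(4*l) ≤ 1 := by
      rw [div_le_one (by positivity)]
      exact one_le_pow₀ (by norm_num)
    linarith
  set M : ℝ := ((l:ℝ)/((l:ℝ)-1))^l * ((l:ℝ)-1) with hM
  have hdivpos : (0:ℝ) < (l:ℝ)/((l:ℝ)-1) := div_pos (by linarith) (by linarith)
  have hM0 : 0 < M := mul_pos (pow_pos hdivpos l) (by linarith)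
  have hMle : M ≤ 2^l * 2^l := by
    apply mul_le_mul
    · apply pow_le_pow_left₀ (le_of_lt hdivpos)
      rw [div_le_iff₀ (by linarith)]
      nlinarith
    · linarith
    · linarith
    · positivity
  set r : ℝ := M * 2^l * |u| with hr
  have hr0 : 0 ≤ r := by positivity
  have hr1 : r < 1 := by
    have h8 : M * 2^l ≤ 2^l * 2^l * 2^l := by
      apply mul_le_mul_of_nonneg_right hMle (by positivity)
    have hu0 : (0:ℝ) ≤ |u| := abs_nonneg u
    have h1 : r ≤ 2^l * 2^l * 2^l * |u| := mul_le_mul_of_nonneg_right h8 hu0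
    have h2 : 2^l * 2^l * 2^l * |u| < 2^l * 2^l * 2^l * (1/2^(4*l)) := by
      apply mul_lt_mul_of_pos_left hu (by positivity)
    have h3 : (2:ℝ)^l * 2^l * 2^l * (1/2^(4*l)) ≤ 1 := by
      rw [← pow_add, ← pow_add, mul_one_div, div_le_one (by positivity)]
      apply pow_le_pow_right₀ (by norm_num)
      omega
    linarith
  have hcb : ∀ k, ((k*l).choose k : ℝ) ≤ M^k := fun k => busy_choose_le l k hl
  clear_value M r
  have hNfib : ∀ k : ℕ, HasSum (fun j => busyN l u (k, j))
      ((((k*l).choose k : ℝ) * |u|^k) * (1+|u|)^(k*(l-1))) := by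
    intro k
    have := busy_fiber (((k*l).choose k : ℝ) * |u|^k) |u| (k*(l-1))
    convert this using 2 with j
    simp only [busyN, pow_add]
    ring
  have hgeom : Summable (fun k : ℕ => r^k) := summable_geometric_of_lt_one hr0 hr1
  have hNout : ∀ k : ℕ, (((k*l).choose k : ℝ) * |u|^k) * (1+|u|)^(k*(l-1)) ≤ r^k := by
    intro k
    have h1 : (1+|u|)^(k*(l-1)) ≤ (2:ℝ)^(k*l) := by
      calc (1+|u|)^(k*(l-1)) ≤ (2:ℝ)^(k*(l-1)) :=
            pow_le_pow_left₀ (by positivity) (by linarith) _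
      _ ≤ (2:ℝ)^(k*l) := pow_le_pow_right₀ (by norm_num) (Nat.mul_le_mul_left k (by omega))
    have h2 : ((k*l).choose k : ℝ) * |u|^k * (1+|u|)^(k*(l-1))
        ≤ M^k * |u|^k * (2^(k*l)) := by
      apply mul_le_mul (mul_le_mul_of_nonneg_right (hcb k) (by positivity)) h1 (by positivity)
        (by positivity)
    have h3 : (2:ℝ)^(k*l) = ((2:ℝ)^l)^k := by rw [← pow_mul, mul_comm]
    calc ((k*l).choose k : ℝ) * |u|^k * (1+|u|)^(k*(l-1)) ≤ M^k * |u|^k * (2^(k*l)) := h2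
    _ = r^k := by rw [hr, mul_pow, mul_pow, h3]; ring
  have hNsum : Summable (busyN l u) := by
    rw [summable_prod_of_nonneg (by intro p; simp only [busyN]; positivity)]
    constructor
    · exact fun k => (hNfib k).summable
    · apply Summable.of_nonneg_of_le (fun k => ?_) (fun k => ?_) hgeom
      · rw [(hNfib k).tsum_eq]; positivity
      · rw [(hNfib k).tsum_eq]; exact hNout k
  have hAsum : Summable (busyA l u) := by
    apply Summable.of_norm
    have : ∀ p, ‖busyA l u p‖ = busyN l u p := by
      intro p
      simp only [busyA, busyN, Real.norm_eq_abs, abs_mul, abs_pow, abs_neg, abs_one, one_pow,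
        abs_abs]
      rw [abs_of_nonneg (a := (((p.1*l).choose p.1 : ℝ))) (Nat.cast_nonneg _),
        abs_of_nonneg (a := (((p.1*(l-1)).choose p.2 : ℝ))) (Nat.cast_nonneg _)]
      ring
    simpa only [this] using hNsum
  have hAfib : ∀ k : ℕ, HasSum (fun j => busyA l u (k, j))
      (((k*l).choose k : ℝ) * (u * (1-u)^(l-1))^k) := by
    intro k
    have h := busy_fiber (((k*l).choose k : ℝ) * u^k) (-u) (k*(l-1))
    have heq : (fun j : ℕ => ((k*l).choose k : ℝ) * u^k * ((((k*(l-1)).choose j) : ℝ) * (-u)^j))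
        = fun j => busyA l u (k, j) := by
      funext j
      simp only [busyA, pow_add]
      rw [neg_pow]
      ring
    rw [heq] at h
    convert h using 1
    rw [mul_pow, ← pow_mul, mul_comm (l-1) k]
    have h1u : 1 + -u = 1 - u := by ring
    rw [h1u]
    ring
  have hE1 : ∑' p, busyA l u p = ∑' k : ℕ, ((k*l).choose k : ℝ) * (u * (1-u)^(l-1))^k := by
    rw [hAsum.tsum_prod]
    exact tsum_congr fun k => (hAfib k).tsum_eq
  have hlu : ‖(l:ℝ)*u‖ < 1 := by
    rw [Real.norm_eq_abs, abs_mul, abs_of_nonneg (by positivity : (0:ℝ) ≤ (l:ℝ))]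
    have h1 : (l:ℝ) * |u| ≤ 2^(4*l) * |u| := by
      apply mul_le_mul_of_nonneg_right _ (abs_nonneg u)
      calc (l:ℝ) ≤ 2^l := le_of_lt hl2
      _ ≤ 2^(4*l) := by apply pow_le_pow_right₀ (by norm_num); omega
    have h2 : (2:ℝ)^(4*l) * |u| < 2^(4*l) * (1/2^(4*l)) := by
      apply mul_lt_mul_of_pos_left hu (by positivity)
    have h3 : (2:ℝ)^(4*l) * (1/2^(4*l)) = 1 := by field_simp
    linarith
  have hE2 : ∑' p, busyA l u p = (1 - (l:ℝ)*u)⁻¹ := by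
    rw [← (Finset.HasAntidiagonal.sigmaAntidiagonalEquivProd (A := ℕ)).tsum_eq (busyA l u)]
    have hsig : Summable (fun σ : (Σ n : ℕ, Finset.HasAntidiagonal.antidiagonal n) =>
        busyA l u (Finset.HasAntidiagonal.sigmaAntidiagonalEquivProd σ)) :=
      (Equiv.summable_iff _).mpr hAsum
    rw [hsig.tsum_sigma]
    have hn : ∀ n : ℕ, ∑' (c : (Finset.HasAntidiagonal.antidiagonal n : Finset (ℕ × ℕ))),
        busyA l u (Finset.HasAntidiagonal.sigmaAntidiagonalEquivProd ⟨n, c⟩) = ((l:ℝ)*u)^n := by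
      intro n
      have h1 : ∀ c : (Finset.HasAntidiagonal.antidiagonal n : Finset (ℕ × ℕ)),
          busyA l u (Finset.HasAntidiagonal.sigmaAntidiagonalEquivProd ⟨n, c⟩) = busyA l u (c : ℕ × ℕ) := by
        intro c; rfl
      rw [tsum_congr h1, Finset.tsum_subtype (Finset.HasAntidiagonal.antidiagonal n) (busyA l u),
        Finset.Nat.sum_antidiagonal_eq_sum_range_succ_mk]
      have h2 : ∀ k ∈ Finset.range (n+1), busyA l u (k, n-k)
          = ((-1:ℝ)^(n-k) * ((k*l).choose k : ℝ) * ((k*(l-1)).choose (n-k) : ℝ)) * u^n := by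
        intro k hk
        rw [Finset.mem_range] at hk
        have hkn : k + (n - k) = n := by omega
        simp only [busyA, hkn]
        ring
      rw [Finset.sum_congr rfl h2, ← Finset.sum_mul, busyA3 l n (by omega), mul_pow]
    rw [tsum_congr hn]
    exact tsum_geometric_of_norm_lt_one hlu
  rw [← hE1, hE2]

lemma busy_hasDerivAt (l : ℕ) (hl : 2 ≤ l) (x : ℝ) :
    HasDerivAt (fun u : ℝ => u*(1-u)^(l-1)) ((1-x)^(l-2)*(1-(l:ℝ)*x)) x := by
  obtain ⟨L, rfl⟩ : ∃ L, l = L + 2 := ⟨l-2, by omega⟩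
  have hsub1 : L + 2 - 1 = L + 1 := by omega
  have hsub2 : L + 2 - 2 = L := by omega
  rw [hsub1, hsub2]
  have h1 : HasDerivAt (fun u : ℝ => 1-u) (-1) x := (hasDerivAt_id x).const_sub 1
  have h2 : HasDerivAt (fun u : ℝ => (1-u)^(L+1)) (((L+1 : ℕ) : ℝ) * (1-x)^(L+1-1) * (-1)) x :=
    h1.pow (L+1)
  have h3 := (hasDerivAt_id x).mul h2
  convert h3 using 1
  · rfl
  · rfl
  · rfl
  simp only [id_eq, Nat.add_sub_cancel]
  push_cast
  ring

lemma busy_gb_analytic (l : ℕ) (hl : 2 ≤ l) {x : ℝ}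
    (hx : |x| < (((l:ℝ)/((l:ℝ)-1))^l * ((l:ℝ)-1))⁻¹) :
    AnalyticAt ℝ (fun y : ℝ => ∑' k : ℕ, ((k*l).choose k : ℝ) * y^k) x := by
  have hlR : (2:ℝ) ≤ (l:ℝ) := by exact_mod_cast hl
  set M : ℝ := ((l:ℝ)/((l:ℝ)-1))^l * ((l:ℝ)-1) with hM
  have hdivpos : (0:ℝ) < (l:ℝ)/((l:ℝ)-1) := div_pos (by linarith) (by linarith)
  have hM0 : 0 < M := mul_pos (pow_pos hdivpos l) (by linarith)
  set c : ℕ → ℝ := fun k => ((k*l).choose k : ℝ) with hc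
  set p := FormalMultilinearSeries.ofScalars ℝ c with hp
  have hMinv0 : (0:ℝ) ≤ M⁻¹ := by positivity
  have hrad : ENNReal.ofReal M⁻¹ ≤ p.radius := by
    have hb : ∀ n : ℕ, ‖p n‖ * ((M⁻¹.toNNReal : ℝ≥0) : ℝ)^n ≤ 1 := by
      intro n
      rw [Real.coe_toNNReal _ hMinv0, hp, FormalMultilinearSeries.ofScalars_norm]
      have hcn : ‖c n‖ = c n := by
        rw [Real.norm_eq_abs]; exact abs_of_nonneg (Nat.cast_nonneg _)
      rw [hcn]
      calc c n * (M⁻¹)^n ≤ M^n * (M⁻¹)^n := by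
            apply mul_le_mul_of_nonneg_right (busy_choose_le l n hl) (by positivity)
      _ = 1 := by rw [← mul_pow, mul_inv_cancel₀ (ne_of_gt hM0), one_pow]
    exact p.le_radius_of_bound 1 hb
  have hradpos : (0:ℝ≥0∞) < p.radius := by
    apply lt_of_lt_of_le _ hrad
    simp [ENNReal.ofReal_pos]
    positivity
  have hball := p.hasFPowerSeriesOnBall hradpos
  have hx' : x ∈ Metric.eball (0:ℝ) p.radius := by
    rw [Metric.mem_eball, edist_zero_right, ← ofReal_norm]
    apply lt_of_lt_of_le _ hrad
    rw [ENNReal.ofReal_lt_ofReal_iff (by positivity)]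
    simpa using hx
  have hAt : AnalyticAt ℝ p.sum x := hball.analyticAt_of_mem hx'
  have hsum_eq : p.sum = fun y : ℝ => ∑' k : ℕ, ((k*l).choose k : ℝ) * y^k := by
    funext y
    have h1 : p.sum y = FormalMultilinearSeries.ofScalarsSum c y := rfl
    rw [h1, FormalMultilinearSeries.ofScalars_sum_eq]
    simp [smul_eq_mul]
    rfl
  rwa [hsum_eq] at hAt

lemma busy_key (l : ℕ) (hl : 2 ≤ l) {ε : ℝ} (hε0 : 0 < ε) (hcap : (l:ℝ)*ε < 1) :
    Set.EqOn (fun u : ℝ => ∑' k : ℕ, ((k*l).choose k : ℝ) * (u*(1-u)^(l-1))^k)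
      (fun u : ℝ => (1 - (l:ℝ)*u)⁻¹) (Set.Icc 0 ε) := by
  have hlR : (2:ℝ) ≤ (l:ℝ) := by exact_mod_cast hl
  have hl0 : (0:ℝ) < (l:ℝ) := by linarith
  have hεl : ε < (l:ℝ)⁻¹ := by
    rw [inv_eq_one_div, lt_div_iff₀ hl0]
    linarith [mul_comm (l:ℝ) ε]
  have hinv2 : (l:ℝ)⁻¹ ≤ 1/2 := by
    rw [inv_eq_one_div]
    apply div_le_div_of_nonneg_left (by norm_num) (by norm_num) hlR
  set M : ℝ := ((l:ℝ)/((l:ℝ)-1))^l * ((l:ℝ)-1) with hM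
  have hdivpos : (0:ℝ) < (l:ℝ)/((l:ℝ)-1) := div_pos (by linarith) (by linarith)
  have hM0 : 0 < M := mul_pos (pow_pos hdivpos l) (by linarith)
  set t : ℝ → ℝ := fun u => u*(1-u)^(l-1) with ht
  have htc : Continuous t := by
    apply continuous_id.mul
    exact (continuous_const.sub continuous_id).pow _
  have hmono : StrictMonoOn t (Set.Iic ((l:ℝ)⁻¹)) := by
    apply strictMonoOn_of_deriv_pos (convex_Iic _) htc.continuousOn
    intro x hx
    rw [interior_Iic] at hx
    rw [(busy_hasDerivAt l hl x).deriv]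
    have hxlt : x < (l:ℝ)⁻¹ := hx
    have hx1 : x < 1 := by linarith
    have hlx : (l:ℝ)*x < 1 := by
      rcases le_or_gt x 0 with h | h
      · nlinarith
      · calc (l:ℝ)*x < (l:ℝ)*(l:ℝ)⁻¹ := by apply mul_lt_mul_of_pos_left hxlt hl0
        _ = 1 := mul_inv_cancel₀ (ne_of_gt hl0)
    apply mul_pos (pow_pos (by linarith) _) (by linarith)
  have htl_eq : t ((l:ℝ)⁻¹) = M⁻¹ := by
    apply eq_inv_of_mul_eq_one_left
    simp only [ht, hM]
    obtain ⟨L, rfl⟩ : ∃ L, l = L + 2 := ⟨l-2, by omega⟩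
    have hsub1 : L + 2 - 1 = L + 1 := by omega
    rw [hsub1]
    have hC : ((L+2 : ℕ) : ℝ) = (L:ℝ) + 2 := by push_cast; ring
    rw [hC]
    have hL2 : (L:ℝ) + 2 ≠ 0 := by positivity
    have hL1 : (L:ℝ) + 1 ≠ 0 := by positivity
    have h2 : (L:ℝ) + 2 - 1 = (L:ℝ) + 1 := by ring
    have h1 : 1 - ((L:ℝ)+2)⁻¹ = ((L:ℝ)+1) / ((L:ℝ)+2) := by
      rw [eq_div_iff hL2, sub_mul, inv_mul_cancel₀ hL2]
      ring
    rw [h1, h2, div_pow, div_pow, pow_succ ((L:ℝ)+2) (L+1)]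
    field_simp
    ring
  have htε : t ε < M⁻¹ := by
    rw [← htl_eq]
    exact hmono (Set.mem_Iic.mpr (le_of_lt hεl)) (Set.mem_Iic.mpr (le_refl _)) hεl
  set U : Set ℝ := {u : ℝ | u < (l:ℝ)⁻¹ ∧ |t u| < M⁻¹} with hU
  have hUopen : IsOpen U := by
    have : U = (Set.Iio ((l:ℝ)⁻¹)) ∩ ((fun u => |t u|) ⁻¹' (Set.Iio M⁻¹)) := by
      ext u; simp [hU, Set.mem_setOf_eq]
    rw [this]
    exact isOpen_Iio.inter (((continuous_abs.comp htc)).isOpen_preimage _ isOpen_Iio)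
  have hUconn : IsPreconnected U := by
    apply Set.OrdConnected.isPreconnected
    constructor
    intro x hx y hy z hz
    constructor
    · exact lt_of_le_of_lt hz.2 hy.1
    · have hxI : x ∈ Set.Iic ((l:ℝ)⁻¹) := le_of_lt hx.1
      have hyI : y ∈ Set.Iic ((l:ℝ)⁻¹) := le_of_lt hy.1
      have hzI : z ∈ Set.Iic ((l:ℝ)⁻¹) := le_of_lt (lt_of_le_of_lt hz.2 hy.1)
      have h1 : t x ≤ t z := hmono.monotoneOn hxI hzI hz.1
      have h2 : t z ≤ t y := hmono.monotoneOn hzI hyI hz.2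
      rw [abs_lt]
      constructor
      · calc -M⁻¹ < -|t x| := by linarith [hx.2]
        _ ≤ t x := neg_abs_le _
        _ ≤ t z := h1
      · calc t z ≤ t y := h2
        _ ≤ |t y| := le_abs_self _
        _ < M⁻¹ := hy.2
  have h0U : (0:ℝ) ∈ U := by
    constructor
    · exact inv_pos.mpr hl0
    · simpa [ht] using inv_pos.mpr hM0
  have hIccU : Set.Icc (0:ℝ) ε ⊆ U := by
    intro u hu
    have hu1 : u ≤ ε := hu.2
    have huM : u < (l:ℝ)⁻¹ := lt_of_le_of_lt hu1 hεl
    refine ⟨huM, ?_⟩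
    have htu0 : 0 ≤ t u := by
      apply mul_nonneg hu.1
      apply pow_nonneg
      have : u ≤ 1 := le_trans (le_of_lt huM) (le_trans hinv2 (by norm_num))
      linarith
    rw [abs_of_nonneg htu0]
    calc t u ≤ t ε := hmono.monotoneOn (Set.mem_Iic.mpr (le_of_lt huM))
          (Set.mem_Iic.mpr (le_of_lt hεl)) hu1
    _ < M⁻¹ := htε
  have hg_an : AnalyticOnNhd ℝ
      (fun u : ℝ => ∑' k : ℕ, ((k*l).choose k : ℝ) * (u*(1-u)^(l-1))^k) U := by
    intro u hu
    have hgb := busy_gb_analytic l hl (x := t u) (by rw [← hM]; exact hu.2)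
    have htan : AnalyticAt ℝ t u := by
      apply AnalyticAt.mul analyticAt_id
      exact (analyticAt_const.sub analyticAt_id).pow _
    exact hgb.comp htan
  have hh_an : AnalyticOnNhd ℝ (fun u : ℝ => (1 - (l:ℝ)*u)⁻¹) U := by
    intro u hu
    apply AnalyticAt.inv
    · exact analyticAt_const.sub (analyticAt_const.mul analyticAt_id)
    · have h1 : (l:ℝ)*u < 1 := by
        rcases le_or_gt u 0 with h | h
        · nlinarith
        · calc (l:ℝ)*u < (l:ℝ)*(l:ℝ)⁻¹ := by apply mul_lt_mul_of_pos_left hu.1 hl0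
          _ = 1 := mul_inv_cancel₀ (ne_of_gt hl0)
      show (1 - (l:ℝ)*u) ≠ 0
      exact ne_of_gt (by linarith)
  have heq : (fun u : ℝ => ∑' k : ℕ, ((k*l).choose k : ℝ) * (u*(1-u)^(l-1))^k)
      =ᶠ[nhds (0:ℝ)] (fun u : ℝ => (1 - (l:ℝ)*u)⁻¹) := by
    have hδ : (0:ℝ) < 1/2^(4*l) := by positivity
    have hmem : Set.Ioo (-(1/2^(4*l)):ℝ) (1/2^(4*l)) ∈ nhds (0:ℝ) :=
      Ioo_mem_nhds (by linarith) hδ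
    apply Filter.eventuallyEq_of_mem hmem
    intro u hu
    apply busy_small l hl u
    rw [abs_lt]
    exact ⟨hu.1, hu.2⟩
  intro u hu
  exact hg_an.eqOn_of_preconnected_of_eventuallyEq hh_an hUconn h0U heq (hIccU hu)


/-- Normalization of the busy-time distribution: for `0 < ε < 1`, `l ≥ 2`, `lε < 1`,
`∑_{s=1}^{∞} ((l-1)/s) ε^s (1-ε)^{s(l-1)} C((s-1)l, s-1) = 1 - (1-ε)^{l-1}`
(here the sum is re-indexed via `s = k+1`), i.e. the busy-time pmf sums to one. -/
theorem busy_time_pmf_sums_to_one (l : ℕ) (hl : 2 ≤ l) (ε : ℝ)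
    (hε0 : 0 < ε) (hε1 : ε < 1) (hcap : (l : ℝ) * ε < 1) :
    ∑' k : ℕ, ((l : ℝ) - 1) / ((k : ℝ) + 1) * ε ^ (k + 1)
        * (1 - ε) ^ ((k + 1) * (l - 1)) * (Nat.choose (k * l) k : ℝ)
      = 1 - (1 - ε) ^ (l - 1) := by
  have hlR : (2:ℝ) ≤ (l:ℝ) := by exact_mod_cast hl
  have hl0 : (0:ℝ) < (l:ℝ) := by linarith
  have hεl : ε < (l:ℝ)⁻¹ := by
    rw [inv_eq_one_div, lt_div_iff₀ hl0]
    linarith [mul_comm (l:ℝ) ε]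
  -- notation
  set M : ℝ := ((l:ℝ)/((l:ℝ)-1))^l * ((l:ℝ)-1) with hM
  have hdivpos : (0:ℝ) < (l:ℝ)/((l:ℝ)-1) := div_pos (by linarith) (by linarith)
  have hM0 : 0 < M := mul_pos (pow_pos hdivpos l) (by linarith)
  set tε : ℝ := ε * (1-ε)^(l-1) with htε_def
  have htε0 : 0 ≤ tε := by
    apply mul_nonneg (le_of_lt hε0)
    apply pow_nonneg; linarith
  -- tε < M⁻¹ (reusing monotonicity argument)
  have htεM : tε < M⁻¹ := by
    have hinv2 : (l:ℝ)⁻¹ ≤ 1/2 := by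
      rw [inv_eq_one_div]
      apply div_le_div_of_nonneg_left (by norm_num) (by norm_num) hlR
    have htc : Continuous (fun u : ℝ => u*(1-u)^(l-1)) := by
      exact continuous_id.mul ((continuous_const.sub continuous_id).pow _)
    have hmono : StrictMonoOn (fun u : ℝ => u*(1-u)^(l-1)) (Set.Iic ((l:ℝ)⁻¹)) := by
      apply strictMonoOn_of_deriv_pos (convex_Iic _) htc.continuousOn
      intro x hx
      rw [interior_Iic] at hx
      rw [(busy_hasDerivAt l hl x).deriv]
      have hxlt : x < (l:ℝ)⁻¹ := hx
      have hx1 : x < 1 := by linarith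
      have hlx : (l:ℝ)*x < 1 := by
        rcases le_or_gt x 0 with h | h
        · nlinarith
        · calc (l:ℝ)*x < (l:ℝ)*(l:ℝ)⁻¹ := by apply mul_lt_mul_of_pos_left hxlt hl0
          _ = 1 := mul_inv_cancel₀ (ne_of_gt hl0)
      apply mul_pos (pow_pos (by linarith) _) (by linarith)
    have htl_eq : (fun u : ℝ => u*(1-u)^(l-1)) ((l:ℝ)⁻¹) = M⁻¹ := by
      apply eq_inv_of_mul_eq_one_left
      simp only [hM]
      obtain ⟨L, rfl⟩ : ∃ L, l = L + 2 := ⟨l-2, by omega⟩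
      have hsub1 : L + 2 - 1 = L + 1 := by omega
      rw [hsub1]
      have hC : ((L+2 : ℕ) : ℝ) = (L:ℝ) + 2 := by push_cast; ring
      rw [hC]
      have hL2 : (L:ℝ) + 2 ≠ 0 := by positivity
      have hL1 : (L:ℝ) + 1 ≠ 0 := by positivity
      have h2 : (L:ℝ) + 2 - 1 = (L:ℝ) + 1 := by ring
      have h1 : 1 - ((L:ℝ)+2)⁻¹ = ((L:ℝ)+1) / ((L:ℝ)+2) := by
        rw [eq_div_iff hL2, sub_mul, inv_mul_cancel₀ hL2]
        ring
      rw [h1, h2, div_pow, div_pow, pow_succ ((L:ℝ)+2) (L+1)]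
      field_simp
      ring
    calc tε < (fun u : ℝ => u*(1-u)^(l-1)) ((l:ℝ)⁻¹) :=
          hmono (Set.mem_Iic.mpr (le_of_lt hεl)) (Set.mem_Iic.mpr (le_refl _)) hεl
    _ = M⁻¹ := htl_eq
  have hρ1 : M * tε < 1 := by
    have := mul_lt_mul_of_pos_left htεM hM0
    rwa [mul_inv_cancel₀ (ne_of_gt hM0)] at this
  have hρ0 : 0 ≤ M * tε := mul_nonneg (le_of_lt hM0) htε0
  clear_value M tε
  -- integrand family
  set f : ℕ → ℝ → ℝ := fun k u => ((k*l).choose k : ℝ) * (u*(1-u)^(l-1))^k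
      * ((1-u)^(l-2)*(1-(l:ℝ)*u)) with hf
  have hcont : ∀ k, Continuous (f k) := by
    intro k
    apply Continuous.mul
    · exact continuous_const.mul ((continuous_id.mul
        ((continuous_const.sub continuous_id).pow _)).pow _)
    · exact ((continuous_const.sub continuous_id).pow _).mul
        (continuous_const.sub (continuous_const.mul continuous_id))
  -- antiderivatives
  have hΦ : ∀ k : ℕ, ∀ x : ℝ, HasDerivAt
      (fun u : ℝ => ((k*l).choose k : ℝ) / ((k:ℝ)+1) * (u*(1-u)^(l-1))^(k+1)) (f k x) x := by
    intro k x
    have h := ((busy_hasDerivAt l hl x).pow (k+1)).const_mul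
      (((k*l).choose k : ℝ) / ((k:ℝ)+1))
    convert h using 1
    · rfl
    · rfl
    · rfl
    rw [Nat.add_sub_cancel]
    have hk1 : ((k:ℝ)+1) ≠ 0 := by positivity
    simp only [hf]
    push_cast
    field_simp
  have hIval : ∀ k : ℕ, ∫ u in (0:ℝ)..ε, f k u
      = ((k*l).choose k : ℝ) / ((k:ℝ)+1) * tε^(k+1) := by
    intro k
    rw [intervalIntegral.integral_eq_sub_of_hasDerivAt (fun x _ => hΦ k x)
      ((hcont k).intervalIntegrable 0 ε)]
    simp [htε_def, zero_pow (Nat.succ_ne_zero k)]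
  -- swap sum and integral
  set μ : Measure ℝ := volume.restrict (Set.Ioc 0 ε) with hμ
  have hints : ∀ k, Integrable (f k) μ := fun k => (hcont k).integrableOn_Ioc
  have hIμ : ∀ k : ℕ, ∫ u, f k u ∂μ = ((k*l).choose k : ℝ) / ((k:ℝ)+1) * tε^(k+1) := by
    intro k
    rw [← hIval k, intervalIntegral.integral_of_le (le_of_lt hε0)]
  have hfpos : ∀ k : ℕ, ∀ u ∈ Set.Ioc (0:ℝ) ε, 0 ≤ f k u := by
    intro k u hu
    have h1u : 0 ≤ 1 - u := by
      have := hu.2; linarith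
    have hlu : 0 ≤ 1 - (l:ℝ)*u := by
      have h1 : (l:ℝ)*u ≤ (l:ℝ)*ε := mul_le_mul_of_nonneg_left hu.2 (le_of_lt hl0)
      linarith
    apply mul_nonneg
    · apply mul_nonneg (Nat.cast_nonneg _)
      apply pow_nonneg
      apply mul_nonneg (le_of_lt hu.1)
      apply pow_nonneg h1u
    · exact mul_nonneg (pow_nonneg h1u _) hlu
  have hbound : ∀ k : ℕ, ((k*l).choose k : ℝ) / ((k:ℝ)+1) * tε^(k+1) ≤ (M*tε)^k * tε := by
    intro k
    have h1 : ((k*l).choose k : ℝ) / ((k:ℝ)+1) ≤ M^k := by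
      rw [hM]
      apply le_trans (div_le_self (Nat.cast_nonneg _) (by linarith [Nat.cast_nonneg (α := ℝ) k]))
      exact busy_choose_le l k hl
    calc ((k*l).choose k : ℝ) / ((k:ℝ)+1) * tε^(k+1)
        ≤ M^k * tε^(k+1) := mul_le_mul_of_nonneg_right h1 (pow_nonneg htε0 _)
    _ = (M*tε)^k * tε := by rw [pow_succ, mul_pow]; ring
  have hsumnorm : Summable (fun k => ∫ u, ‖f k u‖ ∂μ) := by
    have heq : ∀ k : ℕ, ∫ u, ‖f k u‖ ∂μ = ((k*l).choose k : ℝ) / ((k:ℝ)+1) * tε^(k+1) := by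
      intro k
      rw [← hIμ k]
      apply setIntegral_congr_fun measurableSet_Ioc
      intro u hu
      exact Real.norm_of_nonneg (hfpos k u hu)
    rw [funext heq]
    apply Summable.of_nonneg_of_le (fun k => ?_) hbound
      ((summable_geometric_of_lt_one hρ0 hρ1).mul_right tε)
    positivity
  have hswap := MeasureTheory.integral_tsum_of_summable_integral_norm hints hsumnorm
  -- pointwise value of the summed integrand
  have hptwise : ∀ u ∈ Set.Ioc (0:ℝ) ε, (∑' k, f k u) = (1-u)^(l-2) := by
    intro u hu
    have hkey := busy_key l hl hε0 hcap (Set.Ioc_subset_Icc_self hu)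
    have hlu : 1 - (l:ℝ)*u > 0 := by
      have h1 : (l:ℝ)*u ≤ (l:ℝ)*ε := mul_le_mul_of_nonneg_left hu.2 (le_of_lt hl0)
      linarith
    have h1 : (fun k : ℕ => f k u) = fun k =>
        (((k*l).choose k : ℝ) * (u*(1-u)^(l-1))^k) * ((1-u)^(l-2)*(1-(l:ℝ)*u)) := by
      funext k; simp only [hf]
    rw [h1, tsum_mul_right]
    simp only at hkey
    rw [hkey]
    field_simp
  have hintval : ∫ u, (∑' k, f k u) ∂μ = (1 - (1-ε)^(l-1))/((l:ℝ)-1) := by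
    rw [setIntegral_congr_fun measurableSet_Ioc hptwise]
    have h1 : ∫ u in Set.Ioc (0:ℝ) ε, (1-u)^(l-2) = ∫ u in (0:ℝ)..ε, (1-u)^(l-2) := by
      rw [intervalIntegral.integral_of_le (le_of_lt hε0)]
    rw [h1]
    have hΨ : ∀ x : ℝ, HasDerivAt (fun u : ℝ => -(1-u)^(l-1)/((l:ℝ)-1)) ((1-x)^(l-2)) x := by
      intro x
      have h1d : HasDerivAt (fun u : ℝ => 1-u) (-1) x := (hasDerivAt_id x).const_sub 1
      have h2d := (h1d.pow (l-1)).const_mul (-1/((l:ℝ)-1))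
      have hsub : l - 1 - 1 = l - 2 := by omega
      rw [hsub] at h2d
      convert h2d using 1
      · rfl
      · rfl
      · funext u; simp only [Pi.pow_apply]; ring
      · have hc : ((l-1 : ℕ) : ℝ) = (l:ℝ) - 1 := by
          rw [Nat.cast_sub (by omega)]; norm_num
        rw [hc]
        have hne : (l:ℝ) - 1 ≠ 0 := by linarith
        field_simp
    rw [intervalIntegral.integral_eq_sub_of_hasDerivAt (fun x _ => hΨ x)
      (((continuous_const.sub continuous_id).pow _).intervalIntegrable 0 ε)]
    simp only [one_pow, sub_zero, mul_zero]
    ring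
  -- final chain
  have hterm : ∀ k : ℕ, ((l : ℝ) - 1) / ((k : ℝ) + 1) * ε ^ (k + 1)
        * (1 - ε) ^ ((k + 1) * (l - 1)) * (Nat.choose (k * l) k : ℝ)
      = ((l:ℝ)-1) * (((k*l).choose k : ℝ) / ((k:ℝ)+1) * tε^(k+1)) := by
    intro k
    rw [htε_def, mul_pow, ← pow_mul, mul_comm (l-1) (k+1)]
    have hk1 : ((k:ℝ)+1) ≠ 0 := by positivity
    field_simp
  calc ∑' k : ℕ, ((l : ℝ) - 1) / ((k : ℝ) + 1) * ε ^ (k + 1)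
        * (1 - ε) ^ ((k + 1) * (l - 1)) * (Nat.choose (k * l) k : ℝ)
      = ∑' k : ℕ, ((l:ℝ)-1) * (((k*l).choose k : ℝ) / ((k:ℝ)+1) * tε^(k+1)) :=
        tsum_congr hterm
  _ = ((l:ℝ)-1) * ∑' k : ℕ, (((k*l).choose k : ℝ) / ((k:ℝ)+1) * tε^(k+1)) := tsum_mul_left
  _ = ((l:ℝ)-1) * ∑' k : ℕ, ∫ u, f k u ∂μ := by
        congr 1
        exact tsum_congr fun k => (hIμ k).symm
  _ = ((l:ℝ)-1) * ∫ u, (∑' k, f k u) ∂μ := by rw [hswap]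
  _ = ((l:ℝ)-1) * ((1 - (1-ε)^(l-1))/((l:ℝ)-1)) := by rw [hintval]
  _ = 1 - (1-ε)^(l-1) := by
        have hne : (l:ℝ) - 1 ≠ 0 := by linarith
        rw [mul_comm]
        exact div_mul_cancel₀ _ hne
end

section
/- Let 0 < ε < 1 and let l ≥ 2 be an integer with l·ε < 1. Let S be a nonnegative-integer-valued random variable with P(S=0) = (1-ε)^{l-1} and P(S=s) = ((l-1)/s) ε^s (1-ε)^{s(l-1)} C((s-1)l, s-1) for s ≥ 1. Then E(S) = ∑_{s=1}^{∞} s · P(S=s) = (l-1) ε (1-ε)^{l-1} / (1 - lε). -/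
namespace BusyTimeAux

open Filter Finset

noncomputable def w (p : ℕ) (ε : ℝ) (r k : ℕ) : ℝ :=
  (Nat.choose ((p+2)*k + r) k : ℝ) * ε^k * (1-ε)^((p+1)*k + r)

noncomputable def Bc (p : ℕ) (ε : ℝ) : ℝ := (((p:ℝ)+2)*(1-ε))/((p:ℝ)+1)

noncomputable def th (p : ℕ) (ε : ℝ) : ℝ := ((p:ℝ)+2)*ε*(Bc p ε)^(p+1)

noncomputable def psi (p : ℕ) (ε : ℝ) (r : ℕ) : ℝ := ∑' k, w p ε r k

lemma choose_step (p n k : ℕ) (hn : (p+2)*k ≤ n) :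
    (p+1) * Nat.choose (n+1) k ≤ (p+2) * Nat.choose n k := by
  rcases k with _ | j
  · simp
  · have key : (p+1) * Nat.choose n j ≤ Nat.choose n (j+1) := by
      have h1 := Nat.choose_succ_right_eq n j
      have h3 : (p+1)*(j+1) ≤ n - j := by
        have h2 : (p+1)*(j+1) + (j+1) = (p+2)*(j+1) := by ring
        omega
      have h4 : (p+1) * Nat.choose n j * (j+1) ≤ Nat.choose n (j+1) * (j+1) := by
        calc (p+1) * Nat.choose n j * (j+1) = Nat.choose n j * ((p+1)*(j+1)) := by ring
        _ ≤ Nat.choose n j * (n - j) := Nat.mul_le_mul_left _ h3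
        _ = Nat.choose n (j+1) * (j+1) := h1.symm
      exact Nat.le_of_mul_le_mul_right h4 (Nat.succ_pos j)
    have hps : Nat.choose (n+1) (j+1) = Nat.choose n j + Nat.choose n (j+1) :=
      Nat.choose_succ_succ n j
    calc (p+1) * Nat.choose (n+1) (j+1)
        = (p+1) * Nat.choose n j + (p+1) * Nat.choose n (j+1) := by rw [hps]; ring
      _ ≤ Nat.choose n (j+1) + (p+1) * Nat.choose n (j+1) := Nat.add_le_add_right key _
      _ = (p+2) * Nat.choose n (j+1) := by ring

lemma choose_pow_le (p k : ℕ) : ∀ r : ℕ,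
    (p+1)^r * Nat.choose ((p+2)*k + r) k ≤ (p+2)^r * Nat.choose ((p+2)*k) k := by
  intro r
  induction r with
  | zero => simp
  | succ r ih =>
    have hstep : (p+1) * Nat.choose ((p+2)*k + r + 1) k ≤ (p+2) * Nat.choose ((p+2)*k + r) k :=
      choose_step p ((p+2)*k + r) k (Nat.le_add_right _ _)
    calc (p+1)^(r+1) * Nat.choose ((p+2)*k + (r+1)) k
        = (p+1)^r * ((p+1) * Nat.choose ((p+2)*k + r + 1) k) := by
          rw [show (p+2)*k + (r+1) = (p+2)*k + r + 1 by ring]; ring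
      _ ≤ (p+1)^r * ((p+2) * Nat.choose ((p+2)*k + r) k) := Nat.mul_le_mul_left _ hstep
      _ = (p+2) * ((p+1)^r * Nat.choose ((p+2)*k + r) k) := by ring
      _ ≤ (p+2) * ((p+2)^r * Nat.choose ((p+2)*k) k) := Nat.mul_le_mul_left _ ih
      _ = (p+2)^(r+1) * Nat.choose ((p+2)*k) k := by ring

lemma central_le (p k : ℕ) :
    (Nat.choose ((p+2)*k) k : ℝ) * ((p:ℝ)+1)^((p+1)*k) ≤ ((p:ℝ)+2)^((p+2)*k) := by
  have hb := add_pow (1:ℝ) ((p:ℝ)+1) ((p+2)*k)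
  have hmem : k ∈ Finset.range ((p+2)*k + 1) := by
    have : k ≤ (p+2)*k := Nat.le_mul_of_pos_left k (by omega)
    simp [Nat.lt_succ_iff, this]
  have hsub : (p+2)*k - k = (p+1)*k := by
    have : (p+1)*k + k = (p+2)*k := by ring
    omega
  have hsingle : (1:ℝ)^k * ((p:ℝ)+1)^((p+2)*k - k) * (Nat.choose ((p+2)*k) k : ℝ)
      ≤ ∑ m ∈ Finset.range ((p+2)*k + 1),
          (1:ℝ)^m * ((p:ℝ)+1)^((p+2)*k - m) * (Nat.choose ((p+2)*k) m : ℝ) :=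
    Finset.single_le_sum
      (f := fun m => (1:ℝ)^m * ((p:ℝ)+1)^((p+2)*k - m) * (Nat.choose ((p+2)*k) m : ℝ))
      (fun i _ => by positivity) hmem
  rw [← hb, hsub] at hsingle
  calc (Nat.choose ((p+2)*k) k : ℝ) * ((p:ℝ)+1)^((p+1)*k)
      = (1:ℝ)^k * ((p:ℝ)+1)^((p+1)*k) * (Nat.choose ((p+2)*k) k : ℝ) := by ring
    _ ≤ (1 + (((p:ℝ)+1))) ^ ((p+2)*k) := hsingle
    _ = ((p:ℝ)+2)^((p+2)*k) := by rw [show (1 + (((p:ℝ)+1))) = (p:ℝ)+2 by ring]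

section Main

variable {p : ℕ} {ε : ℝ}

lemma one_le_B (hε0 : 0 < ε) (hcap : ((p:ℝ)+2)*ε < 1) : 1 ≤ Bc p ε := by
  rw [Bc, le_div_iff₀ (by positivity)]
  nlinarith

lemma B_pos (hε0 : 0 < ε) (hcap : ((p:ℝ)+2)*ε < 1) : 0 < Bc p ε :=
  lt_of_lt_of_le one_pos (one_le_B hε0 hcap)

lemma key_lt (hε0 : 0 < ε) (hcap : ((p:ℝ)+2)*ε < 1) {m : ℕ} (hm : m ≤ p+1) :
    ((p:ℝ)+2)*ε*(Bc p ε)^m < 1 := by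
  set a : ℝ := ((p:ℝ)+2)*ε with ha
  have ha0 : 0 < a := by positivity
  have ha1 : a < 1 := hcap
  have hBeq : Bc p ε = 1 + (1-a)/((p:ℝ)+1) := by
    rw [Bc]; field_simp; ring
  have hBle : Bc p ε ≤ Real.exp ((1-a)/((p:ℝ)+1)) := by
    rw [hBeq]
    have := Real.add_one_le_exp ((1-a)/((p:ℝ)+1))
    linarith
  have hB0 : (0:ℝ) ≤ Bc p ε := (B_pos hε0 hcap).le
  have h1 : (Bc p ε)^m ≤ Real.exp ((1-a)/((p:ℝ)+1))^m := pow_le_pow_left₀ hB0 hBle m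
  have h2 : Real.exp ((1-a)/((p:ℝ)+1))^m = Real.exp ((m:ℝ)*((1-a)/((p:ℝ)+1))) := by
    rw [← Real.exp_nat_mul]
  have h3 : (m:ℝ)*((1-a)/((p:ℝ)+1)) ≤ 1-a := by
    rw [← mul_div_assoc, div_le_iff₀ (by positivity)]
    have hm' : (m:ℝ) ≤ (p:ℝ)+1 := by exact_mod_cast hm
    nlinarith
  have h4 : (Bc p ε)^m ≤ Real.exp (1-a) := by
    calc (Bc p ε)^m ≤ Real.exp ((m:ℝ)*((1-a)/((p:ℝ)+1))) := by rw [← h2]; exact h1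
      _ ≤ Real.exp (1-a) := Real.exp_le_exp.mpr h3
  have h5 : Real.exp (1-a) < a⁻¹ := by
    have hlog : Real.log a < a - 1 := Real.log_lt_sub_one_of_pos ha0 (ne_of_lt ha1)
    have h6 : 1 - a < -Real.log a := by linarith
    calc Real.exp (1-a) < Real.exp (-Real.log a) := Real.exp_lt_exp.mpr h6
      _ = a⁻¹ := by rw [Real.exp_neg, Real.exp_log ha0]
  have hE : 0 < Real.exp (1-a) := Real.exp_pos _
  calc a*(Bc p ε)^m ≤ a * Real.exp (1-a) := by nlinarith
    _ < a * a⁻¹ := by nlinarith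
    _ = 1 := mul_inv_cancel₀ (ne_of_gt ha0)

lemma th_lt_one (hε0 : 0 < ε) (hcap : ((p:ℝ)+2)*ε < 1) : th p ε < 1 :=
  key_lt hε0 hcap (le_refl (p+1))

lemma th_nonneg (hε0 : 0 < ε) (hcap : ((p:ℝ)+2)*ε < 1) : 0 ≤ th p ε := by
  have := B_pos (p := p) hε0 hcap
  rw [th]; positivity

lemma w_nonneg (hε0 : 0 < ε) (hε1 : ε < 1) (r k : ℕ) : 0 ≤ w p ε r k := by
  have hq : (0:ℝ) < 1 - ε := by linarith
  rw [w]; positivity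

lemma w_le (hε0 : 0 < ε) (hε1 : ε < 1) (hcap : ((p:ℝ)+2)*ε < 1) (r k : ℕ) :
    w p ε r k ≤ (Bc p ε)^r * (th p ε)^k := by
  have hq : (0:ℝ) < 1 - ε := by linarith
  have hc : (0:ℝ) < (p:ℝ)+1 := by positivity
  set c : ℝ := (p:ℝ)+1 with hcdef
  have key : w p ε r k * (c^r * c^((p+1)*k)) ≤
      (((p:ℝ)+2)*(1-ε))^r * ((((p:ℝ)+2)*ε)^k * ((((p:ℝ)+2)*(1-ε))^(p+1))^k) := by
    have h1 : (c^r * (Nat.choose ((p+2)*k + r) k : ℝ)) ≤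
        ((p:ℝ)+2)^r * (Nat.choose ((p+2)*k) k : ℝ) := by
      have := choose_pow_le p k r
      have h := (Nat.cast_le (α := ℝ)).mpr this
      push_cast at h
      convert h using 2 <;> push_cast <;> ring
    have h2 := central_le p k
    have hmid : w p ε r k * (c^r * c^((p+1)*k))
        = (c^r * (Nat.choose ((p+2)*k + r) k : ℝ)) * c^((p+1)*k)
          * (ε^k * (1-ε)^((p+1)*k + r)) := by
      rw [w]; ring
    have hnn1 : (0:ℝ) ≤ c^((p+1)*k) * (ε^k * (1-ε)^((p+1)*k + r)) := by positivity
    calc w p ε r k * (c^r * c^((p+1)*k))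
        = (c^r * (Nat.choose ((p+2)*k + r) k : ℝ))
          * (c^((p+1)*k) * (ε^k * (1-ε)^((p+1)*k + r))) := by rw [w]; ring
      _ ≤ (((p:ℝ)+2)^r * (Nat.choose ((p+2)*k) k : ℝ))
          * (c^((p+1)*k) * (ε^k * (1-ε)^((p+1)*k + r))) :=
          mul_le_mul_of_nonneg_right h1 hnn1
      _ = ((Nat.choose ((p+2)*k) k : ℝ) * c^((p+1)*k))
          * (((p:ℝ)+2)^r * (ε^k * (1-ε)^((p+1)*k + r))) := by ring
      _ ≤ ((p:ℝ)+2)^((p+2)*k) * (((p:ℝ)+2)^r * (ε^k * (1-ε)^((p+1)*k + r))) := by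
          apply mul_le_mul_of_nonneg_right h2 (by positivity)
      _ = (((p:ℝ)+2)*(1-ε))^r * ((((p:ℝ)+2)*ε)^k * ((((p:ℝ)+2)*(1-ε))^(p+1))^k) := by
          rw [show (p+2)*k = k + (p+1)*k by ring]
          rw [show (p+1)*k + r = r + (p+1)*k by ring]
          rw [pow_add, pow_add, ← pow_mul, mul_pow, mul_pow, mul_pow]
          ring
  have hcne : c ≠ 0 := ne_of_gt hc
  have hBr : (Bc p ε)^r = (((p:ℝ)+2)*(1-ε))^r / c^r := by
    simp only [Bc]; rw [div_pow]
  have hthk : (th p ε)^k =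
      ((((p:ℝ)+2)*ε)^k * ((((p:ℝ)+2)*(1-ε))^(p+1))^k) / c^((p+1)*k) := by
    have hth' : th p ε = (((p:ℝ)+2)*ε) * ((((p:ℝ)+2)*(1-ε))^(p+1) / c^(p+1)) := by
      simp only [th, Bc]
      rw [div_pow]
    rw [hth', mul_pow, div_pow, ← pow_mul, mul_div_assoc]
    simp [pow_mul]
  have hrhs : (Bc p ε)^r * (th p ε)^k =
      ((((p:ℝ)+2)*(1-ε))^r * ((((p:ℝ)+2)*ε)^k * ((((p:ℝ)+2)*(1-ε))^(p+1))^k))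
        / (c^r * c^((p+1)*k)) := by
    rw [hBr, hthk, div_mul_div_comm]
  rw [hrhs, le_div_iff₀ (by positivity)]
  exact key

lemma w_summable (hε0 : 0 < ε) (hε1 : ε < 1) (hcap : ((p:ℝ)+2)*ε < 1) (r : ℕ) :
    Summable (w p ε r) :=
  Summable.of_nonneg_of_le (w_nonneg hε0 hε1 r) (w_le hε0 hε1 hcap r)
    (((summable_geometric_of_lt_one (th_nonneg hε0 hcap) (th_lt_one hε0 hcap))).mul_left _)

lemma psi_nonneg (hε0 : 0 < ε) (hε1 : ε < 1) (r : ℕ) : 0 ≤ psi p ε r :=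
  tsum_nonneg (w_nonneg hε0 hε1 r)

lemma psi_le (hε0 : 0 < ε) (hε1 : ε < 1) (hcap : ((p:ℝ)+2)*ε < 1) (r : ℕ) :
    psi p ε r ≤ (Bc p ε)^r * (1 - th p ε)⁻¹ := by
  have h := Summable.tsum_le_tsum (w_le hε0 hε1 hcap r) (w_summable hε0 hε1 hcap r)
    (((summable_geometric_of_lt_one (th_nonneg hε0 hcap) (th_lt_one hε0 hcap))).mul_left _)
  rw [tsum_mul_left, tsum_geometric_of_lt_one (th_nonneg hε0 hcap) (th_lt_one hε0 hcap)] at h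
  exact h

/-- pointwise Pascal split -/
lemma w_succ_succ (r k : ℕ) :
    w p ε (r+1) (k+1) = (1-ε) * w p ε r (k+1) + ε * w p ε (r+(p+2)) k := by
  simp only [w]
  rw [show (p+2)*(k+1) + (r+1) = ((p+2)*(k+1) + r) + 1 by ring,
      Nat.choose_succ_succ ((p+2)*(k+1) + r) k]
  push_cast
  rw [show (p+2)*k + (r+(p+2)) = (p+2)*(k+1) + r by ring]
  rw [show (p+1)*(k+1) + (r+1) = ((p+1)*(k+1) + r) + 1 by ring,
      show (p+1)*k + (r+(p+2)) = ((p+1)*(k+1) + r) + 1 by ring]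
  ring

lemma w_succ_zero (r : ℕ) : w p ε (r+1) 0 = (1-ε) * w p ε r 0 := by
  simp [w, pow_succ]
  ring

lemma psi_rec (hε0 : 0 < ε) (hε1 : ε < 1) (hcap : ((p:ℝ)+2)*ε < 1) (r : ℕ) :
    psi p ε (r+1) = (1-ε) * psi p ε r + ε * psi p ε (r+(p+2)) := by
  have hs := w_summable (p := p) hε0 hε1 hcap
  have hshift : ∀ r' : ℕ, Summable (fun k => w p ε r' (k+1)) := by
    intro r'
    exact (summable_nat_add_iff 1).mpr (hs r')
  have h1 : psi p ε (r+1) = w p ε (r+1) 0 + ∑' k, w p ε (r+1) (k+1) :=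
    Summable.tsum_eq_zero_add (hs (r+1))
  have h2 : ∑' k, w p ε (r+1) (k+1)
      = (1-ε) * (∑' k, w p ε r (k+1)) + ε * psi p ε (r+(p+2)) := by
    calc ∑' k, w p ε (r+1) (k+1)
        = ∑' k, ((1-ε) * w p ε r (k+1) + ε * w p ε (r+(p+2)) k) := by
          congr 1; funext k; exact w_succ_succ r k
      _ = ∑' k, (1-ε) * w p ε r (k+1) + ∑' k, ε * w p ε (r+(p+2)) k :=
          Summable.tsum_add ((hshift r).mul_left _) ((hs (r+(p+2))).mul_left _)
      _ = (1-ε) * (∑' k, w p ε r (k+1)) + ε * psi p ε (r+(p+2)) := by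
          rw [tsum_mul_left, tsum_mul_left]; rfl
  have h3 : psi p ε r = w p ε r 0 + ∑' k, w p ε r (k+1) := Summable.tsum_eq_zero_add (hs r)
  rw [h1, h2, w_succ_zero, h3]
  ring

/-- telescoping: `ψ(r+n) - ψ(r) = ∑_{i<n} δ(r+i)` with `δ r = ψ(r+1) - ψ r`. -/
lemma delta_rel (hε0 : 0 < ε) (hε1 : ε < 1) (hcap : ((p:ℝ)+2)*ε < 1) (r : ℕ) :
    (1-ε) * (psi p ε (r+1) - psi p ε r)
      = ε * ∑ i ∈ Finset.range (p+1), (psi p ε (r+1+i+1) - psi p ε (r+1+i)) := by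
  have hrec := psi_rec hε0 hε1 hcap r
  have htel : ∑ i ∈ Finset.range (p+2), (psi p ε (r+i+1) - psi p ε (r+i))
      = psi p ε (r+(p+2)) - psi p ε r := by
    have := Finset.sum_range_sub (fun i => psi p ε (r+i)) (p+2)
    simpa [add_assoc] using this
  have hsplit : ∑ i ∈ Finset.range (p+2), (psi p ε (r+i+1) - psi p ε (r+i))
      = (psi p ε (r+1) - psi p ε r)
        + ∑ i ∈ Finset.range (p+1), (psi p ε (r+1+i+1) - psi p ε (r+1+i)) := by
    rw [Finset.sum_range_succ' (fun i => psi p ε (r+i+1) - psi p ε (r+i)) (p+1)]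
    have hcong : ∀ i ∈ Finset.range (p+1),
        psi p ε (r+(i+1)+1) - psi p ε (r+(i+1)) = psi p ε (r+1+i+1) - psi p ε (r+1+i) := by
      intro i _
      rw [show r+(i+1)+1 = r+1+i+1 by ring, show r+(i+1) = r+1+i by ring]
    rw [Finset.sum_congr rfl hcong]
    simp [add_comm]
  have hmain : psi p ε (r+1) - psi p ε r = ε * (psi p ε (r+(p+2)) - psi p ε r) := by
    rw [hrec]; ring
  rw [← htel, hsplit] at hmain
  linear_combination hmain

/-- the inductive decay bound -/
lemma delta_bound (hε0 : 0 < ε) (hε1 : ε < 1) (hcap : ((p:ℝ)+2)*ε < 1) :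
    ∀ N r, |psi p ε (r+1) - psi p ε r| ≤
      (2 * (1 - th p ε)⁻¹ * Bc p ε) * (((p:ℝ)+2)*ε*(Bc p ε)^p)^N * (Bc p ε)^r := by
  have hB1 : 1 ≤ Bc p ε := one_le_B hε0 hcap
  have hB0 : 0 < Bc p ε := B_pos hε0 hcap
  have hth1 : th p ε < 1 := th_lt_one hε0 hcap
  have hth0 : 0 ≤ th p ε := th_nonneg hε0 hcap
  have hD0 : 0 < (1 - th p ε)⁻¹ := by
    apply inv_pos.mpr; linarith
  set D : ℝ := (1 - th p ε)⁻¹ with hD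
  set E : ℝ := 2 * D * Bc p ε with hE
  set γ : ℝ := ((p:ℝ)+2)*ε*(Bc p ε)^p with hγ
  have hγ0 : 0 ≤ γ := by positivity
  have hq0 : (0:ℝ) < 1 - ε := by linarith
  intro N
  induction N with
  | zero =>
    intro r
    simp only [pow_zero, mul_one]
    have hpsL : psi p ε (r+1) ≤ (Bc p ε)^(r+1) * D := psi_le hε0 hε1 hcap (r+1)
    have hpsR : psi p ε r ≤ (Bc p ε)^r * D := psi_le hε0 hε1 hcap r
    have h0L : 0 ≤ psi p ε (r+1) := psi_nonneg hε0 hε1 (r+1)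
    have h0R : 0 ≤ psi p ε r := psi_nonneg hε0 hε1 r
    have hBr : (Bc p ε)^r ≤ (Bc p ε)^(r+1) := by
      calc (Bc p ε)^r = (Bc p ε)^r * 1 := by ring
        _ ≤ (Bc p ε)^r * Bc p ε := by
            apply mul_le_mul_of_nonneg_left hB1 (by positivity)
        _ = (Bc p ε)^(r+1) := by rw [pow_succ]
    rw [abs_le]
    constructor
    · have : psi p ε r ≤ (Bc p ε)^(r+1) * D := le_trans hpsR (by nlinarith)
      have hEr : E * (Bc p ε)^r = 2 * D * (Bc p ε)^(r+1) := by
        rw [hE, pow_succ]; ring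
      nlinarith
    · have : psi p ε (r+1) ≤ (Bc p ε)^(r+1) * D := hpsL
      have hEr : E * (Bc p ε)^r = 2 * D * (Bc p ε)^(r+1) := by
        rw [hE, pow_succ]; ring
      nlinarith
  | succ N ih =>
    intro r
    have hrel := delta_rel hε0 hε1 hcap r
    have hsumb : |∑ i ∈ Finset.range (p+1), (psi p ε (r+1+i+1) - psi p ε (r+1+i))|
        ≤ ((p:ℝ)+1) * (E * γ^N * (Bc p ε)^(r+1+p)) := by
      calc |∑ i ∈ Finset.range (p+1), (psi p ε (r+1+i+1) - psi p ε (r+1+i))|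
          ≤ ∑ i ∈ Finset.range (p+1), |psi p ε (r+1+i+1) - psi p ε (r+1+i)| :=
            Finset.abs_sum_le_sum_abs _ _
        _ ≤ ∑ i ∈ Finset.range (p+1), E * γ^N * (Bc p ε)^(r+1+p) := by
            apply Finset.sum_le_sum
            intro i hi
            have hi' : i ≤ p := by
              simp only [Finset.mem_range] at hi; omega
            calc |psi p ε (r+1+i+1) - psi p ε (r+1+i)| ≤ E * γ^N * (Bc p ε)^(r+1+i) := ih _
              _ ≤ E * γ^N * (Bc p ε)^(r+1+p) := by
                  apply mul_le_mul_of_nonneg_left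
                  · exact pow_le_pow_right₀ hB1 (by omega)
                  · positivity
        _ = ((p:ℝ)+1) * (E * γ^N * (Bc p ε)^(r+1+p)) := by
            rw [Finset.sum_const, Finset.card_range]
            push_cast
            ring
    have hmain : (1-ε) * |psi p ε (r+1) - psi p ε r|
        ≤ ε * (((p:ℝ)+1) * (E * γ^N * (Bc p ε)^(r+1+p))) := by
      have habs : |(1-ε) * (psi p ε (r+1) - psi p ε r)|
          = (1-ε) * |psi p ε (r+1) - psi p ε r| := by
        rw [abs_mul, abs_of_pos hq0]
      calc (1-ε) * |psi p ε (r+1) - psi p ε r|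
          = |(1-ε) * (psi p ε (r+1) - psi p ε r)| := habs.symm
        _ = |ε * ∑ i ∈ Finset.range (p+1), (psi p ε (r+1+i+1) - psi p ε (r+1+i))| := by
            rw [hrel]
        _ = ε * |∑ i ∈ Finset.range (p+1), (psi p ε (r+1+i+1) - psi p ε (r+1+i))| := by
            rw [abs_mul, abs_of_pos hε0]
        _ ≤ ε * (((p:ℝ)+1) * (E * γ^N * (Bc p ε)^(r+1+p))) := by
            apply mul_le_mul_of_nonneg_left hsumb hε0.le
    -- now the exact algebra: ε (p+1) E γ^N B^{r+1+p} = (1-ε) E γ^{N+1} B^r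
    have hkey : ε * (((p:ℝ)+1) * (E * γ^N * (Bc p ε)^(r+1+p)))
        = (1-ε) * (E * γ^(N+1) * (Bc p ε)^r) := by
      have hBdef : ((p:ℝ)+1) * Bc p ε = ((p:ℝ)+2)*(1-ε) := by
        rw [Bc]
        field_simp
      have hBpow : (Bc p ε)^(r+1+p) = (Bc p ε)^r * (Bc p ε)^p * Bc p ε := by
        rw [show r+1+p = r+p+1 by ring, pow_succ, pow_add]
      rw [hBpow, pow_succ, hγ]
      linear_combination (ε * E * (((p:ℝ)+2)*ε*(Bc p ε)^p)^N * (Bc p ε)^r * (Bc p ε)^p) * hBdef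
    have h7 : (1-ε) * |psi p ε (r+1) - psi p ε r|
        ≤ (1-ε) * (E * γ^(N+1) * (Bc p ε)^r) := hmain.trans_eq hkey
    exact (mul_le_mul_iff_right₀ hq0).mp h7

lemma psi_const (hε0 : 0 < ε) (hε1 : ε < 1) (hcap : ((p:ℝ)+2)*ε < 1) (r : ℕ) :
    psi p ε r = psi p ε 0 := by
  have hdelta : ∀ r', psi p ε (r'+1) = psi p ε r' := by
    intro r'
    have hB0 : 0 < Bc p ε := B_pos hε0 hcap
    have hγ0 : 0 ≤ ((p:ℝ)+2)*ε*(Bc p ε)^p := by positivity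
    have hγ1 : ((p:ℝ)+2)*ε*(Bc p ε)^p < 1 := key_lt hε0 hcap (by omega)
    have htends : Filter.Tendsto
        (fun N => (2 * (1 - th p ε)⁻¹ * Bc p ε) * (((p:ℝ)+2)*ε*(Bc p ε)^p)^N * (Bc p ε)^r')
        Filter.atTop (nhds 0) := by
      have h := tendsto_pow_atTop_nhds_zero_of_lt_one hγ0 hγ1
      have h2 := (h.const_mul (2 * (1 - th p ε)⁻¹ * Bc p ε)).mul_const ((Bc p ε)^r')
      simpa using h2
    have hle : |psi p ε (r'+1) - psi p ε r'| ≤ 0 :=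
      ge_of_tendsto' htends (fun N => delta_bound hε0 hε1 hcap N r')
    have : psi p ε (r'+1) - psi p ε r' = 0 := by
      have := abs_nonneg (psi p ε (r'+1) - psi p ε r')
      have habs : |psi p ε (r'+1) - psi p ε r'| = 0 := le_antisymm hle this
      exact abs_eq_zero.mp habs
    linarith
  induction r with
  | zero => rfl
  | succ r ih => rw [hdelta r, ih]

/-- the key value computation: `ψ₀ = 1 + (p+2)ε ψ₀`. -/
lemma psi_zero_eq (hε0 : 0 < ε) (hε1 : ε < 1) (hcap : ((p:ℝ)+2)*ε < 1) :
    psi p ε 0 = 1 + ((p:ℝ)+2)*ε * psi p ε 0 := by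
  have hs := w_summable (p := p) hε0 hε1 hcap
  have hzero : w p ε 0 0 = 1 := by simp [w]
  have hsucc : ∀ k : ℕ, w p ε 0 (k+1) = ((p:ℝ)+2)*ε * w p ε (p+1) k := by
    intro k
    have hchoose : Nat.choose ((p+2)*(k+1)) (k+1) = (p+2) * Nat.choose ((p+2)*k + (p+1)) k := by
      have h := Nat.add_one_mul_choose_eq ((p+2)*k + (p+1)) k
      -- h : ((p+2)*k+(p+1)+1) * choose ((p+2)*k+(p+1)) k = choose ((p+2)*k+(p+1)+1) (k+1) * (k+1)
      have he : (p+2)*k + (p+1) + 1 = (p+2)*(k+1) := by ring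
      try simp only [Nat.succ_eq_add_one] at h
      rw [he] at h
      -- (p+2)*(k+1) * C(...) = C((p+2)(k+1), k+1) * (k+1)
      have h2 : (k+1) * ((p+2) * Nat.choose ((p+2)*k + (p+1)) k)
          = (k+1) * Nat.choose ((p+2)*(k+1)) (k+1) := by
        calc (k+1) * ((p+2) * Nat.choose ((p+2)*k + (p+1)) k)
            = ((p+2)*(k+1)) * Nat.choose ((p+2)*k + (p+1)) k := by ring
          _ = Nat.choose ((p+2)*(k+1)) (k+1) * (k+1) := by
              simpa using h
          _ = (k+1) * Nat.choose ((p+2)*(k+1)) (k+1) := by ring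
      exact (Nat.eq_of_mul_eq_mul_left (Nat.succ_pos k) h2).symm
    simp only [w]
    rw [show (p+2)*(k+1) + 0 = (p+2)*(k+1) by ring, hchoose]
    push_cast
    rw [show (p+1)*(k+1) + 0 = (p+1)*k + (p+1) by ring]
    rw [pow_add, pow_succ]
    ring
  have h1 : psi p ε 0 = w p ε 0 0 + ∑' k, w p ε 0 (k+1) := Summable.tsum_eq_zero_add (hs 0)
  have h2 : ∑' k, w p ε 0 (k+1) = ((p:ℝ)+2)*ε * psi p ε (p+1) := by
    calc ∑' k, w p ε 0 (k+1) = ∑' k, ((p:ℝ)+2)*ε * w p ε (p+1) k := by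
          congr 1; funext k; exact hsucc k
      _ = ((p:ℝ)+2)*ε * psi p ε (p+1) := tsum_mul_left
  calc psi p ε 0 = w p ε 0 0 + ∑' k, w p ε 0 (k+1) := h1
    _ = 1 + ((p:ℝ)+2)*ε * psi p ε (p+1) := by rw [h2, hzero]
    _ = 1 + ((p:ℝ)+2)*ε * psi p ε 0 := by rw [psi_const hε0 hε1 hcap (p+1)]

lemma psi_zero_value (hε0 : 0 < ε) (hε1 : ε < 1) (hcap : ((p:ℝ)+2)*ε < 1) :
    psi p ε 0 = (1 - ((p:ℝ)+2)*ε)⁻¹ := by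
  have h := psi_zero_eq hε0 hε1 hcap
  have hne : 1 - ((p:ℝ)+2)*ε ≠ 0 := by
    have : ((p:ℝ)+2)*ε < 1 := hcap
    intro hc
    nlinarith
  field_simp
  linarith [h]

end Main
end BusyTimeAux


/-- Mean busy time: for `0 < ε < 1`, `l ≥ 2`, `lε < 1`, with busy-time pmf
`P(S=s) = ((l-1)/s) ε^s (1-ε)^{s(l-1)} C((s-1)l, s-1)` for `s ≥ 1`,
`E(S) = ∑_{s≥1} s·P(S=s) = (l-1)ε(1-ε)^{l-1}/(1-lε)` (sum re-indexed via `s = k+1`). -/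
theorem busy_time_mean (l : ℕ) (hl : 2 ≤ l) (ε : ℝ)
    (hε0 : 0 < ε) (hε1 : ε < 1) (hcap : (l : ℝ) * ε < 1) :
    ∑' k : ℕ, ((k : ℝ) + 1) *
        (((l : ℝ) - 1) / ((k : ℝ) + 1) * ε ^ (k + 1)
          * (1 - ε) ^ ((k + 1) * (l - 1)) * (Nat.choose (k * l) k : ℝ))
      = ((l : ℝ) - 1) * ε * (1 - ε) ^ (l - 1) / (1 - (l : ℝ) * ε) := by
  obtain ⟨p, rfl⟩ : ∃ p, l = p + 2 := ⟨l - 2, by omega⟩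
  have hcap' : ((p:ℝ)+2)*ε < 1 := by push_cast at hcap; convert hcap using 2
  have hψ := BusyTimeAux.psi_zero_value (p := p) hε0 hε1 hcap'
  have hsum : ∀ k : ℕ, ((k : ℝ) + 1) *
        ((((p+2:ℕ) : ℝ) - 1) / ((k : ℝ) + 1) * ε ^ (k + 1)
          * (1 - ε) ^ ((k + 1) * ((p+2) - 1)) * (Nat.choose (k * (p+2)) k : ℝ))
      = (((p:ℝ)+1) * ε * (1-ε)^(p+1)) * BusyTimeAux.w p ε 0 k := by
    intro k
    have hk : (k:ℝ)+1 ≠ 0 := by positivity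
    simp only [BusyTimeAux.w]
    rw [show (p+2)-1 = p+1 from rfl,
        show (k+1)*(p+1) = ((p+1)*k) + (p+1) by ring,
        show k*(p+2) = (p+2)*k by ring,
        show (p+2)*k+0 = (p+2)*k by ring,
        show (p+1)*k+0 = (p+1)*k by ring]
    push_cast
    rw [pow_add]
    field_simp
    ring
  calc ∑' k : ℕ, ((k : ℝ) + 1) *
        ((((p+2:ℕ) : ℝ) - 1) / ((k : ℝ) + 1) * ε ^ (k + 1)
          * (1 - ε) ^ ((k + 1) * ((p+2) - 1)) * (Nat.choose (k * (p+2)) k : ℝ))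
      = ∑' k : ℕ, (((p:ℝ)+1) * ε * (1-ε)^(p+1)) * BusyTimeAux.w p ε 0 k := tsum_congr hsum
    _ = (((p:ℝ)+1) * ε * (1-ε)^(p+1)) * BusyTimeAux.psi p ε 0 := tsum_mul_left
    _ = (((p+2:ℕ) : ℝ) - 1) * ε * (1 - ε) ^ ((p+2) - 1) / (1 - ((p+2:ℕ) : ℝ) * ε) := by
        rw [hψ, show (p+2)-1 = p+1 from rfl]
        push_cast
        rw [div_eq_mul_inv]
        ring
end

section
/- Let 0 < ε < 1 and let l ≥ 2 be an integer with l·ε < 1. Let S have the distribution P(S=0) = (1-ε)^{l-1}, P(S=s) = ((l-1)/s) ε^s (1-ε)^{s(l-1)} C((s-1)l, s-1) for s ≥ 1. Then E(S²) = E(S) + l(l-1) ε² (1-ε)^l / (1-lε)³, where E(S) = (l-1)ε(1-ε)^{l-1}/(1-lε). -/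
open Finset
open scoped ENNReal NNReal

namespace BusyTime

/-- Gould polynomial (function form): `G_0 = 1`,
`G_k(x) = x (x+kt-1)(x+kt-2)⋯(x+kt-k+1) / k!` for `k ≥ 1`. -/
noncomputable def gf (t : ℕ) : ℕ → ℝ → ℝ
  | 0 => fun _ => 1
  | (k+1) => fun x =>
      (((k+1).factorial : ℝ))⁻¹ *
        (x * ∏ i ∈ range k, (x + ((k+1) * t : ℕ) - 1 - (i : ℕ)))

/-- Plain «binomial» polynomial `P_k(x) = C(x+kt, k)` (function form). -/
noncomputable def pf (t : ℕ) (k : ℕ) (x : ℝ) : ℝ :=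
  ((k.factorial : ℝ))⁻¹ * ∏ i ∈ range k, (x + (k * t : ℕ) - (i : ℕ))

lemma gf_zero_of_pos (t : ℕ) {k : ℕ} (hk : 0 < k) : gf t k 0 = 0 := by
  obtain ⟨m, rfl⟩ := Nat.exists_eq_add_of_lt hk
  simp [gf]

/-- The delta-operator property `G_{k+1}(x+1-t) - G_{k+1}(x-t) = G_k(x)`. -/
lemma gf_delta (t : ℕ) (k : ℕ) (x : ℝ) :
    gf t (k+1) (x + 1 - t) - gf t (k+1) (x - t) = gf t k x := by
  cases k with
  | zero => simp [gf]
  | succ m =>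
    have h1 : ∏ i ∈ range (m+1), (x + 1 - (t:ℝ) + ((m+2) * t : ℕ) - 1 - (i : ℕ))
        = (∏ i ∈ range m, (x + ((m+1) * t : ℕ) - 1 - (i : ℕ))) * (x + ((m+1) * t : ℕ)) := by
      rw [Finset.prod_range_succ']
      congr 1
      · refine Finset.prod_congr rfl fun i _ => ?_
        push_cast; ring
      · push_cast; ring
    have h2 : ∏ i ∈ range (m+1), (x - (t:ℝ) + ((m+2) * t : ℕ) - 1 - (i : ℕ))
        = (∏ i ∈ range m, (x + ((m+1) * t : ℕ) - 1 - (i : ℕ)))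
            * (x + ((m+1) * t : ℕ) - 1 - (m : ℕ)) := by
      rw [Finset.prod_range_succ]
      congr 1
      · refine Finset.prod_congr rfl fun i _ => ?_
        push_cast; ring
      · push_cast; ring
    show (((m+2).factorial : ℝ))⁻¹ * ((x + 1 - t) * ∏ i ∈ range (m+1), (x + 1 - (t:ℝ) + ((m+2) * t : ℕ) - 1 - (i : ℕ)))
        - (((m+2).factorial : ℝ))⁻¹ * ((x - t) * ∏ i ∈ range (m+1), (x - (t:ℝ) + ((m+2) * t : ℕ) - 1 - (i : ℕ)))
        = (((m+1).factorial : ℝ))⁻¹ * (x * ∏ i ∈ range m, (x + ((m+1) * t : ℕ) - 1 - (i : ℕ)))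
    rw [h1, h2]
    have hfac : ((m+2).factorial : ℝ) = (m+2) * ((m+1).factorial : ℝ) := by
      push_cast [Nat.factorial_succ]; ring
    have hne : ((m+1).factorial : ℝ) ≠ 0 := by positivity
    have hne2 : ((m+2) : ℝ) ≠ 0 := by positivity
    rw [hfac]
    field_simp
    push_cast
    try ring

/-- Polynomial version of `gf`. -/
noncomputable def gP (t : ℕ) : ℕ → Polynomial ℝ
  | 0 => 1
  | (k+1) =>
      Polynomial.C (((k+1).factorial : ℝ))⁻¹ *
        (Polynomial.X * ∏ i ∈ range k,
          (Polynomial.X + Polynomial.C ((((k+1) * t : ℕ) : ℝ) - 1 - (i : ℕ))))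

lemma gP_eval (t k : ℕ) (x : ℝ) : (gP t k).eval x = gf t k x := by
  cases k with
  | zero => simp [gP, gf]
  | succ m =>
    simp only [gP, gf, Polynomial.eval_mul, Polynomial.eval_C, Polynomial.eval_X,
      Polynomial.eval_prod, Polynomial.eval_add]
    congr 2
    refine Finset.prod_congr rfl fun i _ => ?_
    ring

lemma poly_eq_zero_of_nat_roots (H : Polynomial ℝ) (h : ∀ m : ℕ, H.eval (m : ℝ) = 0) :
    H = 0 := by
  refine H.eq_zero_of_infinite_isRoot ?_
  refine Set.Infinite.mono ?_ (Set.infinite_range_of_injective (f := (Nat.cast : ℕ → ℝ))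
    Nat.cast_injective)
  rintro x ⟨m, rfl⟩
  exact h m

/-- Gould convolution identity (Rothe–Hagen):
`∑_{k ≤ n} G_k(x) G_{n-k}(y) = G_n(x+y)`. -/
lemma gf_conv (t : ℕ) : ∀ n : ℕ, ∀ x y : ℝ,
    ∑ k ∈ range (n+1), gf t k x * gf t (n-k) y = gf t n (x + y) := by
  intro n
  induction n with
  | zero => intro x y; simp [gf]
  | succ n IH =>
    intro x y
    -- consider the polynomial H in x
    set H : Polynomial ℝ :=
      (∑ k ∈ range (n+2), gP t k * Polynomial.C (gf t (n+1-k) y))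
        - (gP t (n+1)).comp (Polynomial.X + Polynomial.C y) with hH
    have evalH : ∀ v : ℝ, H.eval v
        = (∑ k ∈ range (n+2), gf t k v * gf t (n+1-k) y) - gf t (n+1) (v + y) := by
      intro v
      simp [hH, Polynomial.eval_finset_sum, gP_eval, Polynomial.eval_comp]
    have shift : ∀ u : ℝ, H.eval (u + 1) = H.eval u := by
      have key : ∀ v : ℝ, H.eval (v + 1 - t) = H.eval (v - t) := by
        intro v
        rw [evalH, evalH]
        have hsum : ∀ w : ℝ, ∑ k ∈ range (n+2), gf t k w * gf t (n+1-k) y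
            = (∑ k ∈ range (n+1), gf t (k+1) w * gf t (n-k) y) + gf t (n+1) y := by
          intro w
          rw [Finset.sum_range_succ' (fun k => gf t k w * gf t (n+1-k) y) (n+1)]
          simp [gf]
        rw [hsum, hsum]
        have hdelta : ∑ k ∈ range (n+1), gf t (k+1) (v + 1 - t) * gf t (n-k) y
            - ∑ k ∈ range (n+1), gf t (k+1) (v - t) * gf t (n-k) y
            = ∑ k ∈ range (n+1), gf t k v * gf t (n-k) y := by
          rw [← Finset.sum_sub_distrib]
          refine Finset.sum_congr rfl fun k _ => ?_
          rw [← sub_mul, gf_delta]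
        have hgoal : gf t (n+1) (v + 1 - t + y) - gf t (n+1) (v - t + y)
            = gf t n (v + y) := by
          have := gf_delta t n (v + y)
          rw [show v + y + 1 - (t:ℝ) = v + 1 - t + y by ring,
            show v + y - (t:ℝ) = v - t + y by ring] at this
          exact this
        have := IH v y
        nlinarith [hdelta, hgoal, this]
      intro u
      have := key (u + t)
      rw [show u + (t:ℝ) + 1 - t = u + 1 by ring, show u + (t:ℝ) - t = u by ring] at this
      exact this
    have roots : ∀ m : ℕ, H.eval (m : ℝ) = 0 := by
      intro m
      induction m with
      | zero =>
        rw [Nat.cast_zero, evalH]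
        rw [Finset.sum_eq_single_of_mem 0 (by simp)]
        · simp [gf]
        · intro k _ hk
          rw [gf_zero_of_pos t (Nat.pos_of_ne_zero hk)]
          ring
      | succ m IHm =>
        rw [Nat.cast_succ, shift, IHm]
    have hH0 : H = 0 := poly_eq_zero_of_nat_roots H roots
    have := evalH x
    rw [hH0] at this
    simp only [Polynomial.eval_zero] at this
    linarith [this]

lemma pf_zero_eval (t : ℕ) (x : ℝ) : pf t 0 x = 1 := by simp [pf]

/-- `P_{k+1}(x) = G_{k+1}(x) + t ⬝ P_k(x+t-1)`. -/
lemma pf_succ (t k : ℕ) (x : ℝ) :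
    pf t (k+1) x = gf t (k+1) x + t * pf t k (x + t - 1) := by
  have h1 : ∏ i ∈ range (k+1), (x + ((k+1) * t : ℕ) - (i:ℕ))
      = (∏ i ∈ range k, (x + ((k+1) * t : ℕ) - 1 - (i : ℕ))) * (x + ((k+1) * t : ℕ)) := by
    rw [Finset.prod_range_succ']
    congr 1
    · refine Finset.prod_congr rfl fun i _ => ?_
      push_cast; ring
    · push_cast; ring
  have h2 : ∏ i ∈ range k, (x + (t:ℝ) - 1 + (k * t : ℕ) - (i:ℕ))
      = ∏ i ∈ range k, (x + ((k+1) * t : ℕ) - 1 - (i : ℕ)) := by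
    refine Finset.prod_congr rfl fun i _ => ?_
    push_cast; ring
  show (((k+1).factorial : ℝ))⁻¹ * ∏ i ∈ range (k+1), (x + ((k+1) * t : ℕ) - (i:ℕ))
      = gf t (k+1) x + t * (((k.factorial : ℝ))⁻¹ * ∏ i ∈ range k, (x + (t:ℝ) - 1 + (k * t : ℕ) - (i:ℕ)))
  rw [h1, h2]
  show _ = (((k+1).factorial : ℝ))⁻¹ *
        (x * ∏ i ∈ range k, (x + ((k+1) * t : ℕ) - 1 - (i : ℕ))) + _
  have hfac : ((k+1).factorial : ℝ) = (k+1) * (k.factorial : ℝ) := by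
    push_cast [Nat.factorial_succ]; ring
  have hne : ((k.factorial : ℝ)) ≠ 0 := by positivity
  have hne2 : ((k:ℝ)+1) ≠ 0 := by positivity
  rw [hfac]
  field_simp
  push_cast
  ring

/-- Expansion of the plain binomial polynomial in terms of Gould polynomials. -/
lemma pf_expand (t : ℕ) : ∀ k : ℕ, ∀ x : ℝ,
    pf t k x = ∑ j ∈ range (k+1), (t:ℝ)^j * gf t (k-j) (x + j * ((t:ℝ)-1)) := by
  intro k
  induction k with
  | zero => intro x; simp [pf, gf]
  | succ k IH =>
    intro x
    rw [pf_succ, IH]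
    rw [Finset.sum_range_succ' (fun j => (t:ℝ)^j * gf t (k+1-j) (x + j * ((t:ℝ)-1))) (k+1)]
    rw [Finset.mul_sum]
    have : ∀ j ∈ range (k+1), (t:ℝ) * ((t:ℝ)^j * gf t (k-j) (x + (t:ℝ) - 1 + j * ((t:ℝ)-1)))
        = (t:ℝ)^(j+1) * gf t (k+1-(j+1)) (x + ((j:ℝ)+1) * ((t:ℝ)-1)) := by
      intro j _
      rw [show x + (t:ℝ) - 1 + j * ((t:ℝ)-1) = x + ((j:ℝ)+1) * ((t:ℝ)-1) by ring]
      rw [show k + 1 - (j+1) = k - j from by omega]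
      ring
    rw [Finset.sum_congr rfl this]
    have h0 : (t:ℝ)^0 * gf t (k+1-0) (x + (0:ℕ) * ((t:ℝ)-1)) = gf t (k+1) x := by
      norm_num
    rw [h0]
    have : ∀ j ∈ range (k+1), (t:ℝ)^(j+1) * gf t (k+1-(j+1)) (x + ((j:ℝ)+1) * ((t:ℝ)-1))
        = (t:ℝ)^(j+1) * gf t (k+1-(j+1)) (x + ((j+1:ℕ):ℝ) * ((t:ℝ)-1)) := by
      intro j _; push_cast; ring_nf
    rw [Finset.sum_congr rfl this]
    ring

/-- Triangular double-sum swap. -/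
lemma tri_swap (f : ℕ → ℕ → ℝ) (n : ℕ) :
    ∑ k ∈ range (n+1), ∑ j ∈ range (n+1-k), f k j
      = ∑ j ∈ range (n+1), ∑ k ∈ range (n+1-j), f k j := by
  rw [Finset.sum_sigma', Finset.sum_sigma']
  refine Finset.sum_nbij' (fun p => ⟨p.2, p.1⟩) (fun p => ⟨p.2, p.1⟩) ?_ ?_ ?_ ?_ ?_
  · rintro ⟨a, b⟩ h
    simp only [Finset.mem_sigma, Finset.mem_range] at h ⊢
    omega
  · rintro ⟨a, b⟩ h
    simp only [Finset.mem_sigma, Finset.mem_range] at h ⊢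
    omega
  · rintro ⟨a, b⟩ _; rfl
  · rintro ⟨a, b⟩ _; rfl
  · rintro ⟨a, b⟩ _; rfl

/-- Mixed convolution. -/
lemma mix (t n : ℕ) (x y : ℝ) :
    ∑ k ∈ range (n+1), gf t k x * pf t (n-k) y
      = ∑ i ∈ range (n+1), (t:ℝ)^i * gf t (n-i) (x + y + i * ((t:ℝ)-1)) := by
  have step1 : ∑ k ∈ range (n+1), gf t k x * pf t (n-k) y
      = ∑ k ∈ range (n+1), ∑ j ∈ range (n+1-k),
          gf t k x * ((t:ℝ)^j * gf t (n-k-j) (y + j * ((t:ℝ)-1))) := by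
    refine Finset.sum_congr rfl fun k hk => ?_
    rw [Finset.mem_range] at hk
    rw [pf_expand, show n - k + 1 = n + 1 - k from by omega, Finset.mul_sum]
  rw [step1, tri_swap (fun k j => gf t k x * ((t:ℝ)^j * gf t (n-k-j) (y + j * ((t:ℝ)-1)))) n]
  refine Finset.sum_congr rfl fun j hj => ?_
  rw [Finset.mem_range] at hj
  have hrw : ∀ k ∈ range (n+1-j),
      gf t k x * ((t:ℝ)^j * gf t (n-k-j) (y + j * ((t:ℝ)-1)))
        = (t:ℝ)^j * (gf t k x * gf t ((n-j)-k) (y + j * ((t:ℝ)-1))) := by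
    intro k _
    rw [show n - k - j = n - j - k from by omega]
    ring
  rw [Finset.sum_congr rfl hrw, ← Finset.mul_sum,
    show n + 1 - j = (n - j) + 1 from by omega,
    gf_conv t (n-j) x (y + j * ((t:ℝ)-1))]
  rw [show x + (y + (j:ℝ) * ((t:ℝ)-1)) = x + y + j * ((t:ℝ)-1) by ring]

/-- Value of Gould polynomials at the special points `-(r(t-1)+1)`. -/
lemma gf_special (t r : ℕ) (v : ℝ) (hv : v = -((r:ℝ) * ((t:ℝ)-1) + 1)) :
    gf t r v = if r = 0 then 1 else if r = 1 then -(t:ℝ) else 0 := by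
  match r with
  | 0 => simp [gf]
  | 1 => simp [gf, hv]
  | (m+2) =>
    simp only [Nat.succ_ne_zero, if_false]
    show gf t (m+2) v = 0
    have hz : v + (((m+2) * t : ℕ):ℝ) - 1 - (m:ℕ) = 0 := by
      rw [hv]; push_cast; ring
    show (((m+2).factorial : ℝ))⁻¹ *
        (v * ∏ i ∈ range (m+1), (v + (((m+2) * t : ℕ):ℝ) - 1 - (i : ℕ))) = 0
    rw [Finset.prod_eq_zero (Finset.self_mem_range_succ m) hz]
    ring

/-- The key descent lemma. -/
lemma descent (t N : ℕ) : ∀ j : ℕ, j ≤ N →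
    ∑ k ∈ range (j+1), pf t k (((N-j : ℕ):ℝ) * ((t:ℝ)-1)) * pf t (j-k) ((N:ℝ) - 1 - N*t)
      = (t:ℝ)^j := by
  intro j
  induction j with
  | zero => intro _; simp [pf]
  | succ j IH =>
    intro hj
    set y : ℝ := (N:ℝ) - 1 - N*t with hy
    set x : ℝ := ((N-(j+1) : ℕ):ℝ) * ((t:ℝ)-1) with hx
    have hcast : ((N-(j+1) : ℕ):ℝ) = (N:ℝ) - (j:ℝ) - 1 := by
      push_cast [Nat.cast_sub hj]; ring
    have hx1 : x + (t:ℝ) - 1 = ((N-j : ℕ):ℝ) * ((t:ℝ)-1) := by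
      rw [hx, hcast, Nat.cast_sub (by omega : j ≤ N)]
      ring
    rw [Finset.sum_range_succ' (fun k => pf t k x * pf t (j+1-k) y) (j+1)]
    have hsplit : ∀ k ∈ range (j+1),
        pf t (k+1) x * pf t (j+1-(k+1)) y
          = gf t (k+1) x * pf t (j-k) y + (t:ℝ) * (pf t k (((N-j : ℕ):ℝ) * ((t:ℝ)-1)) * pf t (j-k) y) := by
      intro k _
      rw [show j + 1 - (k+1) = j - k from by omega, pf_succ, hx1]
      ring
    rw [Finset.sum_congr rfl hsplit, Finset.sum_add_distrib, ← Finset.mul_sum,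
      IH (by omega)]
    -- remaining: the mixed sum plus the k = 0 term vanishes
    have hmix : ∑ k ∈ range (j+1), gf t (k+1) x * pf t (j-k) y + pf t 0 x * pf t (j+1) y
        = ∑ k ∈ range (j+2), gf t k x * pf t (j+1-k) y := by
      rw [Finset.sum_range_succ' (fun k => gf t k x * pf t (j+1-k) y) (j+1)]
      congr 1
      · refine Finset.sum_congr rfl fun k _ => ?_
        rw [show j + 1 - (k+1) = j - k from by omega]
      · show pf t 0 x * pf t (j+1) y = gf t 0 x * pf t (j+1-0) y
        simp [pf, gf]
    have hzero : ∑ k ∈ range (j+2), gf t k x * pf t (j+1-k) y = 0 := by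
      rw [mix t (j+1) x y]
      have harg : ∀ i ∈ range (j+2),
          (t:ℝ)^i * gf t (j+1-i) (x + y + i * ((t:ℝ)-1))
            = (t:ℝ)^i * (if j+1-i = 0 then (1:ℝ) else if j+1-i = 1 then -(t:ℝ) else 0) := by
        intro i hi
        rw [Finset.mem_range] at hi
        congr 1
        refine gf_special t (j+1-i) _ ?_
        rw [hx, hy, hcast, Nat.cast_sub (by omega : i ≤ j + 1)]
        push_cast
        ring
      rw [Finset.sum_congr rfl harg]
      rw [Finset.sum_range_succ, Finset.sum_range_succ]
      have hbulk : ∀ i ∈ range j,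
          (t:ℝ)^i * (if j+1-i = 0 then (1:ℝ) else if j+1-i = 1 then -(t:ℝ) else 0) = 0 := by
        intro i hi
        rw [Finset.mem_range] at hi
        rw [if_neg (by omega), if_neg (by omega)]
        ring
      rw [Finset.sum_congr rfl hbulk]
      simp only [Finset.sum_const_zero]
      rw [if_neg (by omega), if_pos (by omega), if_pos (by omega)]
      ring
    calc ∑ k ∈ range (j+1), gf t (k+1) x * pf t (j-k) y + (t:ℝ) * (t:ℝ)^j + pf t 0 x * pf t (j+1) y
        = (∑ k ∈ range (j+1), gf t (k+1) x * pf t (j-k) y + pf t 0 x * pf t (j+1) y)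
            + (t:ℝ) * (t:ℝ)^j := by ring
      _ = 0 + (t:ℝ) * (t:ℝ)^j := by rw [hmix, hzero]
      _ = (t:ℝ)^(j+1) := by ring

lemma prod_desc (M k : ℕ) : ∏ i ∈ range k, ((M:ℝ) - (i:ℕ)) = (M.descFactorial k : ℝ) := by
  induction k with
  | zero => simp
  | succ k IH =>
    rw [Finset.prod_range_succ, IH, Nat.descFactorial_succ]
    rcases le_or_gt (k+1) M with h | h
    · push_cast [Nat.cast_sub (by omega : k ≤ M)]
      ring
    · rcases Nat.lt_or_ge M k with h2 | h2
      · rw [Nat.descFactorial_eq_zero_iff_lt.2 h2]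
        push_cast
        ring
      · have : M = k := by omega
        subst this
        simp

lemma pf_choose (t k : ℕ) : pf t k 0 = (Nat.choose (k*t) k : ℝ) := by
  have : ∏ i ∈ range k, ((0:ℝ) + ((k * t : ℕ):ℝ) - (i:ℕ)) = ((k*t).descFactorial k : ℝ) := by
    rw [← prod_desc]
    exact Finset.prod_congr rfl fun i _ => by ring
  rw [pf, this, Nat.descFactorial_eq_factorial_mul_choose]
  have hne : ((k.factorial : ℝ)) ≠ 0 := by positivity
  push_cast
  field_simp

lemma pf_neg (t m B : ℕ) (x : ℝ) (h : (B:ℝ) = (m:ℝ) - 1 - x - ((m*t : ℕ):ℝ)) :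
    pf t m x = (-1)^m * (Nat.choose B m : ℝ) := by
  have hstep : ∀ i ∈ range m, x + ((m*t : ℕ):ℝ) - (i:ℕ)
      = (-1) * ((B:ℝ) - ((m-1-i : ℕ):ℝ)) := by
    intro i hi
    rw [Finset.mem_range] at hi
    have : ((m-1-i : ℕ):ℝ) = (m:ℝ) - 1 - (i:ℝ) := by
      push_cast [Nat.cast_sub (by omega : 1 + i ≤ m), Nat.sub_sub]
      ring
    rw [this, h]
    ring
  rw [pf, Finset.prod_congr rfl hstep, Finset.prod_mul_distrib, Finset.prod_const]
  simp only [Finset.card_range]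
  rw [Finset.prod_range_reflect (fun i => (B:ℝ) - (i:ℕ)) m, prod_desc,
    Nat.descFactorial_eq_factorial_mul_choose]
  have hne : ((m.factorial : ℝ)) ≠ 0 := by positivity
  push_cast
  field_simp

/-- The key finite identity:
`∑_{k=0}^n (-1)^{n-k} C(kl, k) C(k(l-1), n-k) = l^n`. -/
lemma id_real (l : ℕ) (hl : 2 ≤ l) (n : ℕ) :
    ∑ k ∈ range (n+1),
        (Nat.choose (k*l) k : ℝ) * ((-1)^(n-k) * (Nat.choose (k*(l-1)) (n-k) : ℝ))
      = (l:ℝ)^n := by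
  have hd := descent l n n le_rfl
  rw [Nat.sub_self] at hd
  rw [show ((0:ℕ):ℝ) * ((l:ℝ)-1) = 0 by ring] at hd
  rw [← hd]
  refine Finset.sum_congr rfl fun k hk => ?_
  rw [Finset.mem_range] at hk
  rw [pf_choose]
  congr 1
  refine (pf_neg l (n-k) (k*(l-1)) _ ?_).symm
  push_cast [Nat.cast_sub (by omega : k ≤ n), Nat.cast_sub (by omega : 1 ≤ l)]
  ring

/-! ### Analytic part -/

noncomputable def cc (l k : ℕ) : ℝ := (Nat.choose (k*l) k : ℝ)

noncomputable def zf (l : ℕ) (e : ℝ) : ℝ := e * (1-e)^(l-1)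

noncomputable def rho (l : ℕ) : ℝ := ((l:ℝ)-1)^(l-1) / (l:ℝ)^l

section Bounds

variable {l : ℕ} (hl : 2 ≤ l)

include hl

lemma A_pos : (0:ℝ) < (l:ℝ) - 1 := by
  have : (2:ℝ) ≤ l := by exact_mod_cast hl
  linarith

lemma rho_pos : 0 < rho l := by
  have h1 := A_pos hl
  have h2 : (0:ℝ) < l := by positivity
  exact div_pos (pow_pos h1 _) (pow_pos h2 _)

lemma nat_bound (k : ℕ) :
    (k*l).choose k * (l-1)^(k*(l-1)) ≤ l^(k*l) := by
  have hsplit : k * l = k*(l-1) + k := by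
    conv_lhs => rw [show l = (l-1)+1 from by omega]
    rw [Nat.mul_succ]
  have h1 : k*l - k*(l-1) = k := by omega
  have hsymm : (k*l).choose (k*(l-1)) = (k*l).choose k := by
    have h2 := Nat.choose_symm (n := k*l) (k := k*(l-1)) (by omega)
    rw [h1] at h2
    exact h2.symm
  calc (k*l).choose k * (l-1)^(k*(l-1))
      = (l-1)^(k*(l-1)) * 1^(k*l - k*(l-1)) * (k*l).choose (k*(l-1)) := by
        rw [hsymm, one_pow]; ring
    _ ≤ ∑ m ∈ range (k*l+1), (l-1)^m * 1^(k*l - m) * (k*l).choose m := by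
        refine Finset.single_le_sum (f := fun m => (l-1)^m * 1^(k*l - m) * (k*l).choose m)
          (fun i _ => Nat.zero_le _) ?_
        rw [Finset.mem_range]; omega
    _ = ((l-1) + 1)^(k*l) := (add_pow (l-1) 1 (k*l)).symm
    _ = l^(k*l) := by congr 1; omega

lemma cc_rho_le_one (k : ℕ) : cc l k * rho l ^ k ≤ 1 := by
  have hA := A_pos hl
  have hL : (0:ℝ) < l := by positivity
  have hcast : ((k*l).choose k : ℝ) * ((l:ℝ)-1)^(k*(l-1)) ≤ (l:ℝ)^(k*l) := by
    have := nat_bound hl k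
    have h2 : (((k*l).choose k * (l-1)^(k*(l-1)) : ℕ) : ℝ) ≤ ((l^(k*l) : ℕ) : ℝ) := by
      exact_mod_cast this
    push_cast [Nat.cast_sub (by omega : 1 ≤ l)] at h2
    exact h2
  rw [cc, rho, div_pow, ← pow_mul, ← pow_mul, ← mul_div_assoc]
  rw [div_le_one (by positivity)]
  calc ((k*l).choose k : ℝ) * ((l:ℝ)-1)^((l-1)*k)
      = ((k*l).choose k : ℝ) * ((l:ℝ)-1)^(k*(l-1)) := by rw [mul_comm (l-1) k]
    _ ≤ (l:ℝ)^(k*l) := hcast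
    _ = (l:ℝ)^(l*k) := by rw [mul_comm k l]

lemma cc_z_le (k : ℕ) {z : ℝ} (hz : 0 ≤ z) : cc l k * z^k ≤ (z / rho l)^k := by
  have hρ := rho_pos hl
  have h1 := cc_rho_le_one hl k
  have h2 : (z / rho l)^k = z^k / (rho l)^k := div_pow z _ k
  rw [h2, le_div_iff₀ (by positivity)]
  calc cc l k * z^k * (rho l)^k = (cc l k * (rho l)^k) * z^k := by ring
    _ ≤ 1 * z^k := by
        exact mul_le_mul_of_nonneg_right h1 (by positivity)
    _ = z^k := by ring

lemma zf_hasDerivAt (e : ℝ) :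
    HasDerivAt (zf l) ((1-e)^(l-2) * (1 - l*e)) e := by
  have h1 : HasDerivAt (fun x : ℝ => 1 - x) (-1) e := by
    simpa using (hasDerivAt_id' e).const_sub (1:ℝ)
  have h2 : HasDerivAt (fun x : ℝ => (1-x)^(l-1))
      (((l-1 : ℕ):ℝ) * (1-e)^(l-1-1) * (-1)) e :=
    (hasDerivAt_pow (l-1) (1-e)).comp e h1
  have h3 := (hasDerivAt_id e).mul h2
  have harg : (1:ℝ) * (1-e)^(l-1) + id e * (((l-1 : ℕ):ℝ) * (1-e)^(l-1-1) * (-1))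
      = (1-e)^(l-2) * (1 - l*e) := by
    have e1 : l - 1 - 1 = l - 2 := by omega
    have e2 : (1-e)^(l-1) = (1-e)^(l-2) * (1-e) := by
      rw [← pow_succ]; congr 1; omega
    rw [e1, e2, Nat.cast_sub (by omega : 1 ≤ l)]
    push_cast
    simp only [id_eq]
    ring
  exact harg ▸ h3

lemma half_bound : (1:ℝ)/l ≤ 1/2 := by
  have : (2:ℝ) ≤ l := by exact_mod_cast hl
  rw [div_le_div_iff₀ (by positivity) (by norm_num)]
  linarith

lemma zf_mono : StrictMonoOn (zf l) (Set.Icc 0 (1/(l:ℝ))) := by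
  have hL : (0:ℝ) < l := by positivity
  refine strictMonoOn_of_deriv_pos (convex_Icc _ _) ?_ ?_
  · exact (continuous_id.mul ((continuous_const.sub continuous_id).pow _)).continuousOn
  · intro x hx
    rw [interior_Icc, Set.mem_Ioo] at hx
    rw [(zf_hasDerivAt hl x).deriv]
    have hx2 : x < 1 := lt_of_lt_of_le hx.2 (le_trans (half_bound hl) (by norm_num))
    have hlx : (l:ℝ) * x < 1 := by
      calc (l:ℝ) * x < (l:ℝ) * (1/l) := mul_lt_mul_of_pos_left hx.2 hL
        _ = 1 := by field_simp
    have h1 : (0:ℝ) < 1 - x := by linarith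
    have h2 : (0:ℝ) < 1 - l*x := by linarith
    positivity

lemma zf_at_inv : zf l (1/(l:ℝ)) = rho l := by
  have hL : (0:ℝ) < l := by positivity
  have h : (1:ℝ) - 1/l = ((l:ℝ)-1)/l := by field_simp
  have hpow : (l:ℝ)^l = (l:ℝ)^(l-1) * l := by
    rw [← pow_succ]; congr 1; omega
  rw [zf, h, div_pow, rho, hpow]
  field_simp

lemma zf_lt_rho {e : ℝ} (he : 0 ≤ e) (he2 : e < 1/(l:ℝ)) : zf l e < rho l := by
  rw [← zf_at_inv hl]
  exact zf_mono hl (Set.mem_Icc.2 ⟨he, le_of_lt he2⟩)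
    (Set.mem_Icc.2 ⟨by positivity, le_refl _⟩) he2

lemma zf_nonneg {e : ℝ} (he : 0 ≤ e) (he1 : e ≤ 1) : 0 ≤ zf l e := by
  have : (0:ℝ) ≤ 1 - e := by linarith
  rw [zf]; positivity

end Bounds

section Key

variable {l : ℕ} (hl : 2 ≤ l)

lemma pow_pack (e a : ℝ) (l k : ℕ) : e^k * a^(k*(l-1)) = (e * a^(l-1))^k := by
  rw [mul_pow, mul_comm k (l-1), pow_mul]

include hl

lemma rho_le_inv : rho l ≤ 1/(l:ℝ) := by
  have hA := A_pos hl
  have hL : (0:ℝ) < l := by positivity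
  have hAL : (l:ℝ) - 1 ≤ l := by linarith
  have hpow : (l:ℝ)^l = (l:ℝ)^(l-1) * l := by
    rw [← pow_succ]; congr 1; omega
  rw [rho, hpow, div_le_div_iff₀ (by positivity) hL]
  calc ((l:ℝ)-1)^(l-1) * l ≤ (l:ℝ)^(l-1) * l := by
        have := pow_le_pow_left₀ hA.le hAL (l-1)
        exact mul_le_mul_of_nonneg_right this hL.le
    _ = 1 * ((l:ℝ)^(l-1) * l) := by ring

lemma summable_main {e : ℝ} (he : 0 ≤ e) (he2 : e < 1/(l:ℝ)) :
    Summable (fun k => cc l k * (zf l e)^k) := by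
  have hρ := rho_pos hl
  have he1 : e ≤ 1 := le_trans he2.le (le_trans (half_bound hl) (by norm_num))
  have hz := zf_nonneg hl he he1
  have hq1 : zf l e / rho l < 1 := (div_lt_one hρ).2 (zf_lt_rho hl he he2)
  have hq0 : 0 ≤ zf l e / rho l := by positivity
  refine Summable.of_nonneg_of_le (fun k : ℕ => ?_) (fun k => cc_z_le hl k hz)
    (summable_geometric_of_lt_one hq0 hq1)
  have : (0:ℝ) ≤ cc l k := by rw [cc]; positivity
  positivity

lemma summable_kmain {e : ℝ} (he : 0 ≤ e) (he2 : e < 1/(l:ℝ)) :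
    Summable (fun k : ℕ => (k:ℝ) * (cc l k * (zf l e)^k)) := by
  have hρ := rho_pos hl
  have he1 : e ≤ 1 := le_trans he2.le (le_trans (half_bound hl) (by norm_num))
  have hz := zf_nonneg hl he he1
  have hq1 : zf l e / rho l < 1 := (div_lt_one hρ).2 (zf_lt_rho hl he he2)
  have hq0 : 0 ≤ zf l e / rho l := by positivity
  have hs : Summable (fun k : ℕ => (k:ℝ)^1 * (zf l e / rho l)^k) :=
    summable_pow_mul_geometric_of_norm_lt_one 1 (by
      rw [Real.norm_eq_abs, abs_of_nonneg hq0]; exact hq1)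
  simp only [pow_one] at hs
  refine Summable.of_nonneg_of_le (fun k : ℕ => ?_) (fun k : ℕ => ?_) hs
  · have : (0:ℝ) ≤ cc l k := by rw [cc]; positivity
    positivity
  · exact mul_le_mul_of_nonneg_left (cc_z_le hl k hz) (Nat.cast_nonneg k)

lemma rho_div_small : rho l / 2^l ≤ 1/(l:ℝ) := by
  have hρ := rho_pos hl
  have h2 : (1:ℝ) ≤ 2^l := one_le_pow₀ (by norm_num)
  have h3 : rho l / 2^l ≤ rho l := by
    rw [div_le_iff₀ (by positivity)]
    nlinarith
  exact le_trans h3 (rho_le_inv hl)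

lemma key_small {e : ℝ} (he : 0 < e) (he2 : e < rho l / 2^l) :
    ∑' k, cc l k * (zf l e)^k = (1 - (l:ℝ)*e)⁻¹ := by
  have hρ := rho_pos hl
  have hL : (0:ℝ) < l := by positivity
  have h2p : (1:ℝ) ≤ 2^l := one_le_pow₀ (by norm_num)
  have hrle : rho l / 2^l ≤ rho l := by
    rw [div_le_iff₀ (by positivity)]
    nlinarith
  have heinv : e < 1/(l:ℝ)  := lt_of_lt_of_le he2 (le_trans hrle (rho_le_inv hl))
  have he1 : e ≤ 1 := le_trans heinv.le (le_trans (half_bound hl) (by norm_num))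
  have hle1 : (l:ℝ) * e < 1 := by
    calc (l:ℝ) * e < (l:ℝ) * (1/l) := mul_lt_mul_of_pos_left heinv hL
      _ = 1 := by field_simp
  -- the double-indexed function
  set f : ℕ × ℕ → ℝ := fun p =>
    cc l p.1 * ((Nat.choose (p.1*(l-1)) p.2 : ℝ) * (-1)^p.2 * e^(p.1+p.2)) with hf
  set g : ℕ × ℕ → ℝ := fun p =>
    cc l p.1 * ((Nat.choose (p.1*(l-1)) p.2 : ℝ) * e^(p.1+p.2)) with hg
  have hg0 : ∀ p, 0 ≤ g p := by
    intro p
    have : (0:ℝ) ≤ cc l p.1 := by rw [cc]; positivity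
    positivity
  have habs : ∀ p, |f p| = g p := by
    intro p
    rw [hf, hg]
    simp only [abs_mul, abs_pow, abs_neg, abs_one, one_pow, mul_one, Nat.abs_cast,
      abs_of_nonneg (show (0:ℝ) ≤ cc l p.1 from by rw [cc]; positivity),
      abs_of_nonneg he.le]
  have hrow0 : ∀ k j, k*(l-1) < j → g (k, j) = 0 := by
    intro k j hj
    rw [hg]
    simp [Nat.choose_eq_zero_of_lt hj]
  have hrowsum : ∀ k : ℕ, ∑' j, g (k, j) = cc l k * (e * (1+e)^(l-1))^k := by
    intro k
    rw [tsum_eq_sum (s := range (k*(l-1)+1)) (fun j hj => hrow0 k j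
      (by rw [Finset.mem_range] at hj; omega))]
    have : ∀ j ∈ range (k*(l-1)+1), g (k, j)
        = (cc l k * e^k) * (e^j * 1^(k*(l-1)-j) * (Nat.choose (k*(l-1)) j : ℝ)) := by
      intro j _
      rw [hg]
      simp only [one_pow]
      rw [pow_add]
      ring
    rw [Finset.sum_congr rfl this, ← Finset.mul_sum, ← add_pow e 1 (k*(l-1))]
    rw [← pow_pack e (1+e) l k]
    rw [show e + 1 = 1 + e by ring]
    ring
  have hw : 0 ≤ e * (1+e)^(l-1) := by positivity
  have hwρ : e * (1+e)^(l-1) < rho l := by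
    have h1 : (1+e)^(l-1) ≤ 2^(l-1) := by
      refine pow_le_pow_left₀ (by positivity) (by linarith) _
    have h2 : (2:ℝ)^l = 2^(l-1) * 2 := by rw [← pow_succ]; congr 1; omega
    have h3 : e * (1+e)^(l-1) ≤ e * 2^(l-1) :=
      mul_le_mul_of_nonneg_left h1 he.le
    have h4 : e * 2^(l-1) < (rho l / 2^l) * 2^(l-1) :=
      mul_lt_mul_of_pos_right he2 (by positivity)
    have h5 : (rho l / 2^l) * 2^(l-1) = rho l / 2 := by
      rw [h2]; field_simp
    linarith
  have hgcol : Summable (fun k => cc l k * (e * (1+e)^(l-1))^k) := by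
    have hq1 : e * (1+e)^(l-1) / rho l < 1 := (div_lt_one hρ).2 hwρ
    have hq0 : 0 ≤ e * (1+e)^(l-1) / rho l := by positivity
    refine Summable.of_nonneg_of_le (fun k : ℕ => ?_) (fun k => cc_z_le hl k hw)
      (summable_geometric_of_lt_one hq0 hq1)
    have : (0:ℝ) ≤ cc l k := by rw [cc]; positivity
    positivity
  have hgsum : Summable g := by
    refine (summable_prod_of_nonneg hg0).2 ⟨fun k => ?_, ?_⟩
    · exact summable_of_ne_finset_zero (s := range (k*(l-1)+1)) (fun j hj => hrow0 k j
        (by rw [Finset.mem_range] at hj; omega))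
    · refine Summable.congr hgcol fun k => ?_
      exact (hrowsum k).symm
  have hfsum : Summable f := by
    refine Summable.of_abs ?_
    exact hgsum.congr fun p => (habs p).symm
  -- first evaluation : row sums give the main series
  have hfrow : ∀ k : ℕ, ∑' j, f (k, j) = cc l k * (zf l e)^k := by
    intro k
    rw [tsum_eq_sum (s := range (k*(l-1)+1)) (fun j hj => by
      rw [Finset.mem_range] at hj
      rw [hf]
      simp [Nat.choose_eq_zero_of_lt (show k*(l-1) < j by omega)])]
    have : ∀ j ∈ range (k*(l-1)+1), f (k, j)
        = (cc l k * e^k) * ((-e)^j * 1^(k*(l-1)-j) * (Nat.choose (k*(l-1)) j : ℝ)) := by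
      intro j _
      rw [hf]
      simp only [one_pow]
      rw [pow_add, neg_pow]
      ring
    rw [Finset.sum_congr rfl this, ← Finset.mul_sum, ← add_pow (-e) 1 (k*(l-1))]
    rw [show -e + 1 = 1 - e by ring, zf, ← pow_pack]
    ring
  have heval1 : ∑' p, f p = ∑' k, cc l k * (zf l e)^k := by
    rw [Summable.tsum_prod' hfsum (fun k => hfsum.prod_factor k)]
    exact tsum_congr hfrow
  -- second evaluation : antidiagonal grouping
  have heval2 : ∑' p, f p = ∑' n : ℕ, ((l:ℝ)*e)^n := by
    rw [← Finset.HasAntidiagonal.sigmaAntidiagonalEquivProd.tsum_eq f]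
    have hF : Summable (fun x : (Σ n : ℕ, {p // p ∈ Finset.HasAntidiagonal.antidiagonal n}) =>
        f (Finset.HasAntidiagonal.sigmaAntidiagonalEquivProd x)) := by
      exact Finset.HasAntidiagonal.sigmaAntidiagonalEquivProd.summable_iff.2 hfsum
    rw [Summable.tsum_sigma hF]
    refine tsum_congr fun n => ?_
    have : ∀ c : {x // x ∈ Finset.HasAntidiagonal.antidiagonal n},
        f (Finset.HasAntidiagonal.sigmaAntidiagonalEquivProd ⟨n, c⟩) = f c.1 := fun c => rfl
    rw [tsum_congr this, Finset.tsum_subtype (Finset.HasAntidiagonal.antidiagonal n) f,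
      Finset.Nat.sum_antidiagonal_eq_sum_range_succ_mk f n]
    have hterm : ∀ k ∈ range (n+1), f (k, n-k)
        = ((Nat.choose (k*l) k : ℝ) * ((-1)^(n-k) * (Nat.choose (k*(l-1)) (n-k) : ℝ))) * e^n := by
      intro k hk
      rw [Finset.mem_range] at hk
      rw [hf]
      simp only
      rw [show k + (n-k) = n from by omega, cc]
      ring
    rw [Finset.sum_congr rfl hterm, ← Finset.sum_mul, id_real l hl n, mul_pow]
  rw [← heval1, heval2]
  exact tsum_geometric_of_lt_one (by positivity) hle1

lemma key_all {e : ℝ} (he : 0 < e) (he2 : e < 1/(l:ℝ)) :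
    ∑' k, cc l k * (zf l e)^k = (1 - (l:ℝ)*e)⁻¹ := by
  have hρ := rho_pos hl
  have hL : (0:ℝ) < l := by positivity
  have hcc0 : ∀ k, 0 ≤ cc l k := fun k => by rw [cc]; positivity
  set c : ℕ → ℝ := fun k => cc l k with hc
  set p : FormalMultilinearSeries ℝ ℝ ℝ := FormalMultilinearSeries.ofScalars ℝ c with hp
  have hnorm : ∀ n, ‖p n‖ = c n := by
    intro n
    rw [hp, FormalMultilinearSeries.ofScalars_norm, Real.norm_eq_abs, abs_of_nonneg (hcc0 n)]
  have hrad : ((rho l).toNNReal : ℝ≥0∞) ≤ p.radius := by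
    refine p.le_radius_of_bound 1 (fun n => ?_)
    rw [hnorm, Real.coe_toNNReal _ hρ.le]
    exact cc_rho_le_one hl n
  have hradpos : 0 < p.radius := by
    refine lt_of_lt_of_le ?_ hrad
    rw [ENNReal.coe_pos]
    exact Real.toNNReal_pos.2 hρ
  have hball := p.hasFPowerSeriesOnBall hradpos
  have hsum_eq : ∀ x : ℝ, p.sum x = ∑' k, c k * x^k := by
    intro x
    have h1 : p.sum x = FormalMultilinearSeries.ofScalarsSum c x := rfl
    rw [h1, FormalMultilinearSeries.ofScalars_sum_eq]
    exact tsum_congr fun n => by rw [smul_eq_mul]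
  have han_inner : ∀ x : ℝ, |x| < rho l → AnalyticAt ℝ p.sum x := by
    intro x hx
    refine hball.analyticAt_of_mem ?_
    rw [mem_emetric_ball_zero_iff]
    refine lt_of_lt_of_le ?_ hrad
    rw [enorm_eq_nnnorm, ENNReal.coe_lt_coe, ← NNReal.coe_lt_coe, coe_nnnorm, Real.norm_eq_abs,
      Real.coe_toNNReal _ hρ.le]
    exact hx
  have hzf_an : ∀ x : ℝ, AnalyticAt ℝ (zf l) x := by
    intro x
    exact analyticAt_id.mul (((analyticAt_const (v := (1:ℝ))).sub analyticAt_id).pow (l-1))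
  set U : Set ℝ := Set.Ioo 0 (1/(l:ℝ)) with hU
  have hU_an1 : AnalyticOnNhd ℝ (fun x => p.sum (zf l x)) U := by
    intro x hx
    rw [hU, Set.mem_Ioo] at hx
    have hx1 : x ≤ 1 := le_trans hx.2.le (le_trans (half_bound hl) (by norm_num))
    have hz0 := zf_nonneg hl hx.1.le hx1
    have harg : |zf l x| < rho l := by
      rw [abs_of_nonneg hz0]
      exact zf_lt_rho hl hx.1.le hx.2
    have h1 : AnalyticAt ℝ (p.sum ∘ zf l) x :=
      (han_inner (zf l x) harg).comp (hzf_an x)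
    exact h1
  have hU_an2 : AnalyticOnNhd ℝ (fun x => (1 - (l:ℝ)*x)⁻¹) U := by
    refine AnalyticOnNhd.inv ?_ ?_
    · exact fun x _ => (analyticAt_const (v := (1:ℝ))).sub
        ((analyticAt_const (v := (l:ℝ))).mul analyticAt_id)
    · intro x hx
      rw [hU, Set.mem_Ioo] at hx
      have : (l:ℝ) * x < 1 := by
        calc (l:ℝ) * x < (l:ℝ) * (1/l) := mul_lt_mul_of_pos_left hx.2 hL
          _ = 1 := by field_simp
      linarith
  have hδ : 0 < rho l / 2^l := by positivity
  set z₀ : ℝ := rho l / 2^l / 2 with hz₀def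
  have hz₀U : z₀ ∈ U := by
    rw [hU, Set.mem_Ioo]
    constructor
    · positivity
    · calc z₀ < rho l / 2^l := by rw [hz₀def]; linarith
        _ ≤ 1/(l:ℝ) := rho_div_small hl
  have hev : (fun x => p.sum (zf l x)) =ᶠ[nhds z₀] (fun x => (1 - (l:ℝ)*x)⁻¹) := by
    refine Filter.eventuallyEq_of_mem (isOpen_Ioo.mem_nhds
      (show z₀ ∈ Set.Ioo 0 (rho l / 2^l) from ⟨by positivity, by rw [hz₀def]; linarith⟩)) ?_
    intro x hx
    rw [Set.mem_Ioo] at hx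
    show p.sum (zf l x) = (1 - (l:ℝ)*x)⁻¹
    rw [hsum_eq]
    exact key_small hl hx.1 hx.2
  have heqOn := AnalyticOnNhd.eqOn_of_preconnected_of_eventuallyEq hU_an1 hU_an2
    isPreconnected_Ioo hz₀U hev
  have heU : e ∈ U := by rw [hU, Set.mem_Ioo]; exact ⟨he, he2⟩
  have := heqOn heU
  rw [← hsum_eq]
  exact this

lemma tsum_weighted {e : ℝ} (he : 0 < e) (he2 : e < 1/(l:ℝ)) :
    ∑' k : ℕ, (k:ℝ) * (cc l k * (zf l e)^k)
      = (l:ℝ) * e * (1-e) / (1 - (l:ℝ)*e)^3 := by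
  have hρ := rho_pos hl
  have hL : (0:ℝ) < l := by positivity
  have hcc0 : ∀ k, 0 ≤ cc l k := fun k => by rw [cc]; positivity
  set a : ℝ := e/2 with hadef
  set b : ℝ := (e + 1/(l:ℝ))/2 with hbdef
  have ha0 : 0 < a := by positivity
  have hae : a < e := by rw [hadef]; linarith
  have heb : e < b := by rw [hbdef]; linarith
  have hbl : b < 1/(l:ℝ) := by rw [hbdef]; linarith
  have hb1 : b ≤ 1 := le_trans hbl.le (le_trans (half_bound hl) (by norm_num))
  have hb0 : 0 < b := lt_trans (lt_trans ha0 hae) heb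
  have hab1 : 0 < 1 - b := by
    have h12 : (1:ℝ)/l ≤ 1/2 := half_bound hl
    linarith
  have hzb0 : 0 ≤ zf l b := zf_nonneg hl hb0.le hb1
  set q : ℝ := zf l b / rho l with hqdef
  have hq0 : 0 ≤ q := by positivity
  have hq1 : q < 1 := (div_lt_one hρ).2 (zf_lt_rho hl hb0.le hbl)
  set s : Set ℝ := Set.Ioo a b with hs
  have hes : e ∈ s := by rw [hs, Set.mem_Ioo]; exact ⟨hae, heb⟩
  have hsmem : ∀ x ∈ s, 0 < x ∧ x < 1/(l:ℝ) ∧ x < 1 ∧ (l:ℝ)*x < 1 ∧ 0 < 1-x := by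
    intro x hx
    rw [hs, Set.mem_Ioo] at hx
    have h1 : 0 < x := lt_trans ha0 hx.1
    have h2 : x < 1/(l:ℝ) := lt_trans hx.2 hbl
    have h3 : x < 1 := lt_of_lt_of_le h2 (le_trans (half_bound hl) (by norm_num))
    have h4 : (l:ℝ)*x < 1 := by
      calc (l:ℝ) * x < (l:ℝ) * (1/l) := mul_lt_mul_of_pos_left h2 hL
        _ = 1 := by field_simp
    exact ⟨h1, h2, h3, h4, by linarith⟩
  set g : ℕ → ℝ → ℝ := fun k x => cc l k * x^k * (1-x)^(k*(l-1)) with hgdef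
  set g' : ℕ → ℝ → ℝ := fun k x =>
    cc l k * ((k:ℕ):ℝ) * x^(k-1) * (1-x)^(k*(l-1)-1) * (1 - (l:ℝ)*x) with hg'def
  set u : ℕ → ℝ := fun k => (k:ℝ) * q^k * (1/(a*(1-b))) with hudef
  have hzpow : ∀ (x : ℝ) (k : ℕ), (zf l x)^k = x^k * (1-x)^(k*(l-1)) := by
    intro x k
    simp only [zf]
    exact (pow_pack x (1-x) l k).symm
  have hu : Summable u := by
    have hs1 : Summable (fun k : ℕ => (k:ℝ)^1 * q^k) :=
      summable_pow_mul_geometric_of_norm_lt_one 1 (by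
        rw [Real.norm_eq_abs, abs_of_nonneg hq0]; exact hq1)
    simp only [pow_one] at hs1
    exact hs1.mul_right _
  have hMfact : ∀ k : ℕ, 1 ≤ (k+1)*(l-1) := by
    intro k
    have : 1 ≤ l - 1 := by omega
    calc 1 = 1*1 := by ring
      _ ≤ (k+1)*(l-1) := Nat.mul_le_mul (by omega) this
  have hg'deriv : ∀ k : ℕ, ∀ x ∈ s, HasDerivAt (g k) (g' k x) x := by
    intro k x _
    match k with
    | 0 =>
      have h0 : HasDerivAt (fun x : ℝ => cc l 0 * x^0 * (1-x)^(0*(l-1))) 0 x := by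
        simp only [pow_zero, mul_one, Nat.zero_mul]
        exact hasDerivAt_const x (cc l 0)
      have hv : g' 0 x = 0 := by rw [hg'def]; push_cast; ring
      rw [hgdef, hv]
      exact h0
    | (k+1) =>
      have hM1 : 1 ≤ (k+1)*(l-1) := hMfact k
      have h1 : HasDerivAt (fun x : ℝ => x^(k+1)) (((k:ℝ)+1) * x^k) x := by
        have := hasDerivAt_pow (k+1) x
        simpa using this
      have hsub : HasDerivAt (fun x : ℝ => 1 - x) (-1) x := by
        simpa using (hasDerivAt_id' x).const_sub (1:ℝ)
      have h2 : HasDerivAt (fun x : ℝ => (1-x)^((k+1)*(l-1)))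
          ((((k+1)*(l-1) : ℕ):ℝ) * (1-x)^((k+1)*(l-1)-1) * (-1)) x :=
        (hasDerivAt_pow ((k+1)*(l-1)) (1-x)).comp x hsub
      have h3 := (h1.mul h2).const_mul (cc l (k+1))
      have hfun : (fun x : ℝ => cc l (k+1) * (x^(k+1) * (1-x)^((k+1)*(l-1))))
          = fun x : ℝ => cc l (k+1) * x^(k+1) * (1-x)^((k+1)*(l-1)) := by
        funext u'
        ring
      simp only [Pi.mul_apply] at h3
      rw [hfun] at h3
      have hval : cc l (k+1) * (((k:ℝ)+1) * x^k * (1-x)^((k+1)*(l-1))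
            + x^(k+1) * ((((k+1)*(l-1) : ℕ):ℝ) * (1-x)^((k+1)*(l-1)-1) * (-1)))
          = g' (k+1) x := by
        rw [hg'def]
        have e1 : (1-x)^((k+1)*(l-1)) = (1-x)^((k+1)*(l-1)-1) * (1-x) := by
          rw [← pow_succ]; congr 1; omega
        have e2 : x^(k+1) = x^k * x := by rw [← pow_succ]
        have e3 : (((k+1)*(l-1) : ℕ):ℝ) = ((k:ℝ)+1) * ((l:ℝ)-1) := by
          push_cast [Nat.cast_sub (by omega : 1 ≤ l)]
          ring
        rw [e1, e2, e3]
        simp only [Nat.add_sub_cancel]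
        push_cast
        ring
      rw [← hval]
      exact h3
  have hbound : ∀ k : ℕ, ∀ x ∈ s, ‖g' k x‖ ≤ u k := by
    intro k x hx
    obtain ⟨hx0, hxl, hx1, hlx, h1x⟩ := hsmem x hx
    rw [hs, Set.mem_Ioo] at hx
    match k with
    | 0 =>
      have hv : g' 0 x = 0 := by rw [hg'def]; push_cast; ring
      rw [hv, hudef]
      simp
    | (k+1) =>
      have hM1 : 1 ≤ (k+1)*(l-1) := hMfact k
      have hnn : 0 ≤ g' (k+1) x := by
        rw [hg'def]
        have := hcc0 (k+1)
        have h2 : (0:ℝ) ≤ 1 - l*x := by linarith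
        positivity
      rw [Real.norm_eq_abs, abs_of_nonneg hnn, hg'def, hudef]
      simp only
      set P : ℝ := cc l (k+1) * (((k+1:ℕ)):ℝ) * x^(k+1-1) * (1-x)^((k+1)*(l-1)-1) with hP
      have hppos : 0 ≤ P := by
        rw [hP]
        have := hcc0 (k+1)
        positivity
      have hxx : a*(1-b) ≤ x*(1-x) := by
        have h1 : a ≤ x := hx.1.le
        have h2 : 1-b ≤ 1-x := by linarith [hx.2]
        exact mul_le_mul h1 h2 (by linarith) hx0.le
      calc P * (1 - (l:ℝ)*x) ≤ P := by
            refine mul_le_of_le_one_right hppos ?_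
            have : 0 < (l:ℝ)*x := by positivity
            linarith
        _ ≤ ((k+1:ℕ):ℝ) * q^(k+1) * (1/(a*(1-b))) := by
            rw [mul_one_div, le_div_iff₀ (by positivity)]
            calc P * (a*(1-b)) ≤ P * (x*(1-x)) := mul_le_mul_of_nonneg_left hxx hppos
              _ = ((k+1:ℕ):ℝ) * (cc l (k+1) * (zf l x)^(k+1)) := by
                  rw [hP, hzpow]
                  have e1 : (1-x)^((k+1)*(l-1)) = (1-x)^((k+1)*(l-1)-1) * (1-x) := by
                    rw [← pow_succ]; congr 1; omega
                  have e2 : x^(k+1) = x^(k+1-1) * x := by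
                    rw [← pow_succ]; congr 1
                  rw [e1, e2]
                  ring
              _ ≤ ((k+1:ℕ):ℝ) * (zf l x / rho l)^(k+1) := by
                  refine mul_le_mul_of_nonneg_left ?_ (by positivity)
                  exact cc_z_le hl (k+1) (zf_nonneg hl hx0.le hx1.le)
              _ ≤ ((k+1:ℕ):ℝ) * q^(k+1) := by
                  refine mul_le_mul_of_nonneg_left ?_ (by positivity)
                  rw [hqdef]
                  refine pow_le_pow_left₀
                    (div_nonneg (zf_nonneg hl hx0.le hx1.le) hρ.le) ?_ _
                  have hmono : zf l x ≤ zf l b :=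
                    (zf_mono hl (Set.mem_Icc.2 ⟨hx0.le, hxl.le⟩)
                      (Set.mem_Icc.2 ⟨hb0.le, hbl.le⟩) hx.2).le
                  exact (div_le_div_iff_of_pos_right hρ).2 hmono
  have hsum_e : Summable (fun k => g k e) := by
    refine (summable_main hl he.le he2).congr fun k => ?_
    simp only [hgdef]
    rw [hzpow]
    ring
  have hD1 : HasDerivAt (fun z => ∑' k, g k z) (∑' k, g' k e) e :=
    hasDerivAt_tsum_of_isPreconnected hu (show IsOpen s from isOpen_Ioo)
      (convex_Ioo a b).isPreconnected hg'deriv hbound hes hsum_e hes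
  have hEq : (fun z => ∑' k, g k z) =ᶠ[nhds e] (fun z => (1 - (l:ℝ)*z)⁻¹) := by
    refine Filter.eventuallyEq_of_mem ((show IsOpen s from isOpen_Ioo).mem_nhds hes) ?_
    intro x hx
    obtain ⟨hx0, hxl, _, _, _⟩ := hsmem x hx
    show ∑' k, g k x = (1 - (l:ℝ)*x)⁻¹
    rw [← key_all hl hx0 hxl]
    refine tsum_congr fun k => ?_
    simp only [hgdef]
    rw [hzpow]
    ring
  have hD2 : HasDerivAt (fun z => (1 - (l:ℝ)*z)⁻¹) (∑' k, g' k e) e :=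
    (Filter.EventuallyEq.hasDerivAt_iff hEq).1 hD1
  have hle1 : (l:ℝ)*e < 1 := (hsmem e hes).2.2.2.1
  have hne : (1 - (l:ℝ)*e) ≠ 0 := by linarith
  have hD3 : HasDerivAt (fun z : ℝ => (1 - (l:ℝ)*z)⁻¹) ((l:ℝ)/(1 - (l:ℝ)*e)^2) e := by
    have h1 : HasDerivAt (fun z : ℝ => 1 - (l:ℝ)*z) (0 - (l:ℝ)) e := by
      refine (hasDerivAt_const e (1:ℝ)).sub ?_
      simpa using (hasDerivAt_id e).const_mul (l:ℝ)
    have h2 := h1.inv hne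
    rw [zero_sub, neg_neg] at h2
    exact h2
  have huniq : ∑' k, g' k e = (l:ℝ)/(1 - (l:ℝ)*e)^2 := hD2.unique hD3
  have hterm : ∀ k : ℕ, (k:ℝ) * (cc l k * (zf l e)^k)
      = g' k e * (e*(1-e)/(1 - (l:ℝ)*e)) := by
    intro k
    match k with
    | 0 =>
      simp only [hg'def]
      push_cast
      ring
    | (k+1) =>
      simp only [hg'def]
      rw [hzpow]
      have hM1 := hMfact k
      have e1 : (1-e)^((k+1)*(l-1)) = (1-e)^((k+1)*(l-1)-1) * (1-e) := by
        rw [← pow_succ]; congr 1; omega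
      have e2 : e^(k+1) = e^(k+1-1) * e := by
        rw [Nat.add_sub_cancel, pow_succ]
      rw [e1, e2]
      rw [mul_div_assoc', eq_div_iff hne]
      push_cast
      ring
  rw [tsum_congr hterm, tsum_mul_right, huniq]
  field_simp

end Key

end BusyTime

/-- Second moment of the busy time: for `0 < ε < 1`, `l ≥ 2`, `lε < 1`,
`E(S²) = E(S) + l(l-1)ε²(1-ε)^l/(1-lε)³` where
`E(S) = (l-1)ε(1-ε)^{l-1}/(1-lε)` (sum re-indexed via `s = k+1`). -/
theorem busy_time_second_moment (l : ℕ) (hl : 2 ≤ l) (ε : ℝ)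
    (hε0 : 0 < ε) (hε1 : ε < 1) (hcap : (l : ℝ) * ε < 1) :
    ∑' k : ℕ, ((k : ℝ) + 1) ^ 2 *
        (((l : ℝ) - 1) / ((k : ℝ) + 1) * ε ^ (k + 1)
          * (1 - ε) ^ ((k + 1) * (l - 1)) * (Nat.choose (k * l) k : ℝ))
      = ((l : ℝ) - 1) * ε * (1 - ε) ^ (l - 1) / (1 - (l : ℝ) * ε)
        + (l : ℝ) * ((l : ℝ) - 1) * ε ^ 2 * (1 - ε) ^ l / (1 - (l : ℝ) * ε) ^ 3 := by
  classical
  open BusyTime in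
  have hL : (0:ℝ) < l := by positivity
  have he2 : ε < 1/(l:ℝ) := by
    rw [lt_div_iff₀ hL]
    linarith [hcap]
  have hΦ := BusyTime.key_all hl hε0 he2
  have hG := BusyTime.tsum_weighted hl hε0 he2
  have hzpow : ∀ k : ℕ, (BusyTime.zf l ε)^k = ε^k * (1-ε)^(k*(l-1)) := fun k => by
    simp only [BusyTime.zf]
    exact (BusyTime.pow_pack ε (1-ε) l k).symm
  have hne : (1:ℝ) - l*ε ≠ 0 := by linarith
  have hS1 : Summable (fun k => BusyTime.cc l k * (BusyTime.zf l ε)^k) :=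
    BusyTime.summable_main hl hε0.le he2
  have hS2 : Summable (fun k : ℕ => (k:ℝ) * (BusyTime.cc l k * (BusyTime.zf l ε)^k)) :=
    BusyTime.summable_kmain hl hε0.le he2
  have hterm : ∀ k : ℕ, ((k : ℝ) + 1) ^ 2 *
        (((l : ℝ) - 1) / ((k : ℝ) + 1) * ε ^ (k + 1)
          * (1 - ε) ^ ((k + 1) * (l - 1)) * (Nat.choose (k * l) k : ℝ))
      = (((l:ℝ)-1) * ε * (1-ε)^(l-1)) *
          ((k:ℝ) * (BusyTime.cc l k * (BusyTime.zf l ε)^k)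
            + BusyTime.cc l k * (BusyTime.zf l ε)^k) := by
    intro k
    have hk1 : ((k:ℝ)+1) ≠ 0 := by positivity
    rw [hzpow]
    simp only [BusyTime.cc]
    have hexp : (1-ε)^((k+1)*(l-1)) = (1-ε)^(l-1) * (1-ε)^(k*(l-1)) := by
      rw [← pow_add]; congr 1; ring
    rw [hexp, pow_succ]
    field_simp
    ring
  rw [tsum_congr hterm, tsum_mul_left, Summable.tsum_add hS2 hS1, hΦ, hG]
  have hpow : (1-ε)^l = (1-ε)^(l-1) * (1-ε) := by
    rw [← pow_succ]; congr 1; omega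
  rw [hpow]
  field_simp
  ring
end

section
/- For every integer Q ≥ 2 and every integer k ≥ 1: (Q/(Q+1)) · (1 - 1/Q²)^k ≤ ∏_{j=0}^{k-1} (1 - 1/Q^{k-j}). -/
open Finset

lemma aux_prod_bound (Q : ℕ) (hQ : 2 ≤ Q) : ∀ k, 1 ≤ k →
    ((Q : ℝ) / ((Q : ℝ) + 1)) * (1 - 1 / (Q : ℝ) ^ 2) ^ k
      ≤ ∏ i ∈ Finset.range k, (1 - 1 / (Q : ℝ) ^ (i + 1)) := by
  have hQ' : (2 : ℝ) ≤ (Q : ℝ) := by exact_mod_cast hQ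
  have hQ0 : (0 : ℝ) < Q := by linarith
  have hfac : ∀ n : ℕ, 1 ≤ n → (0 : ℝ) ≤ 1 - 1 / (Q : ℝ) ^ n := by
    intro n hn
    have h1 : (1 : ℝ) ≤ (Q : ℝ) ^ n := one_le_pow₀ (by linarith)
    have : 1 / (Q : ℝ) ^ n ≤ 1 := by
      rw [div_le_one (by linarith)]; exact h1
    linarith
  have hmono : ∀ n : ℕ, 2 ≤ n → (1 : ℝ) - 1 / (Q : ℝ) ^ 2 ≤ 1 - 1 / (Q : ℝ) ^ n := by
    intro n hn
    have : (Q : ℝ) ^ 2 ≤ (Q : ℝ) ^ n := pow_le_pow_right₀ (by linarith) hn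
    have h2 : (0 : ℝ) < (Q : ℝ) ^ 2 := by positivity
    have := one_div_le_one_div_of_le h2 this
    linarith
  intro k hk
  induction k with
  | zero => omega
  | succ n ih =>
    rcases Nat.eq_or_lt_of_le hk with h | h
    · -- n + 1 = 1
      have hn : n = 0 := by omega
      subst hn
      rw [Finset.prod_range_one]
      have : ((Q : ℝ) / ((Q : ℝ) + 1)) * (1 - 1 / (Q : ℝ) ^ 2) = 1 - 1 / (Q : ℝ) := by
        field_simp
        ring
      rw [pow_one, this, pow_one]
    · have hn1 : 1 ≤ n := by omega
      rw [Finset.prod_range_succ, pow_succ]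
      have h1 := ih hn1
      have h2 : (1 : ℝ) - 1 / (Q : ℝ) ^ 2 ≤ 1 - 1 / (Q : ℝ) ^ (n + 1) := hmono (n + 1) (by omega)
      have h3 : (0 : ℝ) ≤ ((Q : ℝ) / ((Q : ℝ) + 1)) * (1 - 1 / (Q : ℝ) ^ 2) ^ n := by
        have := hfac 2 (by norm_num)
        positivity
      have h4 : (0 : ℝ) ≤ 1 - 1 / (Q : ℝ) ^ 2 := hfac 2 (by norm_num)
      calc (Q : ℝ) / ((Q : ℝ) + 1) * ((1 - 1 / (Q : ℝ) ^ 2) ^ n * (1 - 1 / (Q : ℝ) ^ 2))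
          = ((Q : ℝ) / ((Q : ℝ) + 1) * (1 - 1 / (Q : ℝ) ^ 2) ^ n) * (1 - 1 / (Q : ℝ) ^ 2) := by ring
        _ ≤ (∏ i ∈ Finset.range n, (1 - 1 / (Q : ℝ) ^ (i + 1))) * (1 - 1 / (Q : ℝ) ^ (n + 1)) := by
            apply mul_le_mul h1 h2 h4
            exact Finset.prod_nonneg fun i _ => hfac (i + 1) (by omega)

/-- For every integer `Q ≥ 2` and `k ≥ 1`:
`(Q/(Q+1)) (1 - 1/Q²)^k ≤ ∏_{j=0}^{k-1} (1 - 1/Q^{k-j})`. -/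
theorem invertible_probability_lower_bound (Q k : ℕ) (hQ : 2 ≤ Q) (hk : 1 ≤ k) :
    ((Q : ℝ) / ((Q : ℝ) + 1)) * (1 - 1 / (Q : ℝ) ^ 2) ^ k
      ≤ ∏ j ∈ Finset.range k, (1 - 1 / (Q : ℝ) ^ (k - j)) := by
  have : ∏ j ∈ Finset.range k, (1 - 1 / (Q : ℝ) ^ (k - j))
      = ∏ i ∈ Finset.range k, (1 - 1 / (Q : ℝ) ^ (i + 1)) := by
    rw [← Finset.prod_range_reflect]
    apply Finset.prod_congr rfl
    intro j hj
    have : k - (k - 1 - j) = j + 1 := by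
      have := Finset.mem_range.mp hj; omega
    rw [this]
  rw [this]
  exact aux_prod_bound Q hQ k hk
end

section
/- Let 0 < ε < 1 and l ≥ 2 with lε < 1, and let S have the busy-time distribution P(S=s) = ((l-1)/s) ε^s (1-ε)^{s(l-1)} C((s-1)l, s-1) for s ≥ 1. Let Q ≥ 2, and let ε₀ ∈ (0, ε) satisfy ε₀(1-ε₀)^{l-1} = (1 - 1/Q²) ε(1-ε)^{l-1}. Then ∑_{s=1}^{∞} (1 - (Q/(Q+1))(1 - 1/Q²)^s) · P(S=s) = (Q/(Q+1))(1-ε₀)^{l-1} - (1-ε)^{l-1} + 1/(Q+1). -/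
open Finset

set_option maxHeartbeats 1000000

namespace DFS

/-- Gould/Raney numbers `A_n(x) = x/(x+ln) · C(x+ln, n)` (real-valued, `x : ℤ`). -/
noncomputable def A (l : ℕ) (n : ℕ) (x : ℤ) : ℝ :=
  if n = 0 then 1 else (x : ℝ) / ((x : ℝ) + l * n) * ((x + l * n).toNat.choose n : ℝ)

lemma A_zero (l : ℕ) (x : ℤ) : A l 0 x = 1 := by simp [A]

lemma A_at_zero {l : ℕ} {n : ℕ} (hn : n ≠ 0) : A l n 0 = 0 := by
  simp [A, hn]

lemma A_nonneg {l : ℕ} (n : ℕ) {x : ℤ} (hx : 0 ≤ x) : 0 ≤ A l n x := by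
  unfold A
  split
  · norm_num
  · apply mul_nonneg
    · apply div_nonneg (by exact_mod_cast hx)
      positivity
    · positivity

lemma A_one {l : ℕ} (hl : 2 ≤ l) {x : ℤ} (hx : (1:ℤ) - l ≤ x) : A l 1 x = x := by
  have h1 : (0:ℤ) < x + l := by omega
  have h2 : ((x + l).toNat : ℤ) = x + l := Int.toNat_of_nonneg (le_of_lt h1)
  have h3 : (x + l * (1:ℕ)).toNat.choose 1 = (x + l).toNat := by
    rw [Nat.choose_one_right]; norm_num
  have h4 : ((x:ℝ) + l) ≠ 0 := by
    have : (0:ℝ) < ((x + l : ℤ) : ℝ) := by exact_mod_cast h1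
    push_cast at this; linarith
  unfold A
  simp only [one_ne_zero, if_false, h3, Nat.cast_one, mul_one]
  rw [Nat.choose_one_right]
  rw [show (((x + (l:ℤ)).toNat : ℕ) : ℝ) = (x:ℝ) + l from by exact_mod_cast h2]
  field_simp

/-- The key two-term recurrence for Gould numbers. -/
lemma A_rec {l : ℕ} (hl : 2 ≤ l) {n : ℕ} (hn : 1 ≤ n) {x : ℤ} (hx : (2:ℤ) - l ≤ x) :
    A l n x = A l n (x - 1) + A l (n - 1) (x + l - 1) := by
  obtain rfl | hn2 : n = 1 ∨ 2 ≤ n := by omega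
  · -- n = 1
    have e1 : A l 1 x = x := A_one hl (by omega)
    have e2 : A l 1 (x-1) = (x:ℝ) - 1 := by
      rw [A_one hl (by omega)]; push_cast; ring
    norm_num [e1, e2, A_zero]
  · -- n ≥ 2
    have hM : (0:ℤ) < x + l * n - 1 := by
      have : (l:ℤ) * 2 ≤ (l:ℤ) * n := by
        apply mul_le_mul_of_nonneg_left (by exact_mod_cast hn2) (by positivity)
      have hl' : (2:ℤ) ≤ l := by exact_mod_cast hl
      omega
    set m : ℕ := (x + l * n).toNat with hmdef
    have hm : (m : ℤ) = x + l * n := Int.toNat_of_nonneg (by omega)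
    have hm2 : 2 ≤ m := by omega
    have hcastn : ((n - 1 : ℕ) : ℤ) = (n:ℤ) - 1 := by
      push_cast [Nat.cast_sub (by omega : 1 ≤ n)]; ring
    have hm1a : (x - 1 + l * n).toNat = m - 1 := by omega
    have hm1b : (x + l - 1 + l * ((n-1 : ℕ) : ℤ)).toNat = m - 1 := by
      have e : x + l - 1 + l * ((n-1 : ℕ) : ℤ) = x + l * n - 1 := by rw [hcastn]; ring
      rw [e]; omega
    -- nat binomial identities
    have pascal : m.choose n = (m-1).choose (n-1) + (m-1).choose n := by
      have h := Nat.choose_succ_succ (m-1) (n-1)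
      simp only [Nat.succ_eq_add_one] at h
      rw [show m - 1 + 1 = m by omega, show n - 1 + 1 = n by omega] at h
      omega
    have absorb : m * ((m-1).choose (n-1)) = m.choose n * n := by
      have h := Nat.add_one_mul_choose_eq (m-1) (n-1)
      rwa [show m - 1 + 1 = m by omega, show n - 1 + 1 = n by omega] at h
    have hne : n ≠ 0 := by omega
    have hne1 : n - 1 ≠ 0 := by omega
    set B : ℝ := (m.choose n : ℝ) with hB
    set B1 : ℝ := ((m-1).choose (n-1) : ℝ) with hB1
    set B2 : ℝ := ((m-1).choose n : ℝ) with hB2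
    have hpas : B = B1 + B2 := by rw [hB, hB1, hB2]; exact_mod_cast pascal
    have habs : (m:ℝ) * B1 = B * n := by rw [hB, hB1]; exact_mod_cast absorb
    have hmR : (2:ℝ) ≤ (m:ℝ) := by exact_mod_cast hm2
    have cast1 : ((x:ℝ) + (l:ℝ) * (n:ℝ)) = (m:ℝ) := by exact_mod_cast hm.symm
    have d2 : ((x - 1 : ℤ):ℝ) + (l:ℝ) * (n:ℝ) = (m:ℝ) - 1 := by push_cast; linarith
    have d3 : ((x + l - 1 : ℤ):ℝ) + (l:ℝ) * ((n-1 : ℕ):ℝ) = (m:ℝ) - 1 := by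
      have : (((n-1:ℕ) : ℤ) : ℝ) = ((n:ℝ) - 1) := by exact_mod_cast hcastn
      push_cast at this ⊢
      rw [this]; push_cast; linarith
    have EA : A l n x = (x:ℝ) * B / (m:ℝ) := by
      unfold A
      simp only [hne, if_false]
      rw [← hmdef, cast1, ← hB]
      ring
    have EB : A l n (x - 1) = ((x:ℝ) - 1) * B2 / ((m:ℝ) - 1) := by
      unfold A
      simp only [hne, if_false, hm1a]
      rw [d2, ← hB2]
      push_cast
      ring
    have EC : A l (n-1) (x + l - 1) = ((x:ℝ) + l - 1) * B1 / ((m:ℝ) - 1) := by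
      unfold A
      simp only [hne1, if_false, hm1b]
      rw [d3, ← hB1]
      push_cast
      ring
    rw [EA, EB, EC]
    rw [← add_div, div_eq_div_iff (by linarith) (by linarith)]
    have hz : (m:ℝ) = (x:ℝ) + l*n := by linarith
    linear_combination ((x:ℝ)-1)*(m:ℝ)*hpas + (-(l:ℝ))*habs + B*hz


/-- Vandermonde-type convolution for Gould numbers. -/
lemma A_conv {l : ℕ} (hl : 2 ≤ l) : ∀ (n : ℕ) (x y : ℕ),
    ∑ k ∈ Finset.range (n+1), A l k x * A l (n-k) y = A l n (x + y) := by
  intro n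
  induction n using Nat.strong_induction_on with
  | _ n ihn =>
    intro x y
    induction x with
    | zero =>
      rw [Finset.sum_eq_single 0]
      · simp [A_zero]
      · intro k hk hk0
        simp only [Nat.cast_zero]
        rw [A_at_zero hk0]; ring
      · intro h; simp at h
    | succ x ihx =>
      rcases Nat.eq_zero_or_pos n with rfl | hn
      · simp [A_zero]
      · -- peel off k = 0
        rw [Finset.sum_range_succ'] at *
        have step : ∀ i ∈ Finset.range n,
            A l (i+1) ((x:ℤ)+1) * A l (n-(i+1)) y
              = A l (i+1) (x:ℤ) * A l (n-(i+1)) y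
                + A l i ((x:ℤ)+l) * A l (n-1-i) y := by
          intro i hi
          have hrec := A_rec hl (Nat.le_add_left 1 i) (x := (x:ℤ)+1) (by omega)
          have e1 : ((x:ℤ)+1) - 1 = (x:ℤ) := by ring
          have e2 : ((x:ℤ)+1+l-1) = (x:ℤ)+l := by ring
          have e3 : i + 1 - 1 = i := by omega
          have e4 : n - (i+1) = n - 1 - i := by omega
          rw [e1, e2, e3] at hrec
          rw [hrec, e4]
          ring
        have cast1 : ((x+1 : ℕ) : ℤ) = (x:ℤ)+1 := by push_cast; ring
        rw [cast1]
        rw [Finset.sum_congr rfl step, Finset.sum_add_distrib]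
        have part1 : (∑ i ∈ Finset.range n, A l (i+1) (x:ℤ) * A l (n-(i+1)) y)
            + A l 0 ((x:ℤ)+1) * A l (n-0) y
            = A l n ((x:ℤ) + y) := by
          rw [A_zero, ← A_zero l (x:ℤ)]
          have := ihx
          rw [show ((x:ℕ):ℤ) = (x:ℤ) from rfl] at this
          linarith [this]
        have part2 : ∑ i ∈ Finset.range n, A l i ((x:ℤ)+l) * A l (n-1-i) y
            = A l (n-1) ((x:ℤ) + l + y) := by
          have hle : n - 1 < n := by omega
          have := ihn (n-1) hle (x + l) y
          push_cast at this
          rw [show n-1+1 = n by omega] at this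
          exact this
        rw [part2]
        have goal_rec := A_rec hl hn (x := (x:ℤ)+1+y) (by omega)
        have e1 : ((x:ℤ)+1+y) - 1 = (x:ℤ)+y := by ring
        have e2 : ((x:ℤ)+1+y+l-1) = (x:ℤ)+l+y := by ring
        rw [e1, e2] at goal_rec
        rw [show ((x:ℤ)+1+(y:ℤ)) = ((x:ℤ)+(1:ℤ)+(y:ℤ)) from rfl] at goal_rec
        have : A l 0 ((x:ℤ)+1) * A l (n-0) y
            + ∑ i ∈ Finset.range n, A l (i+1) (x:ℤ) * A l (n-(i+1)) y
            = A l n ((x:ℤ) + y) := by linarith [part1]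
        linarith [goal_rec, this]


/-- pmf coefficients `c_s = ((l-1)/s) C(l(s-1), s-1)`; `c 0 = 0` by div-by-zero. -/
noncomputable def c (l : ℕ) (s : ℕ) : ℝ :=
  ((l:ℝ) - 1) / s * ((l*(s-1)).choose (s-1) : ℝ)

lemma c_zero (l : ℕ) : c l 0 = 0 := by simp [c]

/-- `A_m(1-l) = -c_m` for `m ≥ 1`. -/
lemma A_neg {l : ℕ} (hl : 2 ≤ l) {m : ℕ} (hm : 1 ≤ m) : A l m (1 - l) = - c l m := by
  have key : (l*(m-1)+1) * ((l*(m-1)).choose (m-1)) = (l*(m-1)+1).choose m * m := by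
    have h := Nat.add_one_mul_choose_eq (l*(m-1)) (m-1)
    rwa [show m - 1 + 1 = m by omega] at h
  have hcast : ((m - 1 : ℕ):ℤ) = (m:ℤ) - 1 := by
    push_cast [Nat.cast_sub (by omega : 1 ≤ m)]; ring
  have harg : (1 - (l:ℤ) + l * m).toNat = l*(m-1)+1 := by
    have e : (1:ℤ) - l + l*m = ((l*(m-1)+1 : ℕ) : ℤ) := by
      push_cast [Nat.cast_sub (by omega : 1 ≤ m)]; ring
    rw [e, Int.toNat_natCast]
  have hne : m ≠ 0 := by omega
  unfold A
  simp only [hne, if_false, harg]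
  unfold c
  have hmne : (m:ℝ) ≠ 0 := by positivity
  have hPne : ((1 - (l:ℤ) :ℤ):ℝ) + (l:ℝ)*(m:ℝ) ≠ 0 := by
    have : ((1 - (l:ℤ) :ℤ):ℝ) + (l:ℝ)*(m:ℝ) = ((l*(m-1)+1 : ℕ):ℝ) := by
      push_cast [Nat.cast_sub (by omega : 1 ≤ m)]; ring
    rw [this]; positivity
  have keyR : (((1 - (l:ℤ) :ℤ):ℝ) + (l:ℝ)*(m:ℝ)) * (((l*(m-1)).choose (m-1)):ℝ)
      = (((l*(m-1)+1).choose m):ℝ) * (m:ℝ) := by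
    have : ((1 - (l:ℤ) :ℤ):ℝ) + (l:ℝ)*(m:ℝ) = ((l*(m-1)+1 : ℕ):ℝ) := by
      push_cast [Nat.cast_sub (by omega : 1 ≤ m)]; ring
    rw [this]; exact_mod_cast key
  rw [div_mul_eq_mul_div, div_mul_eq_mul_div, ← neg_div, ← neg_mul,
      div_eq_div_iff hPne hmne]
  have hc : ((1 - (l:ℤ) :ℤ):ℝ) = 1 - (l:ℝ) := by push_cast; ring
  rw [hc] at keyR ⊢
  linear_combination ((l:ℝ) - 1) * keyR

/-- Coefficient shift: `A_{n+1}(1) = A_n(l)`. -/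
lemma A_shift {l : ℕ} (hl : 2 ≤ l) (n : ℕ) : A l (n+1) 1 = A l n (l:ℤ) := by
  have key : (l*n+l+1) * ((l*n+l).choose n) = (l*n+l+1).choose (n+1) * (n+1) := by
    have h := Nat.add_one_mul_choose_eq (l*n+l) n
    exact h
  have h1 : ((1:ℤ) + l*((n+1:ℕ):ℤ)).toNat = l*n+l+1 := by
    rw [show (1:ℤ) + l*((n+1:ℕ):ℤ) = ((l*n+l+1 : ℕ):ℤ) by push_cast; ring,
        Int.toNat_natCast]
  rcases Nat.eq_zero_or_pos n with rfl | hn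
  · unfold A
    simp only [one_ne_zero, if_false, if_pos rfl]
    simp only [show l*0+l+1 = l+1 by omega] at h1
    rw [h1, Nat.choose_one_right]
    push_cast
    rw [div_mul_eq_mul_div, div_eq_iff (by positivity)]
    ring
  · have h2 : (((l:ℕ):ℤ) + l*((n:ℕ):ℤ)).toNat = l*n+l := by
      rw [show ((l:ℕ):ℤ) + l*((n:ℕ):ℤ) = ((l*n+l : ℕ):ℤ) by push_cast; ring,
          Int.toNat_natCast]
    have hne : n ≠ 0 := by omega
    unfold A
    simp only [hne, if_false, Nat.add_eq_zero, one_ne_zero, and_false, h1, h2]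
    push_cast
    have keyR : ((l:ℝ)*n+l+1) * (((l*n+l).choose n):ℝ)
        = (((l*n+l+1).choose (n+1)):ℝ) * ((n:ℝ)+1) := by exact_mod_cast key
    have p1 : (1:ℝ) + (l:ℝ)*((n:ℝ)+1) ≠ 0 := by positivity
    have p2 : (l:ℝ) + (l:ℝ)*(n:ℝ) ≠ 0 := by positivity
    rw [div_mul_eq_mul_div, div_mul_eq_mul_div, div_eq_div_iff p1 p2]
    linear_combination (-(l:ℝ)) * keyR

/-- Key lemma (D): `∑_{k≤m} c_k A_{m-k}(x) = A_m(x) - A_m(x-(l-1))` for `m ≥ 1`, `x : ℕ`. -/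
lemma Dlem {l : ℕ} (hl : 2 ≤ l) : ∀ (m : ℕ), 1 ≤ m → ∀ (x : ℕ),
    ∑ k ∈ Finset.range (m+1), c l k * A l (m-k) (x:ℤ)
      = A l m (x:ℤ) - A l m ((x:ℤ) - ((l:ℤ) - 1)) := by
  intro m
  induction m using Nat.strong_induction_on with
  | _ m ihm =>
    intro hm x
    induction x with
    | zero =>
      have lhs : ∑ k ∈ Finset.range (m+1), c l k * A l (m-k) ((0:ℕ):ℤ) = c l m := by
        rw [Finset.sum_eq_single m]
        · simp [A_zero]
        · intro k hk hkm
          have : m - k ≠ 0 := by simp at hk; omega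
          simp only [Nat.cast_zero]
          rw [A_at_zero this]; ring
        · intro h; simp at h
      rw [lhs]
      have e : A l m (((0:ℕ):ℤ) - ((l:ℤ)-1)) = - c l m := by
        rw [show ((0:ℕ):ℤ) - ((l:ℤ)-1) = 1 - l by push_cast; ring]
        exact A_neg hl hm
      rw [e]
      simp only [Nat.cast_zero]
      rw [A_at_zero (by omega : m ≠ 0)]
      ring
    | succ x ihx =>
      have cast1 : ((x+1 : ℕ) : ℤ) = (x:ℤ)+1 := by push_cast; ring
      have step : ∀ k ∈ Finset.range (m+1),
          c l k * A l (m-k) ((x:ℤ)+1)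
            = c l k * A l (m-k) (x:ℤ)
              + (if k < m then c l k * A l (m-1-k) ((x:ℤ)+l) else 0) := by
        intro k hk
        simp only [Finset.mem_range] at hk
        by_cases hkm : k < m
        · have h1 : 1 ≤ m - k := by omega
          have hrec := A_rec hl h1 (x := (x:ℤ)+1) (by omega)
          rw [show ((x:ℤ)+1) - 1 = (x:ℤ) by ring,
              show ((x:ℤ)+1+l-1) = (x:ℤ)+l by ring,
              show m - k - 1 = m-1-k by omega] at hrec
          rw [hrec, if_pos hkm]
          ring
        · have : k = m := by omega
          subst this
          simp only [Nat.sub_self, A_zero, if_neg hkm]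
          ring
      rw [cast1, Finset.sum_congr rfl step, Finset.sum_add_distrib, ihx]
      have second : ∑ k ∈ Finset.range (m+1),
          (if k < m then c l k * A l (m-1-k) ((x:ℤ)+l) else 0)
          = A l (m-1) ((x:ℤ)+l) - A l (m-1) ((x:ℤ)+1) := by
        rw [Finset.sum_range_succ, if_neg (lt_irrefl m)]
        rw [Finset.sum_congr rfl (fun k hk => if_pos (Finset.mem_range.mp hk))]
        rcases Nat.eq_zero_or_pos (m-1) with h0 | hpos
        · -- m = 1
          have : m = 1 := by omega
          subst this
          norm_num [c_zero, A_zero]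
        · have := ihm (m-1) (by omega) hpos (x + l)
          rw [show (m-1)+1 = m by omega] at this
          push_cast at this
          rw [show ((x:ℤ)+(l:ℤ)) - ((l:ℤ)-1) = (x:ℤ)+1 by ring] at this
          rw [add_zero]
          exact this
      rw [second]
      have hrec1 := A_rec hl hm (x := (x:ℤ)+1) (by omega)
      rw [show ((x:ℤ)+1) - 1 = (x:ℤ) by ring,
          show ((x:ℤ)+1+l-1) = (x:ℤ)+l by ring] at hrec1
      have hrec2 := A_rec hl hm (x := (x:ℤ)+2-l) (by omega)
      rw [show ((x:ℤ)+2-l) - 1 = (x:ℤ)-((l:ℤ)-1) by ring,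
          show ((x:ℤ)+2-l+l-1) = (x:ℤ)+1 by ring] at hrec2
      rw [show ((x:ℤ)+1) - ((l:ℤ)-1) = (x:ℤ)+2-l by ring]
      linarith [hrec1, hrec2]


/-- truncated Cauchy convolution is at most the product of truncated sums
(nonnegative terms). -/
lemma trunc_conv_le (f g : ℕ → ℝ) (hf : ∀ i, 0 ≤ f i) (hg : ∀ i, 0 ≤ g i) (N : ℕ) :
    ∑ n ∈ Finset.range N, ∑ k ∈ Finset.range (n+1), f k * g (n-k)
      ≤ (∑ n ∈ Finset.range N, f n) * (∑ n ∈ Finset.range N, g n) := by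
  rw [Finset.sum_mul_sum]
  rw [← Finset.sum_product']
  have key : ∑ n ∈ Finset.range N, ∑ k ∈ Finset.range (n+1), f k * g (n-k)
      = ∑ p ∈ (Finset.range N ×ˢ Finset.range N).filter (fun p => p.1 + p.2 < N),
          f p.1 * g p.2 := by
    rw [Finset.sum_sigma']
    refine Finset.sum_nbij' (i := fun p => (p.2, p.1 - p.2)) (j := fun q => ⟨q.1+q.2, q.1⟩)
      ?_ ?_ ?_ ?_ ?_
    · rintro ⟨n, k⟩ ha
      simp only [Finset.mem_sigma, Finset.mem_range] at ha
      simp only [Finset.mem_filter, Finset.mem_product, Finset.mem_range]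
      omega
    · rintro ⟨a, b⟩ hb
      simp only [Finset.mem_filter, Finset.mem_product, Finset.mem_range] at hb
      simp only [Finset.mem_sigma, Finset.mem_range]
      omega
    · rintro ⟨n, k⟩ ha
      simp only [Finset.mem_sigma, Finset.mem_range] at ha
      have e : k + (n - k) = n := by omega
      simp only [e]
    · rintro ⟨a, b⟩ hb
      simp only [Finset.mem_filter, Finset.mem_product, Finset.mem_range] at hb
      dsimp only
      rw [Prod.mk.injEq]
      exact ⟨rfl, by omega⟩
    · rintro ⟨n, k⟩ ha
      rfl
  rw [key]
  apply Finset.sum_le_sum_of_subset_of_nonneg (Finset.filter_subset _ _)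
  intro p _ _
  exact mul_nonneg (hf _) (hg _)

section Eps

variable {l : ℕ} {ε : ℝ}

lemma eps_lt_one (hl : 2 ≤ l) (hε0 : 0 < ε) (hcap : (l:ℝ) * ε < 1) : ε < 1 := by
  have h2 : (2:ℝ)*ε ≤ (l:ℝ)*ε :=
    mul_le_mul_of_nonneg_right (by exact_mod_cast hl) (le_of_lt hε0)
  linarith

lemma one_sub_pos (hl : 2 ≤ l) (hε0 : 0 < ε) (hcap : (l:ℝ) * ε < 1) : (0:ℝ) < 1 - ε := by
  linarith [eps_lt_one hl hε0 hcap]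

/-- the fixed point identity `1 + y·t1^l = t1` with `y = ε(1-ε)^{l-1}`, `t1 = 1/(1-ε)`. -/
lemma fixed_point (hl : 2 ≤ l) (hε0 : 0 < ε) (hcap : (l:ℝ) * ε < 1) :
    1 + (ε * (1-ε)^(l-1)) * ((1-ε)⁻¹)^l = (1-ε)⁻¹ := by
  have h1 : (0:ℝ) < 1 - ε := one_sub_pos hl hε0 hcap
  have hp : (1-ε)^l = (1-ε)^(l-1) * (1-ε) := by
    rw [← pow_succ]
    congr 1
    omega
  have hne : (1-ε)^(l-1) ≠ 0 := by positivity
  have h2 : (ε * (1-ε)^(l-1)) * ((1-ε)⁻¹)^l = ε * (1-ε)⁻¹ := by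
    rw [inv_pow, hp, mul_inv]
    field_simp
  rw [h2]
  field_simp
  ring

lemma psum_pow (hl : 2 ≤ l) (y : ℝ) (hy : 0 ≤ y) (N : ℕ) : ∀ (k : ℕ), 1 ≤ k →
    ∑ n ∈ Finset.range N, A l n (k:ℤ) * y^n
      ≤ (∑ n ∈ Finset.range N, A l n 1 * y^n)^k := by
  intro k
  induction k with
  | zero => omega
  | succ k ihk =>
    intro _
    rcases Nat.eq_zero_or_pos k with rfl | hk
    · simp
    · have conv : ∀ n, A l n ((k+1 : ℕ):ℤ) * y^n
          = ∑ j ∈ Finset.range (n+1), (A l j (k:ℤ) * y^j) * (A l (n-j) 1 * y^(n-j)) := by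
        intro n
        have h := A_conv hl n k 1
        push_cast at h
        have harg : ((k+1:ℕ):ℤ) = (k:ℤ) + 1 := by push_cast; ring
        rw [harg, ← h, Finset.sum_mul]
        apply Finset.sum_congr rfl
        intro j hj
        simp only [Finset.mem_range] at hj
        have : y^j * y^(n-j) = y^n := by
          rw [← pow_add]; congr 1; omega
        calc A l j (k:ℤ) * A l (n-j) 1 * y^n
            = A l j (k:ℤ) * A l (n-j) 1 * (y^j * y^(n-j)) := by rw [this]
          _ = A l j (k:ℤ) * y^j * (A l (n-j) 1 * y^(n-j)) := by ring
      calc ∑ n ∈ Finset.range N, A l n ((k+1 : ℕ):ℤ) * y^n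
          = ∑ n ∈ Finset.range N, ∑ j ∈ Finset.range (n+1),
              (A l j (k:ℤ) * y^j) * (A l (n-j) 1 * y^(n-j)) := by
            exact Finset.sum_congr rfl (fun n _ => conv n)
        _ ≤ (∑ n ∈ Finset.range N, A l n (k:ℤ) * y^n)
              * (∑ n ∈ Finset.range N, A l n 1 * y^n) := by
            exact trunc_conv_le (fun j => A l j (k:ℤ) * y^j) (fun j => A l j 1 * y^j)
              (fun i => mul_nonneg (A_nonneg _ (by exact_mod_cast Nat.zero_le k))
                (by positivity))
              (fun i => mul_nonneg (A_nonneg _ (by norm_num)) (by positivity)) N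
        _ ≤ (∑ n ∈ Finset.range N, A l n 1 * y^n)^k
              * (∑ n ∈ Finset.range N, A l n 1 * y^n) := by
            apply mul_le_mul_of_nonneg_right (ihk hk)
            apply Finset.sum_nonneg
            intro i _
            exact mul_nonneg (A_nonneg _ (by norm_num)) (by positivity)
        _ = (∑ n ∈ Finset.range N, A l n 1 * y^n)^(k+1) := by rw [pow_succ]

/-- partial sums of the Fuss–Catalan series are bounded by `1/(1-ε)`. -/
lemma psum_one_le (hl : 2 ≤ l) (hε0 : 0 < ε) (hcap : (l:ℝ) * ε < 1) (N : ℕ) :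
    ∑ n ∈ Finset.range N, A l n 1 * (ε * (1-ε)^(l-1))^n ≤ (1-ε)⁻¹ := by
  have h1 : (0:ℝ) < 1 - ε := one_sub_pos hl hε0 hcap
  set y : ℝ := ε * (1-ε)^(l-1) with hy
  have hy0 : 0 ≤ y := by positivity
  induction N with
  | zero => simpa using inv_nonneg.mpr (le_of_lt h1)
  | succ N ihN =>
    rw [Finset.sum_range_succ']
    have e1 : ∀ i, A l (i+1) 1 * y^(i+1) = y * (A l i (l:ℤ) * y^i) := by
      intro i
      rw [A_shift hl, pow_succ]
      ring
    rw [Finset.sum_congr rfl (fun i _ => e1 i), ← Finset.mul_sum]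
    have e2 : A l 0 1 * y^0 = 1 := by rw [A_zero]; norm_num
    rw [e2]
    have h3 : ∑ i ∈ Finset.range N, A l i (l:ℤ) * y^i
        ≤ (∑ i ∈ Finset.range N, A l i 1 * y^i)^l := psum_pow hl y hy0 N l (by omega)
    have h4 : (∑ i ∈ Finset.range N, A l i 1 * y^i)^l ≤ ((1-ε)⁻¹)^l := by
      apply pow_le_pow_left₀
      · apply Finset.sum_nonneg
        intro i _
        exact mul_nonneg (A_nonneg _ (by norm_num)) (by positivity)
      · exact ihN
    have h5 : y * ∑ i ∈ Finset.range N, A l i (l:ℤ) * y^i ≤ y * ((1-ε)⁻¹)^l :=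
      mul_le_mul_of_nonneg_left (le_trans h3 h4) hy0
    have := fixed_point hl hε0 hcap
    rw [← hy] at this
    linarith

lemma term_nonneg (hl : 2 ≤ l) (hε0 : 0 < ε) (hcap : (l:ℝ) * ε < 1) (k : ℕ) (n : ℕ) :
    0 ≤ A l n (k:ℤ) * (ε * (1-ε)^(l-1))^n := by
  have h1 := one_sub_pos hl hε0 hcap
  exact mul_nonneg (A_nonneg _ (by exact_mod_cast Nat.zero_le k)) (by positivity)

lemma summable_A (hl : 2 ≤ l) (hε0 : 0 < ε) (hcap : (l:ℝ) * ε < 1) (k : ℕ) (hk : 1 ≤ k) :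
    Summable (fun n => A l n (k:ℤ) * (ε * (1-ε)^(l-1))^n) := by
  have h1 := one_sub_pos hl hε0 hcap
  apply summable_of_sum_range_le (c := ((1-ε)⁻¹)^k) (term_nonneg hl hε0 hcap k)
  intro N
  calc ∑ n ∈ Finset.range N, A l n (k:ℤ) * (ε * (1-ε)^(l-1))^n
      ≤ (∑ n ∈ Finset.range N, A l n 1 * (ε * (1-ε)^(l-1))^n)^k :=
        psum_pow hl _ (by positivity) N k hk
    _ ≤ ((1-ε)⁻¹)^k := by
        apply pow_le_pow_left₀
        · exact Finset.sum_nonneg fun i _ =>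
            mul_nonneg (A_nonneg _ (by norm_num)) (by positivity)
        · exact psum_one_le hl hε0 hcap N

/-- Cauchy product: `S(j)·S(k) = S(j+k)`. -/
lemma tsum_A_mul (hl : 2 ≤ l) (hε0 : 0 < ε) (hcap : (l:ℝ) * ε < 1)
    (j k : ℕ) (hj : 1 ≤ j) (hk : 1 ≤ k) :
    (∑' n, A l n (j:ℤ) * (ε * (1-ε)^(l-1))^n) * (∑' n, A l n (k:ℤ) * (ε * (1-ε)^(l-1))^n)
      = ∑' n, A l n ((j+k : ℕ):ℤ) * (ε * (1-ε)^(l-1))^n := by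
  have h1 := one_sub_pos hl hε0 hcap
  set y : ℝ := ε * (1-ε)^(l-1) with hy
  have hnorm : ∀ (k' : ℕ), Summable (fun n => ‖A l n (k':ℤ) * y^n‖) → True := fun _ _ => trivial
  have hsj : Summable (fun n => ‖A l n (j:ℤ) * y^n‖) := by
    apply Summable.congr (summable_A hl hε0 hcap j hj)
    intro n
    rw [Real.norm_of_nonneg (term_nonneg hl hε0 hcap j n)]
  have hsk : Summable (fun n => ‖A l n (k:ℤ) * y^n‖) := by
    apply Summable.congr (summable_A hl hε0 hcap k hk)
    intro n
    rw [Real.norm_of_nonneg (term_nonneg hl hε0 hcap k n)]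
  rw [tsum_mul_tsum_eq_tsum_sum_antidiagonal_of_summable_norm hsj hsk]
  apply tsum_congr
  intro n
  rw [Finset.Nat.sum_antidiagonal_eq_sum_range_succ_mk]
  have conv := A_conv hl n j k
  push_cast at conv ⊢
  rw [← conv, Finset.sum_mul]
  apply Finset.sum_congr rfl
  intro i hi
  simp only [Finset.mem_range] at hi
  have : y^i * y^(n-i) = y^n := by rw [← pow_add]; congr 1; omega
  calc A l i (j:ℤ) * y^i * (A l (n-i) (k:ℤ) * y^(n-i))
      = A l i (j:ℤ) * A l (n-i) (k:ℤ) * (y^i * y^(n-i)) := by ring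
    _ = A l i (j:ℤ) * A l (n-i) (k:ℤ) * y^n := by rw [this]

/-- `S(k) = S(1)^k`. -/
lemma tsum_A_pow (hl : 2 ≤ l) (hε0 : 0 < ε) (hcap : (l:ℝ) * ε < 1) :
    ∀ (k : ℕ), 1 ≤ k →
    ∑' n, A l n (k:ℤ) * (ε * (1-ε)^(l-1))^n
      = (∑' n, A l n 1 * (ε * (1-ε)^(l-1))^n)^k := by
  intro k
  induction k with
  | zero => omega
  | succ k ihk =>
    intro _
    rcases Nat.eq_zero_or_pos k with rfl | hk
    · norm_num
    · rw [show ((k+1 : ℕ):ℤ) = ((k:ℕ):ℤ) + ((1:ℕ):ℤ) by push_cast; ring]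
      rw [show (((k:ℕ):ℤ) + ((1:ℕ):ℤ)) = ((k + 1 : ℕ):ℤ) by push_cast; ring,
          ← tsum_A_mul hl hε0 hcap k 1 hk le_rfl, ihk hk, pow_succ]
      norm_num

/-- The value of the Fuss–Catalan series: `S(1) = 1/(1-ε)`. -/
lemma tsum_A_one (hl : 2 ≤ l) (hε0 : 0 < ε) (hcap : (l:ℝ) * ε < 1) :
    ∑' n, A l n 1 * (ε * (1-ε)^(l-1))^n = (1-ε)⁻¹ := by
  have h1 := one_sub_pos hl hε0 hcap
  set y : ℝ := ε * (1-ε)^(l-1) with hy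
  set S : ℝ := ∑' n, A l n 1 * y^n with hS
  have hsum : Summable (fun n => A l n 1 * y^n) := summable_A hl hε0 hcap 1 le_rfl
  have hS_le : S ≤ (1-ε)⁻¹ :=
    Summable.tsum_le_of_sum_range_le hsum (psum_one_le hl hε0 hcap)
  have hS_nonneg : 0 ≤ S := tsum_nonneg (term_nonneg hl hε0 hcap 1)
  -- S = 1 + y * S^l
  have e0 : A l 0 1 * y^0 = 1 := by rw [A_zero]; norm_num
  have hstep : ∀ n : ℕ, A l (n+1) 1 * y^(n+1) = y * (A l n (l:ℤ) * y^n) := by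
    intro n
    rw [A_shift hl, pow_succ]
    ring
  have hpow := tsum_A_pow hl hε0 hcap l (by omega : 1 ≤ l)
  rw [← hy, ← hS] at hpow
  have heq : S = 1 + y * S^l := by
    calc S = ∑' n, A l n 1 * y^n := hS
      _ = A l 0 1 * y^0 + ∑' n, A l (n+1) 1 * y^(n+1) := Summable.tsum_eq_zero_add hsum
      _ = 1 + y * ∑' n, A l n (l:ℤ) * y^n := by
          rw [e0, tsum_congr hstep, tsum_mul_left]
      _ = 1 + y * S^l := by rw [hpow]
  -- t1 also satisfies the equation
  have ht1 : (1-ε)⁻¹ = 1 + y * ((1-ε)⁻¹)^l := by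
    have := fixed_point hl hε0 hcap
    rw [← hy] at this
    linarith
  -- no root strictly below t1
  by_contra hne
  have hlt : S < (1-ε)⁻¹ := lt_of_le_of_ne hS_le hne
  have hgeom := geom_sum₂_mul ((1-ε)⁻¹) S l
  have hb : ∑ i ∈ Finset.range l, ((1-ε)⁻¹)^i * S^(l-1-i) ≤ l * ((1-ε)⁻¹)^(l-1) := by
    have ht1_ge : (1:ℝ) ≤ (1-ε)⁻¹ := by
      rw [le_inv_comm₀ (by norm_num) h1]
      linarith
    calc ∑ i ∈ Finset.range l, ((1-ε)⁻¹)^i * S^(l-1-i)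
        ≤ ∑ i ∈ Finset.range l, ((1-ε)⁻¹)^(l-1) := by
          apply Finset.sum_le_sum
          intro i hi
          simp only [Finset.mem_range] at hi
          calc ((1-ε)⁻¹)^i * S^(l-1-i) ≤ ((1-ε)⁻¹)^i * ((1-ε)⁻¹)^(l-1-i) := by
                apply mul_le_mul_of_nonneg_left _ (by positivity)
                exact pow_le_pow_left₀ hS_nonneg hS_le _
            _ = ((1-ε)⁻¹)^(l-1) := by rw [← pow_add]; congr 1; omega
      _ = l * ((1-ε)⁻¹)^(l-1) := by rw [Finset.sum_const, Finset.card_range]; ring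
  have hyt : y * ((1-ε)⁻¹)^(l-1) = ε := by
    rw [hy, inv_pow]
    field_simp
  have hdiff : (1-ε)⁻¹ - S = y * (((1-ε)⁻¹)^l - S^l) := by
    linear_combination ht1 - heq
  have : (1-ε)⁻¹ - S ≤ (l:ℝ) * ε * ((1-ε)⁻¹ - S) := by
    calc (1-ε)⁻¹ - S = y * (((1-ε)⁻¹)^l - S^l) := hdiff
      _ = y * ((∑ i ∈ Finset.range l, ((1-ε)⁻¹)^i * S^(l-1-i)) * ((1-ε)⁻¹ - S)) := by
          rw [hgeom]
      _ ≤ y * ((l * ((1-ε)⁻¹)^(l-1)) * ((1-ε)⁻¹ - S)) := by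
          apply mul_le_mul_of_nonneg_left _ (by positivity)
          apply mul_le_mul_of_nonneg_right hb (by linarith)
      _ = (l:ℝ) * ε * ((1-ε)⁻¹ - S) := by
          linear_combination (l:ℝ) * ((1-ε)⁻¹ - S) * hyt
  nlinarith [this, hlt, mul_lt_mul_of_pos_right hcap (show 0 < (1-ε)⁻¹ - S by linarith)]

lemma c_nonneg (hl : 2 ≤ l) (s : ℕ) : 0 ≤ c l s := by
  unfold c
  apply mul_nonneg
  · apply div_nonneg _ (by positivity)
    have : (2:ℝ) ≤ l := by exact_mod_cast hl
    linarith
  · positivity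

lemma cast_lsub : ∀ {l : ℕ}, 2 ≤ l → ((l-1 : ℕ) : ℤ) = (l:ℤ) - 1 := by
  intro l hl
  push_cast [Nat.cast_sub (by omega : 1 ≤ l)]
  ring

/-- (C2): `∑_{k≤m} c_k A_{m-k}(l-1) = A_m(l-1)` for `m ≥ 1`. -/
lemma C2 (hl : 2 ≤ l) {m : ℕ} (hm : 1 ≤ m) :
    ∑ k ∈ Finset.range (m+1), c l k * A l (m-k) (((l-1 : ℕ) : ℤ))
      = A l m (((l-1 : ℕ) : ℤ)) := by
  have h := Dlem hl m hm (l-1)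
  rw [h]
  have e : ((l-1 : ℕ) : ℤ) - ((l:ℤ) - 1) = 0 := by rw [cast_lsub hl]; ring
  rw [e, A_at_zero (by omega : m ≠ 0)]
  ring

lemma c_le_A (hl : 2 ≤ l) {m : ℕ} (hm : 1 ≤ m) : c l m ≤ A l m (((l-1 : ℕ) : ℤ)) := by
  have h := C2 hl hm
  rw [Finset.sum_range_succ, Nat.sub_self, A_zero] at h
  have hrest : 0 ≤ ∑ k ∈ Finset.range m, c l k * A l (m-k) (((l-1 : ℕ) : ℤ)) := by
    apply Finset.sum_nonneg
    intro k _
    exact mul_nonneg (c_nonneg hl k) (A_nonneg _ (by positivity))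
  nlinarith [h, hrest]

lemma summable_c (hl : 2 ≤ l) (hε0 : 0 < ε) (hcap : (l:ℝ) * ε < 1) :
    Summable (fun s => c l s * (ε * (1-ε)^(l-1))^s) := by
  have h1 := one_sub_pos hl hε0 hcap
  refine Summable.of_nonneg_of_le
    (fun s => mul_nonneg (c_nonneg hl s) (by positivity))
    (fun s => ?_) (summable_A hl hε0 hcap (l-1) (by omega))
  rcases Nat.eq_zero_or_pos s with rfl | hs
  · rw [c_zero, A_zero]
    norm_num
  · exact mul_le_mul_of_nonneg_right (c_le_A hl hs) (by positivity)

/-- The key normalization identity: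
`∑_{s} c_s (ε(1-ε)^{l-1})^s = 1 - (1-ε)^{l-1}`. -/
lemma key_identity (hl : 2 ≤ l) (hε0 : 0 < ε) (hcap : (l:ℝ) * ε < 1) :
    ∑' s, c l s * (ε * (1-ε)^(l-1))^s = 1 - (1-ε)^(l-1) := by
  have h1 := one_sub_pos hl hε0 hcap
  set y : ℝ := ε * (1-ε)^(l-1) with hy
  have hynn : 0 ≤ y := by positivity
  have hsumc : Summable (fun s => c l s * y^s) := summable_c hl hε0 hcap
  have hsumA : Summable (fun n => A l n (((l-1:ℕ)):ℤ) * y^n) :=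
    summable_A hl hε0 hcap (l-1) (by omega)
  -- norm summability
  have hnc : Summable (fun s => ‖c l s * y^s‖) := by
    apply Summable.congr hsumc
    intro s
    rw [Real.norm_of_nonneg (mul_nonneg (c_nonneg hl s) (by positivity))]
  have hnA : Summable (fun n => ‖A l n (((l-1:ℕ)):ℤ) * y^n‖) := by
    apply Summable.congr hsumA
    intro n
    rw [Real.norm_of_nonneg (mul_nonneg (A_nonneg _ (by positivity)) (by positivity))]
  -- Cauchy product
  have hcauchy := tsum_mul_tsum_eq_tsum_sum_antidiagonal_of_summable_norm hnc hnA
  -- identify the inner sums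
  have hinner : ∀ n : ℕ, ∑ kl ∈ Finset.HasAntidiagonal.antidiagonal n, (c l kl.1 * y^kl.1)
        * (A l kl.2 (((l-1:ℕ)):ℤ) * y^kl.2)
      = (if n = 0 then 0 else A l n (((l-1:ℕ)):ℤ) * y^n) := by
    intro n
    rw [Finset.Nat.sum_antidiagonal_eq_sum_range_succ_mk]
    rcases Nat.eq_zero_or_pos n with rfl | hn
    · simp [c_zero]
    · rw [if_neg (by omega)]
      have e : ∀ k ∈ Finset.range (n+1),
          (c l k * y^k) * (A l (n-k) (((l-1:ℕ)):ℤ) * y^(n-k))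
            = (c l k * A l (n-k) (((l-1:ℕ)):ℤ)) * y^n := by
        intro k hk
        simp only [Finset.mem_range] at hk
        have : y^k * y^(n-k) = y^n := by rw [← pow_add]; congr 1; omega
        calc (c l k * y^k) * (A l (n-k) (((l-1:ℕ)):ℤ) * y^(n-k))
            = (c l k * A l (n-k) (((l-1:ℕ)):ℤ)) * (y^k * y^(n-k)) := by ring
          _ = (c l k * A l (n-k) (((l-1:ℕ)):ℤ)) * y^n := by rw [this]
      rw [Finset.sum_congr rfl e, ← Finset.sum_mul, C2 hl hn]
  rw [tsum_congr hinner] at hcauchy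
  -- evaluate the RHS of the Cauchy identity
  have hfun_le : ∀ n, (if n = 0 then 0 else A l n (((l-1:ℕ)):ℤ) * y^n)
      ≤ A l n (((l-1:ℕ)):ℤ) * y^n := by
    intro n
    split
    · subst ‹n = 0›
      rw [A_zero]
      norm_num
    · exact le_rfl
  have hsumh : Summable (fun n => if n = 0 then 0 else A l n (((l-1:ℕ)):ℤ) * y^n) := by
    refine Summable.of_nonneg_of_le (fun n => ?_) hfun_le hsumA
    split
    · exact le_rfl
    · exact mul_nonneg (A_nonneg _ (by positivity)) (by positivity)
  have hval : ∑' n, (if n = 0 then 0 else A l n (((l-1:ℕ)):ℤ) * y^n)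
      = (∑' n, A l n (((l-1:ℕ)):ℤ) * y^n) - 1 := by
    have e1 := Summable.tsum_eq_zero_add hsumh
    have e2 := Summable.tsum_eq_zero_add hsumA
    simp only [if_pos rfl] at e1
    rw [A_zero] at e2
    have e3 : ∀ n : ℕ, (if n+1 = 0 then 0 else A l (n+1) (((l-1:ℕ)):ℤ) * y^(n+1))
        = A l (n+1) (((l-1:ℕ)):ℤ) * y^(n+1) := by
      intro n
      rw [if_neg (by omega)]
    rw [tsum_congr e3] at e1
    rw [e1, e2]
    norm_num
  rw [hval] at hcauchy
  -- finish
  have hSval : ∑' n, A l n (((l-1:ℕ)):ℤ) * y^n = ((1-ε)⁻¹)^(l-1) := by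
    rw [hy]
    rw [tsum_A_pow hl hε0 hcap (l-1) (by omega), tsum_A_one hl hε0 hcap]
  rw [hSval] at hcauchy
  have hSpos : (0:ℝ) < ((1-ε)⁻¹)^(l-1) := by positivity
  have hprod : (1-ε)^(l-1) * ((1-ε)⁻¹)^(l-1) = 1 := by
    rw [← mul_pow, mul_inv_cancel₀ (by linarith)]
    norm_num
  have : (∑' s, c l s * y^s) * ((1-ε)⁻¹)^(l-1)
      = (1 - (1-ε)^(l-1)) * ((1-ε)⁻¹)^(l-1) := by
    rw [hcauchy]
    linear_combination hprod
  exact mul_right_cancel₀ (ne_of_gt hSpos) this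

end Eps

end DFS

/-- Decoding-failure series: with busy-time pmf
`P(S=s) = ((l-1)/s) ε^s (1-ε)^{s(l-1)} C((s-1)l, s-1)` for `s ≥ 1`,
field size `Q ≥ 2`, and `ε₀ ∈ (0, ε)` satisfying
`ε₀(1-ε₀)^{l-1} = (1 - 1/Q²) ε(1-ε)^{l-1}`, one has
`∑_{s≥1} (1 - (Q/(Q+1))(1 - 1/Q²)^s) P(S=s)
  = (Q/(Q+1))(1-ε₀)^{l-1} - (1-ε)^{l-1} + 1/(Q+1)`
(sum re-indexed via `s = k+1`). -/
theorem decoding_failure_series (l Q : ℕ) (hl : 2 ≤ l) (hQ : 2 ≤ Q)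
    (ε ε₀ : ℝ) (hε0 : 0 < ε) (hε1 : ε < 1) (hcap : (l : ℝ) * ε < 1)
    (h0 : 0 < ε₀) (h1 : ε₀ < ε)
    (heq : ε₀ * (1 - ε₀) ^ (l - 1)
      = (1 - 1 / (Q : ℝ) ^ 2) * (ε * (1 - ε) ^ (l - 1))) :
    ∑' k : ℕ, (1 - ((Q : ℝ) / ((Q : ℝ) + 1)) * (1 - 1 / (Q : ℝ) ^ 2) ^ (k + 1)) *
        (((l : ℝ) - 1) / ((k : ℝ) + 1) * ε ^ (k + 1)
          * (1 - ε) ^ ((k + 1) * (l - 1)) * (Nat.choose (k * l) k : ℝ))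
      = ((Q : ℝ) / ((Q : ℝ) + 1)) * (1 - ε₀) ^ (l - 1)
        - (1 - ε) ^ (l - 1) + 1 / ((Q : ℝ) + 1) := by
  have hcap0 : (l : ℝ) * ε₀ < 1 := by
    have hlpos : (0:ℝ) < l := by positivity
    nlinarith [mul_lt_mul_of_pos_left h1 hlpos]
  set q : ℝ := 1 - 1 / (Q : ℝ) ^ 2 with hq
  set Qf : ℝ := (Q : ℝ) / ((Q : ℝ) + 1) with hQf
  set y : ℝ := ε * (1 - ε) ^ (l - 1) with hy
  set y₀ : ℝ := ε₀ * (1 - ε₀) ^ (l - 1) with hy0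
  have hy0q : y₀ = q * y := heq
  -- rewrite the summand
  have hterm : ∀ k : ℕ,
      (1 - Qf * q ^ (k + 1)) *
        (((l : ℝ) - 1) / ((k : ℝ) + 1) * ε ^ (k + 1)
          * (1 - ε) ^ ((k + 1) * (l - 1)) * (Nat.choose (k * l) k : ℝ))
      = DFS.c l (k+1) * y ^ (k+1) - Qf * (DFS.c l (k+1) * y₀ ^ (k+1)) := by
    intro k
    have hc : DFS.c l (k+1)
        = ((l : ℝ) - 1) / ((k : ℝ) + 1) * (Nat.choose (k * l) k : ℝ) := by
      unfold DFS.c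
      rw [show (k+1) - 1 = k by omega, show l * k = k * l by ring]
      rw [show (((k+1):ℕ):ℝ) = (k:ℝ) + 1 by push_cast; ring]
    have hyp : y ^ (k+1) = ε ^ (k+1) * (1 - ε) ^ ((k + 1) * (l - 1)) := by
      rw [hy, mul_pow, ← pow_mul]
      ring_nf
    have hy0p : y₀ ^ (k+1) = q ^ (k+1) * y ^ (k+1) := by
      rw [hy0q, mul_pow]
    rw [hc, hyp, hy0p]
    ring
  rw [tsum_congr hterm]
  -- summability of the two shifted series
  have hsum1 : Summable (fun k : ℕ => DFS.c l (k+1) * y ^ (k+1)) := by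
    have := DFS.summable_c hl hε0 hcap
    rw [← hy] at this
    exact (summable_nat_add_iff 1).mpr this
  have hsum2 : Summable (fun k : ℕ => DFS.c l (k+1) * y₀ ^ (k+1)) := by
    have := DFS.summable_c hl h0 hcap0
    rw [← hy0] at this
    exact (summable_nat_add_iff 1).mpr this
  rw [Summable.tsum_sub hsum1 (hsum2.mul_left Qf), tsum_mul_left]
  -- values of the two series
  have hv1 : ∑' k : ℕ, DFS.c l (k+1) * y ^ (k+1) = 1 - (1 - ε) ^ (l - 1) := by
    have hkey := DFS.key_identity hl hε0 hcap
    rw [← hy] at hkey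
    have hz := Summable.tsum_eq_zero_add (by rw [← hy] at *; exact (DFS.summable_c hl hε0 hcap))
    rw [DFS.c_zero] at hz
    simp only [zero_mul] at hz
    rw [hkey] at hz
    linarith [hz]
  have hv2 : ∑' k : ℕ, DFS.c l (k+1) * y₀ ^ (k+1) = 1 - (1 - ε₀) ^ (l - 1) := by
    have hkey := DFS.key_identity hl h0 hcap0
    rw [← hy0] at hkey
    have hz := Summable.tsum_eq_zero_add (by rw [← hy0] at *; exact (DFS.summable_c hl h0 hcap0))
    rw [DFS.c_zero] at hz
    simp only [zero_mul] at hz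
    rw [hkey] at hz
    linarith [hz]
  rw [hv1, hv2]
  -- final algebra
  have hQpos : (0:ℝ) < (Q:ℝ) + 1 := by positivity
  have hQf1 : 1 - Qf = 1 / ((Q:ℝ) + 1) := by
    rw [hQf]
    field_simp
    ring
  linear_combination hQf1
end
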